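/- arXiv:1401.1792 — 11 statements merged into one kernel-verified Lean document; each statement's English description precedes it below -/
import Mathlib

section
/- Let x̄ ∈ Q and R > 0, and let f be a convex function on Q, subdifferentiable at the iterates below. Consider the dual averaging iterates: x₀ = x̄, s₀ = 0, and for i ≥ 0, g_i ∈ ∂f(x_i), s_{i+1} = s_i + λ_i g_i with stepsizes λ_i > 0, and x_{i+1} is a maximizer over Q_R(x̄) of x ↦ ⟨−s_{i+1}, x − x̄⟩ − β_{i+1} d_{x̄,R}(x), where 0 < β₀ ≤ β₁ ≤ β₂ ≤ ⋯ is nondecreasing. Then for every k ≥ 0 and every x ∈ Q_R(x̄): Σ_{i=0}^{k} λ_i ⟨g_i, x_i − x⟩ ≤ β_{k+1} d_{x̄,R}(x) + (R²/(2 μ(d))) Σ_{i=0}^{k} (λ_i²/β_i) ‖g_i‖_*². -/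
set_option maxHeartbeats 1000000


noncomputable section

open Real

/-- Proposition 2.1 / dual averaging regret bound.
`E` is a finite-dimensional real normed space, dual elements are continuous linear
functionals with the operator (dual) norm. `Q` is a closed convex set, `d` is a
prox-function of the unit ball with strong convexity parameter `μd > 0`.
Dual averaging iterates with stepsizes `lam i > 0` and nondecreasing gains `β`
satisfy the stated regret bound. -/
theorem dual_averaging_regret
    {E : Type*} [NormedAddCommGroup E] [NormedSpace ℝ E] [FiniteDimensional ℝ E]
    (Q : Set E) (hQc : IsClosed Q) (hQconv : Convex ℝ Q)
    (d : E → ℝ) (μd : ℝ) (hμd : 0 < μd)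
    (hd_cont : ContinuousOn d (Metric.closedBall (0 : E) 1))
    (hd_sc : ∀ x ∈ Metric.closedBall (0 : E) 1, ∀ y ∈ Metric.closedBall (0 : E) 1,
      ∀ α ∈ Set.Icc (0 : ℝ) 1,
      d (α • x + (1 - α) • y) ≤
        α * d x + (1 - α) * d y - (μd / 2) * α * (1 - α) * ‖x - y‖ ^ 2)
    (hd0 : d 0 = 0)
    (hd_nonneg : ∀ x ∈ Metric.closedBall (0 : E) 1, 0 ≤ d x)
    (f : E → ℝ) (hf : ConvexOn ℝ Q f)
    (xbar : E) (hxbar : xbar ∈ Q) (R : ℝ) (hR : 0 < R)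
    (xs : ℕ → E) (g : ℕ → E →L[ℝ] ℝ) (s : ℕ → E →L[ℝ] ℝ)
    (lam : ℕ → ℝ) (hlam : ∀ i, 0 < lam i)
    (β : ℕ → ℝ) (hβ0 : 0 < β 0) (hβmono : Monotone β)
    (hx0 : xs 0 = xbar) (hs0 : s 0 = 0)
    (hsub : ∀ i, ∀ y ∈ Q, f (xs i) + (g i) (y - xs i) ≤ f y)
    (hsrec : ∀ i, s (i + 1) = s i + lam i • g i)
    (hxrec : ∀ i, xs (i + 1) ∈ Q ∩ Metric.closedBall xbar R ∧
      ∀ y ∈ Q ∩ Metric.closedBall xbar R,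
        (-(s (i + 1))) (y - xbar) - β (i + 1) * d ((1 / R) • (y - xbar)) ≤
          (-(s (i + 1))) (xs (i + 1) - xbar)
            - β (i + 1) * d ((1 / R) • (xs (i + 1) - xbar))) :
    ∀ k : ℕ, ∀ x ∈ Q ∩ Metric.closedBall xbar R,
      ∑ i ∈ Finset.range (k + 1), lam i * (g i) (xs i - x) ≤
        β (k + 1) * d ((1 / R) • (x - xbar)) +
          R ^ 2 / (2 * μd) *
            ∑ i ∈ Finset.range (k + 1), (lam i) ^ 2 / β i * ‖g i‖ ^ 2 := by
  have hβpos : ∀ n, 0 < β n := fun n => lt_of_lt_of_le hβ0 (hβmono (Nat.zero_le n))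
  set dh : E → ℝ := fun y => d ((1 / R) • (y - xbar)) with hdh
  have hmem : ∀ y ∈ Metric.closedBall xbar R,
      (1 / R) • (y - xbar) ∈ Metric.closedBall (0 : E) 1 := by
    intro y hy
    rw [Metric.mem_closedBall, dist_zero_right, norm_smul, Real.norm_eq_abs,
      abs_of_pos (by positivity : (0:ℝ) < 1 / R)]
    rw [Metric.mem_closedBall, dist_eq_norm] at hy
    rw [div_mul_eq_mul_div, one_mul, div_le_one hR]
    exact hy
  have hdh_nonneg : ∀ y ∈ Metric.closedBall xbar R, 0 ≤ dh y := by
    intro y hy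
    simp only [hdh]
    exact hd_nonneg _ (hmem y hy)
  have hdh_xbar : dh xbar = 0 := by simp [hdh, hd0]
  have hxbarQR : xbar ∈ Q ∩ Metric.closedBall xbar R :=
    ⟨hxbar, Metric.mem_closedBall_self hR.le⟩
  clear_value dh
  set ψ : ℕ → E → ℝ := fun n y => (-(s n)) (y - xbar) - β n * dh y with hψ
  clear_value ψ
  have hmax : ∀ n, xs n ∈ Q ∩ Metric.closedBall xbar R ∧
      ∀ y ∈ Q ∩ Metric.closedBall xbar R, ψ n y ≤ ψ n (xs n) := by
    intro n
    cases n with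
    | zero =>
      refine ⟨hx0 ▸ hxbarQR, ?_⟩
      intro y hy
      have h1 : 0 ≤ β 0 * dh y := mul_nonneg (hβpos 0).le (hdh_nonneg y hy.2)
      simp only [hψ, hs0, hx0, neg_zero, ContinuousLinearMap.zero_apply, hdh_xbar, mul_zero]
      linarith
    | succ n =>
      refine ⟨(hxrec n).1, ?_⟩
      intro y hy
      simp only [hψ, hdh]
      exact (hxrec n).2 y hy
  have hQRconv : Convex ℝ (Q ∩ Metric.closedBall xbar R) :=
    hQconv.inter (convex_closedBall xbar R)
  have hstrong : ∀ n, ∀ y ∈ Q ∩ Metric.closedBall xbar R,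
      ψ n y + (β n * μd / (2 * R ^ 2)) * ‖y - xs n‖ ^ 2 ≤ ψ n (xs n) := by
    intro n y hy
    set c : ℝ := β n * μd / (2 * R ^ 2) with hc
    clear_value c
    have hcpos : 0 < c := by
      rw [hc]
      exact div_pos (mul_pos (hβpos n) hμd) (by positivity)
    have key : ∀ α : ℝ, 0 < α → α < 1 →
        ψ n y + c * ((1 - α) * ‖y - xs n‖ ^ 2) ≤ ψ n (xs n) := by
      intro α hα0 hα1
      have hxsQR := (hmax n).1
      set z : E := α • y + (1 - α) • xs n with hzdef
      clear_value z
      have hzmem : z ∈ Q ∩ Metric.closedBall xbar R := by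
        rw [hzdef]
        exact hQRconv hy hxsQR hα0.le (by linarith) (by ring)
      have hmaxz := (hmax n).2 z hzmem
      have hlin : (-(s n)) (z - xbar) =
          α * ((-(s n)) (y - xbar)) + (1 - α) * ((-(s n)) (xs n - xbar)) := by
        have hz' : z - xbar = α • (y - xbar) + (1 - α) • (xs n - xbar) := by
          rw [hzdef]; module
        rw [hz', map_add, map_smul, map_smul, smul_eq_mul, smul_eq_mul]
      have hu := hmem y hy.2
      have hv := hmem (xs n) hxsQR.2
      have huv : (1 / R) • (z - xbar) =
          α • ((1 / R) • (y - xbar)) + (1 - α) • ((1 / R) • (xs n - xbar)) := by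
        rw [hzdef]; module
      have hnorm : ‖(1 / R) • (y - xbar) - (1 / R) • (xs n - xbar)‖ ^ 2
          = ‖y - xs n‖ ^ 2 / R ^ 2 := by
        have he : (1 / R) • (y - xbar) - (1 / R) • (xs n - xbar) = (1 / R) • (y - xs n) := by
          module
        rw [he, norm_smul, Real.norm_eq_abs, abs_of_pos (by positivity : (0:ℝ) < 1 / R)]
        ring
      have hdz : dh z ≤ α * dh y + (1 - α) * dh (xs n)
          - (μd / 2) * α * (1 - α) * (‖y - xs n‖ ^ 2 / R ^ 2) := by
        have h := hd_sc _ hu _ hv α ⟨hα0.le, hα1.le⟩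
        rw [hnorm] at h
        simp only [hdh]
        rw [huv]
        exact h
      have hβdz : β n * dh z ≤ β n * (α * dh y + (1 - α) * dh (xs n)
          - (μd / 2) * α * (1 - α) * (‖y - xs n‖ ^ 2 / R ^ 2)) :=
        mul_le_mul_of_nonneg_left hdz (hβpos n).le
      have hψz : α * ψ n y + (1 - α) * ψ n (xs n)
          + β n * ((μd / 2) * α * (1 - α) * (‖y - xs n‖ ^ 2 / R ^ 2)) ≤ ψ n z := by
        simp only [hψ]
        rw [hlin]
        linarith [hβdz]
      have hEq : β n * ((μd / 2) * α * (1 - α) * (‖y - xs n‖ ^ 2 / R ^ 2))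
          = α * (c * ((1 - α) * ‖y - xs n‖ ^ 2)) := by
        rw [hc]; field_simp
      have hfin : α * (ψ n y + c * ((1 - α) * ‖y - xs n‖ ^ 2)) ≤ α * ψ n (xs n) := by
        linarith [hψz, hmaxz, hEq]
      exact le_of_mul_le_mul_left hfin hα0
    have h0 : Filter.Tendsto (fun m : ℕ => 1 / ((m : ℝ) + 2)) Filter.atTop (nhds 0) := by
      apply Filter.Tendsto.div_atTop tendsto_const_nhds
      exact Filter.tendsto_atTop_add_const_right _ 2 tendsto_natCast_atTop_atTop
    have htend : Filter.Tendsto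
        (fun m : ℕ => ψ n y + c * ((1 - 1 / ((m : ℝ) + 2)) * ‖y - xs n‖ ^ 2))
        Filter.atTop (nhds (ψ n y + c * ((1 - 0) * ‖y - xs n‖ ^ 2))) := by
      exact tendsto_const_nhds.add
        (((tendsto_const_nhds.sub h0).mul tendsto_const_nhds).const_mul c)
    have hle : ψ n y + c * ((1 - 0) * ‖y - xs n‖ ^ 2) ≤ ψ n (xs n) := by
      refine le_of_tendsto' htend ?_
      intro m
      refine key (1 / ((m : ℝ) + 2)) (by positivity) ?_
      rw [div_lt_one (by positivity)]
      have : (0:ℝ) ≤ (m : ℝ) := Nat.cast_nonneg m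
      linarith
    linarith [hle]
  have hsum_s : ∀ m : ℕ, ∀ v : E,
      (s m) v = ∑ i ∈ Finset.range m, lam i * (g i) v := by
    intro m
    induction m with
    | zero => intro v; simp [hs0]
    | succ m ih =>
      intro v
      rw [hsrec m, Finset.sum_range_succ, ← ih v]
      simp [ContinuousLinearMap.add_apply]
  have hmain : ∀ m : ℕ,
      ∑ i ∈ Finset.range m, lam i * (g i) (xs i - xbar) + ψ m (xs m) ≤
        R ^ 2 / (2 * μd) * ∑ i ∈ Finset.range m, (lam i) ^ 2 / β i * ‖g i‖ ^ 2 := by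
    intro m
    induction m with
    | zero => simp [hψ, hdh, hx0, hs0, hd0]
    | succ m ih =>
      have hxm1 := (hmax (m + 1)).1
      have hstep1 : ψ (m + 1) (xs (m + 1)) ≤ ψ m (xs (m + 1))
          - lam m * (g m) (xs m - xbar) - lam m * (g m) (xs (m + 1) - xs m) := by
        simp only [hψ]
        rw [hsrec m]
        have h1 : (-(s m + lam m • g m)) (xs (m + 1) - xbar)
            = (-(s m)) (xs (m + 1) - xbar) - lam m * (g m) (xs (m + 1) - xbar) := by
          simp [ContinuousLinearMap.add_apply, ContinuousLinearMap.neg_apply,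
            ContinuousLinearMap.smul_apply, smul_eq_mul]
          ring
        rw [h1]
        have hgsplit : (g m) (xs (m + 1) - xbar)
            = (g m) (xs m - xbar) + (g m) (xs (m + 1) - xs m) := by
          rw [← map_add]; congr 1; abel
        rw [hgsplit, mul_add]
        have h2 : β m * dh (xs (m + 1)) ≤ β (m + 1) * dh (xs (m + 1)) :=
          mul_le_mul_of_nonneg_right (hβmono (Nat.le_succ m)) (hdh_nonneg _ hxm1.2)
        linarith
      have hstep2 : ψ m (xs (m + 1)) ≤ ψ m (xs m)
          - (β m * μd / (2 * R ^ 2)) * ‖xs (m + 1) - xs m‖ ^ 2 := by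
        have := hstrong m (xs (m + 1)) hxm1
        linarith
      have hgbound : -((g m) (xs (m + 1) - xs m)) ≤ ‖g m‖ * ‖xs (m + 1) - xs m‖ := by
        have h1 : ‖(g m) (xs (m + 1) - xs m)‖ ≤ ‖g m‖ * ‖xs (m + 1) - xs m‖ :=
          (g m).le_opNorm _
        rw [Real.norm_eq_abs] at h1
        linarith [neg_abs_le ((g m) (xs (m + 1) - xs m))]
      have h3 : -(lam m * (g m) (xs (m + 1) - xs m))
          ≤ lam m * (‖g m‖ * ‖xs (m + 1) - xs m‖) := by
        have := mul_le_mul_of_nonneg_left hgbound (hlam m).le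
        rw [mul_neg] at this
        exact this
      have hquad : lam m * (‖g m‖ * ‖xs (m + 1) - xs m‖)
          - (β m * μd / (2 * R ^ 2)) * ‖xs (m + 1) - xs m‖ ^ 2
          ≤ R ^ 2 / (2 * μd) * (lam m ^ 2 / β m * ‖g m‖ ^ 2) := by
        have hpos : (0:ℝ) < 2 * μd * β m * R ^ 2 :=
          mul_pos (mul_pos (mul_pos two_pos hμd) (hβpos m)) (by positivity)
        have hR0 : R ≠ 0 := ne_of_gt hR
        have hμ0 : μd ≠ 0 := ne_of_gt hμd
        have hβ0' : β m ≠ 0 := ne_of_gt (hβpos m)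
        refine le_of_mul_le_mul_right ?_ hpos
        have e1 : (lam m * (‖g m‖ * ‖xs (m + 1) - xs m‖)
            - (β m * μd / (2 * R ^ 2)) * ‖xs (m + 1) - xs m‖ ^ 2) * (2 * μd * β m * R ^ 2)
            = 2 * μd * β m * R ^ 2 * lam m * ‖g m‖ * ‖xs (m + 1) - xs m‖
              - μd ^ 2 * β m ^ 2 * ‖xs (m + 1) - xs m‖ ^ 2 := by
          field_simp
        have e2 : (R ^ 2 / (2 * μd) * (lam m ^ 2 / β m * ‖g m‖ ^ 2)) * (2 * μd * β m * R ^ 2)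
            = R ^ 4 * lam m ^ 2 * ‖g m‖ ^ 2 := by
          field_simp
        rw [e1, e2]
        nlinarith [sq_nonneg (μd * β m * ‖xs (m + 1) - xs m‖ - R ^ 2 * (lam m * ‖g m‖))]
      rw [Finset.sum_range_succ, Finset.sum_range_succ, mul_add]
      linarith [ih, hstep1, hstep2, h3, hquad]
  intro k x hx
  have hψx := (hmax (k + 1)).2 x hx
  have hψx' : -(∑ i ∈ Finset.range (k + 1), lam i * (g i) (x - xbar))
      - β (k + 1) * dh x ≤ ψ (k + 1) (xs (k + 1)) := by
    have : ψ (k + 1) x = -(∑ i ∈ Finset.range (k + 1), lam i * (g i) (x - xbar))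
        - β (k + 1) * dh x := by
      simp only [hψ, ContinuousLinearMap.neg_apply, hsum_s (k + 1) (x - xbar)]
    rw [← this]
    exact hψx
  have hsplit : ∑ i ∈ Finset.range (k + 1), lam i * (g i) (xs i - x)
      = ∑ i ∈ Finset.range (k + 1), lam i * (g i) (xs i - xbar)
        - ∑ i ∈ Finset.range (k + 1), lam i * (g i) (x - xbar) := by
    rw [← Finset.sum_sub_distrib]
    refine Finset.sum_congr rfl ?_
    intro i _
    have he : xs i - x = (xs i - xbar) - (x - xbar) := by abel
    rw [he, map_sub, mul_sub]
  have hM := hmain (k + 1)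
  have hgoal : β (k + 1) * d ((1 / R) • (x - xbar)) = β (k + 1) * dh x := by
    simp [hdh]
  rw [hsplit, hgoal]
  linarith [hψx', hM]
end
end

section
/- Let f be uniformly convex on Q with parameters ρ ≥ 2 and μ(f) > 0, with all subgradients of f on Q bounded by L in dual norm, let x̄ ∈ Q, R > 0, and let x* be a minimizer of f over Q_R(x̄). Run dual averaging with constant stepsizes λ_i = 1 and gains β_i = γ√(N+1) for some γ > 0: x₀ = x̄, s₀ = 0, g_i ∈ ∂f(x_i), s_{i+1} = s_i + g_i, x_{i+1} a maximizer over Q_R(x̄) of x ↦ ⟨−s_{i+1}, x − x̄⟩ − β_{i+1} d_{x̄,R}(x), with output x_N(x̄,R) = (1/(N+1)) Σ_{i=0}^{N} x_i and gap value δ_N(x̄,R) = max_{x∈Q_R(x̄)} (1/(N+1)) Σ_{i=0}^{N} ⟨g_i, x_i − x⟩. Then: δ_N(x̄,R) ≤ (1/√(N+1)) (γ A(d) + L² R²/(2 γ μ(d))); f(x_N(x̄,R)) − f(x*) ≤ δ_N(x̄,R); and ‖x_N(x̄,R) − x*‖^ρ ≤ δ_N(x̄,R)/μ(f). -/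
noncomputable section

open Real

set_option maxHeartbeats 1000000

private lemma lim_Ioo {g : ℝ → ℝ} {t c D : ℝ} (ht : t ∈ Set.Icc (0:ℝ) 1)
    (hg : Filter.Tendsto g (nhdsWithin t (Set.Ioo (0:ℝ) 1)) (nhds c))
    (h : ∀ α ∈ Set.Ioo (0:ℝ) 1, g α ≤ D) : c ≤ D := by
  haveI : (nhdsWithin t (Set.Ioo (0:ℝ) 1)).NeBot := by
    refine mem_closure_iff_nhdsWithin_neBot.mp ?_
    rw [closure_Ioo (by norm_num : (0:ℝ) ≠ 1)]
    exact ht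
  exact le_of_tendsto hg (Filter.eventually_iff_exists_mem.mpr
    ⟨Set.Ioo 0 1, self_mem_nhdsWithin, h⟩)

private lemma lim_zero_aux {M D : ℝ}
    (h : ∀ α ∈ Set.Ioo (0:ℝ) 1, (1 - α) * M ≤ D) : M ≤ D := by
  refine lim_Ioo (t := 0) (by norm_num) ?_ h
  have hcont : Continuous fun α : ℝ => (1 - α) * M := by continuity
  have h2 := (hcont.tendsto 0).mono_left (nhdsWithin_le_nhds (s := Set.Ioo 0 1))
  simpa using h2

private lemma lim_zero_rpow {ρ m K D : ℝ} (hρ : 2 ≤ ρ)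
    (h : ∀ α ∈ Set.Ioo (0:ℝ) 1,
      m * (1 - α) * (α ^ (ρ - 1) + (1 - α) ^ (ρ - 1)) * K ≤ D) : m * K ≤ D := by
  have hρ1 : (0:ℝ) < ρ - 1 := by linarith
  refine lim_Ioo (t := 0) (by norm_num) ?_ h
  have t1 : Filter.Tendsto (fun α : ℝ => α ^ (ρ-1)) (nhds 0) (nhds 0) := by
    have := (Real.continuousAt_rpow_const 0 (ρ-1) (Or.inr hρ1.le))
    simpa [Real.zero_rpow hρ1.ne'] using this.tendsto
  have t2 : Filter.Tendsto (fun α : ℝ => (1-α) ^ (ρ-1)) (nhds 0) (nhds 1) := by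
    have h1 : ContinuousAt (fun x : ℝ => x ^ (ρ-1)) 1 :=
      Real.continuousAt_rpow_const 1 (ρ-1) (Or.inl one_ne_zero)
    have h0 : ContinuousAt (fun α : ℝ => 1 - α) 0 := by fun_prop
    have := ContinuousAt.comp (by simpa using h1) h0
    simpa [Function.comp_def, Real.one_rpow] using this.tendsto
  have tall : Filter.Tendsto (fun α : ℝ => m * (1-α) * (α ^ (ρ-1) + (1-α) ^ (ρ-1)) * K)
      (nhds 0) (nhds (m * K)) := by
    have := (((tendsto_const_nhds (x := m)).mul
      ((tendsto_const_nhds (x := (1:ℝ))).sub Filter.tendsto_id)).mul (t1.add t2)).mul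
      (tendsto_const_nhds (x := K))
    norm_num at this
    convert this using 2
  exact tall.mono_left nhdsWithin_le_nhds

private lemma lim_one_rpow {ρ m K D : ℝ} (hρ : 2 ≤ ρ)
    (h : ∀ α ∈ Set.Ioo (0:ℝ) 1,
      m * α * (α ^ (ρ - 1) + (1 - α) ^ (ρ - 1)) * K ≤ D) : m * K ≤ D := by
  have hρ1 : (0:ℝ) < ρ - 1 := by linarith
  refine lim_Ioo (t := 1) (by norm_num) ?_ h
  have t1 : Filter.Tendsto (fun α : ℝ => α ^ (ρ-1)) (nhds 1) (nhds 1) := by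
    have := (Real.continuousAt_rpow_const 1 (ρ-1) (Or.inl one_ne_zero))
    simpa [Real.one_rpow] using this.tendsto
  have t2 : Filter.Tendsto (fun α : ℝ => (1-α) ^ (ρ-1)) (nhds 1) (nhds 0) := by
    have h1 : ContinuousAt (fun x : ℝ => x ^ (ρ-1)) 0 :=
      Real.continuousAt_rpow_const 0 (ρ-1) (Or.inr hρ1.le)
    have h0 : ContinuousAt (fun α : ℝ => 1 - α) 1 := by fun_prop
    have := ContinuousAt.comp (by simpa [Real.zero_rpow hρ1.ne'] using h1) h0
    simpa [Function.comp_def, Real.zero_rpow hρ1.ne'] using this.tendsto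
  have tall : Filter.Tendsto (fun α : ℝ => m * α * (α ^ (ρ-1) + (1-α) ^ (ρ-1)) * K)
      (nhds 1) (nhds (m * K)) := by
    have := (((tendsto_const_nhds (x := m)).mul Filter.tendsto_id).mul (t1.add t2)).mul
      (tendsto_const_nhds (x := K))
    norm_num at this
    convert this using 2
  exact tall.mono_left nhdsWithin_le_nhds

/-- Lemma 3.1. Dual averaging with unit stepsizes and constant
gain `β i = γ √(N+1)` applied to a uniformly convex function `f` (parameters
`ρ ≥ 2`, `μf > 0`) whose subgradients on `Q` are bounded by `L` in dual norm.
`δ` is the gap value, `xN` the averaged iterate, `xstar` a minimizer of `f`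
over `Q ∩ B_R(x̄)`. -/
theorem dual_averaging_uniformly_convex
    {E : Type*} [NormedAddCommGroup E] [NormedSpace ℝ E] [FiniteDimensional ℝ E]
    (Q : Set E) (hQc : IsClosed Q) (hQconv : Convex ℝ Q)
    (d : E → ℝ) (μd A : ℝ) (hμd : 0 < μd)
    (hd_cont : ContinuousOn d (Metric.closedBall (0 : E) 1))
    (hd_sc : ∀ x ∈ Metric.closedBall (0 : E) 1, ∀ y ∈ Metric.closedBall (0 : E) 1,
      ∀ α ∈ Set.Icc (0 : ℝ) 1,
      d (α • x + (1 - α) • y) ≤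
        α * d x + (1 - α) * d y - (μd / 2) * α * (1 - α) * ‖x - y‖ ^ 2)
    (hd0 : d 0 = 0)
    (hd_nonneg : ∀ x ∈ Metric.closedBall (0 : E) 1, 0 ≤ d x)
    (hdA : ∀ x ∈ Metric.closedBall (0 : E) 1, d x ≤ A)
    (f : E → ℝ) (ρ μf : ℝ) (hρ : 2 ≤ ρ) (hμf : 0 < μf)
    (huc : ∀ x ∈ Q, ∀ y ∈ Q, ∀ α ∈ Set.Icc (0 : ℝ) 1,
      f (α • x + (1 - α) • y) ≤
        α * f x + (1 - α) * f y -
          (μf / 2) * α * (1 - α) * (α ^ (ρ - 1) + (1 - α) ^ (ρ - 1)) * ‖x - y‖ ^ ρ)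
    (L : ℝ)
    (hL : ∀ x ∈ Q, ∀ g : E →L[ℝ] ℝ, (∀ y ∈ Q, f x + g (y - x) ≤ f y) → ‖g‖ ≤ L)
    (xbar : E) (hxbar : xbar ∈ Q) (R : ℝ) (hR : 0 < R)
    (xstar : E) (hxstarQ : xstar ∈ Q ∩ Metric.closedBall xbar R)
    (hxstar : ∀ y ∈ Q ∩ Metric.closedBall xbar R, f xstar ≤ f y)
    (N : ℕ) (γ : ℝ) (hγ : 0 < γ)
    (β : ℕ → ℝ) (hβ : ∀ i, β i = γ * Real.sqrt ((N : ℝ) + 1))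
    (xs : ℕ → E) (g : ℕ → E →L[ℝ] ℝ) (s : ℕ → E →L[ℝ] ℝ)
    (hx0 : xs 0 = xbar) (hs0 : s 0 = 0)
    (hsub : ∀ i, ∀ y ∈ Q, f (xs i) + (g i) (y - xs i) ≤ f y)
    (hsrec : ∀ i, s (i + 1) = s i + g i)
    (hxrec : ∀ i, xs (i + 1) ∈ Q ∩ Metric.closedBall xbar R ∧
      ∀ y ∈ Q ∩ Metric.closedBall xbar R,
        (-(s (i + 1))) (y - xbar) - β (i + 1) * d ((1 / R) • (y - xbar)) ≤
          (-(s (i + 1))) (xs (i + 1) - xbar)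
            - β (i + 1) * d ((1 / R) • (xs (i + 1) - xbar)))
    (xN : E) (hxN : xN = (1 / ((N : ℝ) + 1)) • ∑ i ∈ Finset.range (N + 1), xs i)
    (δ : ℝ)
    (hδ : IsGreatest
      ((fun x => (1 / ((N : ℝ) + 1)) * ∑ i ∈ Finset.range (N + 1), (g i) (xs i - x)) ''
        (Q ∩ Metric.closedBall xbar R)) δ) :
    δ ≤ (1 / Real.sqrt ((N : ℝ) + 1)) * (γ * A + L ^ 2 * R ^ 2 / (2 * γ * μd)) ∧
    f xN - f xstar ≤ δ ∧
    ‖xN - xstar‖ ^ ρ ≤ δ / μf := by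
  set S := Q ∩ Metric.closedBall xbar R with hS
  have hSconv : Convex ℝ S := hQconv.inter (convex_closedBall xbar R)
  have hxbarS : xbar ∈ S := ⟨hxbar, Metric.mem_closedBall_self hR.le⟩
  set b := γ * Real.sqrt ((N : ℝ) + 1) with hbdef
  have hsq : 0 < Real.sqrt ((N : ℝ) + 1) := Real.sqrt_pos.mpr (by positivity)
  have hb : 0 < b := mul_pos hγ hsq
  set c := b * (μd / 2) * (1 / R) ^ 2 with hcdef
  have hc : 0 < c := by positivity
  have humem : ∀ y ∈ S, (1 / R) • (y - xbar) ∈ Metric.closedBall (0 : E) 1 := by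
    intro y hy
    rw [Metric.mem_closedBall, dist_zero_right, norm_smul, Real.norm_eq_abs,
      abs_of_pos (by positivity : (0:ℝ) < 1 / R)]
    have h1 : ‖y - xbar‖ ≤ R := by
      have := hy.2
      rwa [Metric.mem_closedBall, dist_eq_norm] at this
    rw [div_mul_eq_mul_div, one_mul, div_le_one hR]
    exact h1
  set φ := fun (k : ℕ) (x : E) => -((s k) (x - xbar)) - b * d ((1 / R) • (x - xbar)) with hφ
  clear_value b c φ
  have hmem : ∀ k, xs k ∈ S := by
    intro k
    cases k with
    | zero => rw [hx0]; exact hxbarS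
    | succ k => exact (hxrec k).1
  have hmax : ∀ k, ∀ y ∈ S, φ k y ≤ φ k (xs k) := by
    intro k y hy
    cases k with
    | zero =>
      simp only [hφ, hs0, hx0, ContinuousLinearMap.zero_apply, sub_self, smul_zero, hd0]
      have := hd_nonneg _ (humem y hy)
      nlinarith [hb]
    | succ k =>
      have hx := (hxrec k).2 y hy
      rw [hβ] at hx
      simpa only [hφ, ContinuousLinearMap.neg_apply, neg_sub] using hx
  have hstrong : ∀ k, ∀ y ∈ S, φ k y + c * ‖y - xs k‖ ^ 2 ≤ φ k (xs k) := by
    intro k y hy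
    have hxkS := hmem k
    have key : ∀ α ∈ Set.Ioo (0:ℝ) 1,
        (1 - α) * (c * ‖y - xs k‖ ^ 2) ≤ φ k (xs k) - φ k y := by
      intro α hα
      obtain ⟨hα0, hα1⟩ := hα
      have hz : α • y + (1 - α) • xs k ∈ S :=
        hSconv hy hxkS hα0.le (by linarith) (by ring)
      have h1 := hmax k _ hz
      have hcomb : (1 / R) • (α • y + (1 - α) • xs k - xbar)
          = α • ((1 / R) • (y - xbar)) + (1 - α) • ((1 / R) • (xs k - xbar)) := by
        module
      have h2 := hd_sc _ (humem y hy) _ (humem _ hxkS) α ⟨hα0.le, hα1.le⟩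
      have hnormid : ‖(1 / R) • (y - xbar) - (1 / R) • (xs k - xbar)‖ ^ 2
          = (1 / R) ^ 2 * ‖y - xs k‖ ^ 2 := by
        have he : (1 / R) • (y - xbar) - (1 / R) • (xs k - xbar) = (1 / R) • (y - xs k) := by
          module
        rw [he, norm_smul, Real.norm_eq_abs, abs_of_pos (by positivity : (0:ℝ) < 1 / R)]
        ring
      rw [hnormid] at h2
      have hlin : (s k) (α • y + (1 - α) • xs k - xbar)
          = α * ((s k) (y - xbar)) + (1 - α) * ((s k) (xs k - xbar)) := by
        have he : α • y + (1 - α) • xs k - xbar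
            = α • (y - xbar) + (1 - α) • (xs k - xbar) := by module
        rw [he, map_add, map_smul, map_smul, smul_eq_mul, smul_eq_mul]
      simp only [hφ] at h1 ⊢
      rw [hcomb] at h1
      rw [hlin] at h1
      set P := (s k) (y - xbar) with hP
      set Pk := (s k) (xs k - xbar) with hPk
      set Dy := d ((1 / R) • (y - xbar)) with hDy
      set Dk := d ((1 / R) • (xs k - xbar)) with hDk
      set Dz := d (α • ((1 / R) • (y - xbar)) + (1 - α) • ((1 / R) • (xs k - xbar))) with hDz
      set K := ‖y - xs k‖ with hK
      clear_value P Pk Dy Dk Dz K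
      have h2b := mul_le_mul_of_nonneg_left h2 hb.le
      have hfin : α * ((1 - α) * (c * K ^ 2))
          ≤ α * ((-Pk - b * Dk) - (-P - b * Dy)) := by
        rw [hcdef]
        nlinarith [h1, h2b]
      exact le_of_mul_le_mul_left hfin hα0
    have := lim_zero_aux key
    linarith
  have hrec : ∀ k, φ (k + 1) (xs (k + 1))
      ≤ φ k (xs k) - (g k) (xs k - xbar) + L ^ 2 / (4 * c) := by
    intro k
    have hgk : ‖g k‖ ≤ L := hL (xs k) (hmem k).1 (g k) (hsub k)
    have hφe : φ (k + 1) (xs (k + 1)) = φ k (xs (k + 1)) - (g k) (xs (k + 1) - xbar) := by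
      simp only [hφ, hsrec k, ContinuousLinearMap.add_apply]; ring
    have h1 := hstrong k (xs (k + 1)) (hmem (k + 1))
    have hsplit : (g k) (xs (k + 1) - xbar)
        = (g k) (xs k - xbar) + (g k) (xs (k + 1) - xs k) := by
      rw [← map_add]; congr 1; abel
    set t := ‖xs (k + 1) - xs k‖ with ht
    have h2 : -((g k) (xs (k + 1) - xs k)) ≤ L * t := by
      calc -((g k) (xs (k + 1) - xs k)) ≤ ‖(g k) (xs (k + 1) - xs k)‖ :=
            (neg_le_abs _).trans_eq (Real.norm_eq_abs _).symm
        _ ≤ ‖g k‖ * t := (g k).le_opNorm _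
        _ ≤ L * t := mul_le_mul_of_nonneg_right hgk (norm_nonneg _)
    have h3 : L * t - c * t ^ 2 ≤ L ^ 2 / (4 * c) := by
      rw [le_div_iff₀ (by positivity : (0:ℝ) < 4 * c)]
      nlinarith [sq_nonneg (L - 2 * c * t)]
    rw [hφe, hsplit]
    linarith
  have htel : ∀ n : ℕ, φ n (xs n)
      ≤ -(∑ i ∈ Finset.range n, (g i) (xs i - xbar)) + n * (L ^ 2 / (4 * c)) := by
    intro n
    induction n with
    | zero => simp [hφ, hx0, hs0, hd0]
    | succ n ih =>
      have := hrec n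
      rw [Finset.sum_range_succ]
      push_cast
      linarith
  have hsum : ∀ n, ∀ v : E, (s n) v = ∑ i ∈ Finset.range n, (g i) v := by
    intro n
    induction n with
    | zero => intro v; simp [hs0]
    | succ n ih =>
      intro v
      rw [hsrec n, ContinuousLinearMap.add_apply, ih, Finset.sum_range_succ]
  have hbound : ∀ x ∈ S, ∑ i ∈ Finset.range (N + 1), (g i) (xs i - x)
      ≤ b * A + ((N : ℝ) + 1) * (L ^ 2 / (4 * c)) := by
    intro x hx
    have h1 := hmax (N + 1) x hx
    have h2 := htel (N + 1)
    have h3 : -(∑ i ∈ Finset.range (N + 1), (g i) (x - xbar)) - b * A ≤ φ (N + 1) x := by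
      simp only [hφ, hsum]
      have hA := hdA _ (humem x hx)
      linarith [mul_le_mul_of_nonneg_left hA hb.le]
    have h4 : ∀ i ∈ Finset.range (N + 1), (g i) (xs i - x)
        = (g i) (xs i - xbar) - (g i) (x - xbar) := by
      intro i _
      rw [← map_sub]; congr 1; abel
    rw [Finset.sum_congr rfl h4, Finset.sum_sub_distrib]
    push_cast at h2
    linarith
  -- Part 1
  have hpart1 : δ ≤ (1 / Real.sqrt ((N : ℝ) + 1)) * (γ * A + L ^ 2 * R ^ 2 / (2 * γ * μd)) := by
    obtain ⟨xhat, hxhatS, hxhateq⟩ := hδ.1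
    have h1 := hbound xhat hxhatS
    have h2 : δ ≤ (1 / ((N : ℝ) + 1)) * (b * A + ((N : ℝ) + 1) * (L ^ 2 / (4 * c))) := by
      rw [← hxhateq]
      exact mul_le_mul_of_nonneg_left h1 (by positivity)
    refine h2.trans (le_of_eq ?_)
    have hNs : ((N : ℝ) + 1) = Real.sqrt ((N : ℝ) + 1) ^ 2 :=
      (Real.sq_sqrt (by positivity)).symm
    set u := Real.sqrt ((N : ℝ) + 1) with hudef
    clear_value u
    rw [hbdef, hcdef, hbdef, hNs]
    have hu0 : u ≠ 0 := hsq.ne'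
    field_simp
    ring
  -- convexity of f on S
  have hρ1 : (1 : ℝ) ≤ ρ := by linarith
  have hfconv : ConvexOn ℝ S f := by
    refine ⟨hSconv, fun x hx y hy a bb ha hb1 hab => ?_⟩
    have h1 := huc x hx.1 y hy.1 a ⟨ha, by linarith⟩
    have hb' : bb = 1 - a := by linarith
    subst hb'
    have hnn : 0 ≤ (μf / 2) * a * (1 - a) * (a ^ (ρ - 1) + (1 - a) ^ (ρ - 1)) * ‖x - y‖ ^ ρ := by
      have e1 : (0:ℝ) ≤ a ^ (ρ - 1) := Real.rpow_nonneg ha _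
      have e2 : (0:ℝ) ≤ (1 - a) ^ (ρ - 1) := Real.rpow_nonneg (by linarith) _
      have e3 : (0:ℝ) ≤ ‖x - y‖ ^ ρ := Real.rpow_nonneg (norm_nonneg _) _
      have e4 : (0:ℝ) ≤ μf / 2 := by linarith
      apply mul_nonneg (mul_nonneg (mul_nonneg (mul_nonneg e4 ha) (by linarith)) (by linarith))
      exact e3
    simp only [smul_eq_mul]
    linarith
  have hw0 : ∀ i ∈ Finset.range (N + 1), (0:ℝ) ≤ 1 / ((N : ℝ) + 1) := fun i _ => by positivity
  have hw1 : ∑ _i ∈ Finset.range (N + 1), (1 / ((N : ℝ) + 1)) = 1 := by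
    rw [Finset.sum_const, Finset.card_range, nsmul_eq_mul]
    push_cast
    field_simp
  have hxNsum : xN = ∑ i ∈ Finset.range (N + 1), (1 / ((N : ℝ) + 1)) • xs i := by
    rw [hxN, Finset.smul_sum]
  have hδup : (1 / ((N : ℝ) + 1)) * ∑ i ∈ Finset.range (N + 1), (g i) (xs i - xstar) ≤ δ :=
    hδ.2 ⟨xstar, hxstarQ, rfl⟩
  -- Part 2
  have hpart2 : f xN - f xstar ≤ δ := by
    have hjensen : f xN ≤ ∑ i ∈ Finset.range (N + 1), (1 / ((N : ℝ) + 1)) * f (xs i) := by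
      rw [hxNsum]
      simpa [smul_eq_mul] using hfconv.map_sum_le hw0 hw1 (fun i _ => hmem i)
    have hstep : ∀ i ∈ Finset.range (N + 1),
        (1 / ((N : ℝ) + 1)) * f (xs i)
          ≤ (1 / ((N : ℝ) + 1)) * (f xstar + (g i) (xs i - xstar)) := by
      intro i _
      have h1 := hsub i xstar hxstarQ.1
      have h2 : (g i) (xstar - xs i) = -((g i) (xs i - xstar)) := by
        rw [← map_neg]; congr 1; abel
      rw [h2] at h1
      have : f (xs i) ≤ f xstar + (g i) (xs i - xstar) := by linarith
      exact mul_le_mul_of_nonneg_left this (by positivity)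
    have hsum2 : ∑ i ∈ Finset.range (N + 1), (1 / ((N : ℝ) + 1)) * (f xstar + (g i) (xs i - xstar))
        = f xstar + (1 / ((N : ℝ) + 1)) * ∑ i ∈ Finset.range (N + 1), (g i) (xs i - xstar) := by
      simp only [mul_add]
      rw [Finset.sum_add_distrib, Finset.sum_const, Finset.card_range, nsmul_eq_mul,
        ← Finset.mul_sum]
      congr 1
      push_cast
      field_simp
    have := (hjensen.trans (Finset.sum_le_sum hstep)).trans_eq hsum2
    linarith
  -- strong subgradient inequality
  have hsubstrong : ∀ i, ∀ y ∈ S,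
      (g i) (y - xs i) + (μf / 2) * ‖y - xs i‖ ^ ρ ≤ f y - f (xs i) := by
    intro i y hy
    have hG : (μf / 2) * ‖y - xs i‖ ^ ρ ≤ f y - f (xs i) - (g i) (y - xs i) := by
      apply lim_zero_rpow hρ
      intro α hα
      obtain ⟨hα0, hα1⟩ := hα
      have hzQ : α • y + (1 - α) • xs i ∈ Q := hQconv hy.1 (hmem i).1 hα0.le (by linarith) (by ring)
      have h1 := hsub i _ hzQ
      have hgz : (g i) (α • y + (1 - α) • xs i - xs i) = α * ((g i) (y - xs i)) := by
        have he : α • y + (1 - α) • xs i - xs i = α • (y - xs i) := by module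
        rw [he, map_smul, smul_eq_mul]
      rw [hgz] at h1
      have h2 := huc y hy.1 (xs i) (hmem i).1 α ⟨hα0.le, hα1.le⟩
      have hfin : α * ((μf / 2) * (1 - α) * (α ^ (ρ - 1) + (1 - α) ^ (ρ - 1)) * ‖y - xs i‖ ^ ρ)
          ≤ α * (f y - f (xs i) - (g i) (y - xs i)) := by nlinarith [h1, h2]
      exact le_of_mul_le_mul_left hfin hα0
    linarith
  -- quadratic growth at the minimizer
  have hgrow : ∀ y ∈ S, (μf / 2) * ‖y - xstar‖ ^ ρ ≤ f y - f xstar := by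
    intro y hy
    apply lim_one_rpow hρ
    intro α hα
    obtain ⟨hα0, hα1⟩ := hα
    have hz : α • xstar + (1 - α) • y ∈ S :=
      hSconv hxstarQ hy hα0.le (by linarith) (by ring)
    have h1 := hxstar _ hz
    have h2 := huc xstar hxstarQ.1 y hy.1 α ⟨hα0.le, hα1.le⟩
    rw [norm_sub_rev xstar y] at h2
    have hfin : (1 - α) * ((μf / 2) * α * (α ^ (ρ - 1) + (1 - α) ^ (ρ - 1)) * ‖y - xstar‖ ^ ρ)
        ≤ (1 - α) * (f y - f xstar) := by nlinarith [h1, h2]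
    exact le_of_mul_le_mul_left hfin (by linarith)
  -- Part 3
  have hcomp : ∀ i, μf * ‖xs i - xstar‖ ^ ρ ≤ (g i) (xs i - xstar) := by
    intro i
    have h1 := hsubstrong i xstar hxstarQ
    have h2 := hgrow (xs i) (hmem i)
    have h3 : (g i) (xstar - xs i) = -((g i) (xs i - xstar)) := by
      rw [← map_neg]; congr 1; abel
    rw [norm_sub_rev xstar (xs i), h3] at h1
    linarith
  have hnormavg : ‖xN - xstar‖ ≤ ∑ i ∈ Finset.range (N + 1), (1 / ((N : ℝ) + 1)) * ‖xs i - xstar‖ := by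
    have he : xN - xstar = ∑ i ∈ Finset.range (N + 1), (1 / ((N : ℝ) + 1)) • (xs i - xstar) := by
      simp only [smul_sub]
      rw [Finset.sum_sub_distrib, ← Finset.sum_smul, hw1, one_smul, ← hxNsum]
    calc ‖xN - xstar‖ = ‖∑ i ∈ Finset.range (N + 1), (1 / ((N : ℝ) + 1)) • (xs i - xstar)‖ := by
          rw [he]
      _ ≤ ∑ i ∈ Finset.range (N + 1), ‖(1 / ((N : ℝ) + 1)) • (xs i - xstar)‖ :=
          norm_sum_le _ _
      _ = ∑ i ∈ Finset.range (N + 1), (1 / ((N : ℝ) + 1)) * ‖xs i - xstar‖ := by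
          refine Finset.sum_congr rfl fun i _ => ?_
          rw [norm_smul, Real.norm_eq_abs, abs_of_nonneg (by positivity)]
  have hpow : ‖xN - xstar‖ ^ ρ
      ≤ ∑ i ∈ Finset.range (N + 1), (1 / ((N : ℝ) + 1)) * ‖xs i - xstar‖ ^ ρ := by
    calc ‖xN - xstar‖ ^ ρ
        ≤ (∑ i ∈ Finset.range (N + 1), (1 / ((N : ℝ) + 1)) * ‖xs i - xstar‖) ^ ρ :=
          Real.rpow_le_rpow (norm_nonneg _) hnormavg (by linarith)
      _ ≤ ∑ i ∈ Finset.range (N + 1), (1 / ((N : ℝ) + 1)) * ‖xs i - xstar‖ ^ ρ :=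
          Real.rpow_arith_mean_le_arith_mean_rpow _ _ _ hw0 hw1
            (fun i _ => norm_nonneg _) hρ1
  have hsum3 : μf * ∑ i ∈ Finset.range (N + 1), (1 / ((N : ℝ) + 1)) * ‖xs i - xstar‖ ^ ρ
      ≤ (1 / ((N : ℝ) + 1)) * ∑ i ∈ Finset.range (N + 1), (g i) (xs i - xstar) := by
    rw [Finset.mul_sum, Finset.mul_sum]
    refine Finset.sum_le_sum fun i _ => ?_
    have h1 := mul_le_mul_of_nonneg_left (hcomp i)
      (by positivity : (0:ℝ) ≤ 1 / ((N : ℝ) + 1))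
    nlinarith [h1]
  have hpart3 : ‖xN - xstar‖ ^ ρ ≤ δ / μf := by
    rw [le_div_iff₀ hμf]
    have h1 := mul_le_mul_of_nonneg_left hpow hμf.le
    have h2 := hsum3.trans hδup
    nlinarith [h1, h2]
  exact ⟨hpart1, hpart2, hpart3⟩
end
end

section
/- Let f be uniformly convex on Q with parameters ρ ≥ 2 and μ(f) > 0, with all subgradients of f on Q bounded by L > 0 in dual norm, let x̄ ∈ Q, R > 0, and let x* be a minimizer of f over Q_R(x̄). Run dual averaging with λ_i = 1 and β_i = γ√(N+1) where γ = L R / √(2 μ(d) A(d)), with output x_N(x̄,R) = (1/(N+1)) Σ_{i=0}^{N} x_i. Then f(x_N(x̄,R)) − f(x*) ≤ L R √(2 A(d)/(μ(d)(N+1))) and ‖x_N(x̄,R) − x*‖^ρ ≤ (L R/μ(f)) √(2 A(d)/(μ(d)(N+1))). -/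
noncomputable section

open Real Filter

private lemma aux_lim1 (k T : ℝ) (h : ∀ α : ℝ, 0 < α → α < 1 → (1 - α) * k ≤ T) : k ≤ T := by
  have ht : Tendsto (fun α : ℝ => (1 - α) * k) (nhdsWithin 0 (Set.Ioi 0)) (nhds k) := by
    have h0 : Tendsto (fun α : ℝ => (1 - α) * k) (nhds 0) (nhds ((1 - 0) * k)) :=
      ((continuous_const.sub continuous_id).mul continuous_const).tendsto 0
    simpa using h0.mono_left nhdsWithin_le_nhds
  refine le_of_tendsto ht ?_
  filter_upwards [Ioo_mem_nhdsGT_of_mem (Set.left_mem_Ico.2 one_pos)] with α hα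
  exact h α hα.1 hα.2

private lemma aux_lim2 (ρ : ℝ) (hρ : 2 ≤ ρ) (k T : ℝ)
    (h : ∀ α : ℝ, 0 < α → α < 1 →
      (1 - α) * (α ^ (ρ - 1) + (1 - α) ^ (ρ - 1)) * k ≤ T) : k ≤ T := by
  have h1 : Tendsto (fun α : ℝ => α ^ (ρ - 1)) (nhds 0) (nhds 0) := by
    have c : ContinuousAt (fun x : ℝ => x ^ (ρ - 1)) 0 :=
      Real.continuousAt_rpow_const 0 (ρ - 1) (Or.inr (by linarith))
    simpa [Real.zero_rpow (by intro hc; linarith [hc] : ρ - 1 ≠ 0)] using c.tendsto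
  have hsub : Tendsto (fun α : ℝ => 1 - α) (nhds (0:ℝ)) (nhds 1) := by
    have := ((continuous_const (y := (1:ℝ))).sub continuous_id).tendsto (0:ℝ)
    simpa using (tendsto_const_nhds.sub tendsto_id : Tendsto (fun α : ℝ => (1:ℝ) - α) (nhds 0) (nhds (1 - 0)))
  have h2 : Tendsto (fun α : ℝ => (1 - α) ^ (ρ - 1)) (nhds 0) (nhds 1) := by
    have c : ContinuousAt (fun x : ℝ => x ^ (ρ - 1)) 1 :=
      Real.continuousAt_rpow_const 1 (ρ - 1) (Or.inl one_ne_zero)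
    have := c.tendsto.comp hsub
    simpa [Function.comp_def, Real.one_rpow] using this
  have ht : Tendsto (fun α : ℝ => (1 - α) * (α ^ (ρ - 1) + (1 - α) ^ (ρ - 1)) * k)
      (nhdsWithin 0 (Set.Ioi 0)) (nhds k) := by
    have h0 := (hsub.mul (h1.add h2)).mul (tendsto_const_nhds (x := k))
    simpa using h0.mono_left nhdsWithin_le_nhds
  refine le_of_tendsto ht ?_
  filter_upwards [Ioo_mem_nhdsGT_of_mem (Set.left_mem_Ico.2 one_pos)] with α hα
  exact h α hα.1 hα.2

private lemma aux_arith (L R μd A n1 : ℝ) (hL : 0 < L) (hR : 0 < R) (hμd : 0 < μd)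
    (hA : 0 < A) (hn1 : 0 < n1) :
    (L * R / Real.sqrt (2 * μd * A) * Real.sqrt n1) * A
      + n1 * (L ^ 2 / (2 * ((L * R / Real.sqrt (2 * μd * A) * Real.sqrt n1) * μd / R ^ 2)))
      = n1 * (L * R * Real.sqrt (2 * A / (μd * n1))) := by
  obtain ⟨a, ha, rfl⟩ : ∃ t, 0 < t ∧ A = t ^ 2 :=
    ⟨Real.sqrt A, Real.sqrt_pos.2 hA, (Real.sq_sqrt hA.le).symm⟩
  obtain ⟨m, hm, rfl⟩ : ∃ t, 0 < t ∧ μd = t ^ 2 :=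
    ⟨Real.sqrt μd, Real.sqrt_pos.2 hμd, (Real.sq_sqrt hμd.le).symm⟩
  obtain ⟨n, hn, rfl⟩ : ∃ t, 0 < t ∧ n1 = t ^ 2 :=
    ⟨Real.sqrt n1, Real.sqrt_pos.2 hn1, (Real.sq_sqrt hn1.le).symm⟩
  have hs2 : (0:ℝ) < Real.sqrt 2 := Real.sqrt_pos.2 (by norm_num)
  have hs2sq : Real.sqrt 2 ^ 2 = 2 := Real.sq_sqrt (by norm_num)
  have e1 : Real.sqrt (2 * m ^ 2 * a ^ 2) = Real.sqrt 2 * m * a := by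
    rw [show 2 * m ^ 2 * a ^ 2 = (Real.sqrt 2 * m * a) ^ 2 by
      rw [mul_pow, mul_pow, hs2sq], Real.sqrt_sq (by positivity)]
  have e2 : Real.sqrt (2 * a ^ 2 / (m ^ 2 * n ^ 2)) = Real.sqrt 2 * a / (m * n) := by
    rw [show 2 * a ^ 2 / (m ^ 2 * n ^ 2) = (Real.sqrt 2 * a / (m * n)) ^ 2 by
      rw [div_pow, mul_pow, mul_pow, hs2sq], Real.sqrt_sq (by positivity)]
  rw [e1, e2, Real.sqrt_sq hn.le]
  have h2 : (2:ℝ) = Real.sqrt 2 * Real.sqrt 2 := by nlinarith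
  field_simp
  linear_combination (-1) * hs2sq

set_option maxHeartbeats 3000000 in
/-- Corollary 3.1. Dual averaging with unit stepsizes and
gain `β i = γ √(N+1)`, `γ = L R / √(2 μ(d) A(d))`, applied to a uniformly convex
function with parameters `ρ ≥ 2`, `μf > 0` and subgradients bounded by `L > 0`. -/
theorem dual_averaging_uniformly_convex_tuned
    {E : Type*} [NormedAddCommGroup E] [NormedSpace ℝ E] [FiniteDimensional ℝ E]
    (Q : Set E) (hQc : IsClosed Q) (hQconv : Convex ℝ Q)
    (d : E → ℝ) (μd A : ℝ) (hμd : 0 < μd)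
    (hd_cont : ContinuousOn d (Metric.closedBall (0 : E) 1))
    (hd_sc : ∀ x ∈ Metric.closedBall (0 : E) 1, ∀ y ∈ Metric.closedBall (0 : E) 1,
      ∀ α ∈ Set.Icc (0 : ℝ) 1,
      d (α • x + (1 - α) • y) ≤
        α * d x + (1 - α) * d y - (μd / 2) * α * (1 - α) * ‖x - y‖ ^ 2)
    (hd0 : d 0 = 0)
    (hd_nonneg : ∀ x ∈ Metric.closedBall (0 : E) 1, 0 ≤ d x)
    (hdA : ∀ x ∈ Metric.closedBall (0 : E) 1, d x ≤ A)
    (f : E → ℝ) (ρ μf : ℝ) (hρ : 2 ≤ ρ) (hμf : 0 < μf)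
    (huc : ∀ x ∈ Q, ∀ y ∈ Q, ∀ α ∈ Set.Icc (0 : ℝ) 1,
      f (α • x + (1 - α) • y) ≤
        α * f x + (1 - α) * f y -
          (μf / 2) * α * (1 - α) * (α ^ (ρ - 1) + (1 - α) ^ (ρ - 1)) * ‖x - y‖ ^ ρ)
    (L : ℝ) (hLpos : 0 < L)
    (hL : ∀ x ∈ Q, ∀ g : E →L[ℝ] ℝ, (∀ y ∈ Q, f x + g (y - x) ≤ f y) → ‖g‖ ≤ L)
    (xbar : E) (hxbar : xbar ∈ Q) (R : ℝ) (hR : 0 < R)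
    (xstar : E) (hxstarQ : xstar ∈ Q ∩ Metric.closedBall xbar R)
    (hxstar : ∀ y ∈ Q ∩ Metric.closedBall xbar R, f xstar ≤ f y)
    (N : ℕ) (γ : ℝ) (hγ : γ = L * R / Real.sqrt (2 * μd * A))
    (β : ℕ → ℝ) (hβ : ∀ i, β i = γ * Real.sqrt ((N : ℝ) + 1))
    (xs : ℕ → E) (g : ℕ → E →L[ℝ] ℝ) (s : ℕ → E →L[ℝ] ℝ)
    (hx0 : xs 0 = xbar) (hs0 : s 0 = 0)
    (hsub : ∀ i, ∀ y ∈ Q, f (xs i) + (g i) (y - xs i) ≤ f y)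
    (hsrec : ∀ i, s (i + 1) = s i + g i)
    (hxrec : ∀ i, xs (i + 1) ∈ Q ∩ Metric.closedBall xbar R ∧
      ∀ y ∈ Q ∩ Metric.closedBall xbar R,
        (-(s (i + 1))) (y - xbar) - β (i + 1) * d ((1 / R) • (y - xbar)) ≤
          (-(s (i + 1))) (xs (i + 1) - xbar)
            - β (i + 1) * d ((1 / R) • (xs (i + 1) - xbar)))
    (xN : E) (hxN : xN = (1 / ((N : ℝ) + 1)) • ∑ i ∈ Finset.range (N + 1), xs i) :
    f xN - f xstar ≤ L * R * Real.sqrt (2 * A / (μd * ((N : ℝ) + 1))) ∧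
    ‖xN - xstar‖ ^ ρ ≤ (L * R / μf) * Real.sqrt (2 * A / (μd * ((N : ℝ) + 1))) := by
  have hn1pos : (0:ℝ) < (N : ℝ) + 1 := by positivity
  have hA0 : 0 ≤ A := by simpa [hd0] using hdA 0 (by simp)
  -- degenerate case
  rcases subsingleton_or_nontrivial E with hE | hE
  · have hxx : xN = xstar := Subsingleton.elim _ _
    constructor
    · rw [hxx]; simp only [sub_self]; positivity
    · rw [hxx, sub_self, norm_zero, Real.zero_rpow (by linarith)]; positivity
  -- nondegenerate case: A > 0
  have hApos : 0 < A := by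
    obtain ⟨v, hv⟩ := exists_ne (0 : E)
    set u : E := ‖v‖⁻¹ • v with hu
    have hun : ‖u‖ = 1 := by
      rw [hu, norm_smul, norm_inv, norm_norm]
      field_simp [norm_ne_zero_iff.mpr hv]
    have hu1 : u ∈ Metric.closedBall (0:E) 1 := by
      simpa [mem_closedBall_zero_iff] using hun.le
    have hu2 : -u ∈ Metric.closedBall (0:E) 1 := by
      simpa [mem_closedBall_zero_iff] using hun.le
    have h := hd_sc u hu1 (-u) hu2 (1/2) ⟨by norm_num, by norm_num⟩
    have harg : (1/2 : ℝ) • u + (1 - 1/2 : ℝ) • (-u) = 0 := by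
      norm_num [smul_neg]
    have h2u : ‖u - -u‖ = 2 := by
      rw [sub_neg_eq_add, ← two_smul ℝ, norm_smul]
      simp [hun]
    rw [harg, hd0, h2u] at h
    have hA1 := hdA u hu1
    have hA2 := hdA (-u) hu2
    nlinarith
  -- constants
  have hsqrtpos : (0:ℝ) < Real.sqrt (2 * μd * A) := Real.sqrt_pos.2 (by positivity)
  have hγpos : 0 < γ := by rw [hγ]; positivity
  have hsn1 : (0:ℝ) < Real.sqrt ((N : ℝ) + 1) := Real.sqrt_pos.2 hn1pos
  set β0 : ℝ := γ * Real.sqrt ((N : ℝ) + 1) with hβ0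
  have hβ0pos : 0 < β0 := mul_pos hγpos hsn1
  set σ : ℝ := β0 * μd / R ^ 2 with hσ
  have hσpos : 0 < σ := by positivity
  set C : Set E := Q ∩ Metric.closedBall xbar R with hC
  have hCconv : Convex ℝ C := hQconv.inter (convex_closedBall xbar R)
  have hxbarC : xbar ∈ C := ⟨hxbar, Metric.mem_closedBall_self hR.le⟩
  have hxsC : ∀ i, xs i ∈ C := by
    intro i
    cases i with
    | zero => rw [hx0]; exact hxbarC
    | succ j => exact (hxrec j).1
  have hzball : ∀ y ∈ C, (1/R) • (y - xbar) ∈ Metric.closedBall (0:E) 1 := by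
    intro y hy
    rw [mem_closedBall_zero_iff, norm_smul]
    have h1 : ‖y - xbar‖ ≤ R := by
      rw [← dist_eq_norm]; exact Metric.mem_closedBall.1 hy.2
    rw [norm_div, norm_one, Real.norm_eq_abs, abs_of_pos hR]
    rw [div_mul_eq_mul_div, one_mul, div_le_one hR]
    exact h1
  -- lower bound for d
  have hdlb : ∀ z ∈ Metric.closedBall (0:E) 1, μd/2 * ‖z‖ ^ 2 ≤ d z := by
    intro z hz
    refine aux_lim1 _ _ (fun α hα0 hα1 => ?_)
    have h := hd_sc z hz 0 (by simp) α ⟨hα0.le, hα1.le⟩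
    simp only [smul_zero, add_zero, hd0, mul_zero, sub_zero] at h
    have hzm : α • z ∈ Metric.closedBall (0:E) 1 := by
      rw [mem_closedBall_zero_iff, norm_smul, Real.norm_eq_abs, abs_of_pos hα0]
      have := mem_closedBall_zero_iff.1 hz
      nlinarith
    have hnn : 0 ≤ d (α • z) := hd_nonneg _ hzm
    have key : α * ((1 - α) * (μd/2 * ‖z‖ ^ 2)) ≤ α * d z := by nlinarith
    exact le_of_mul_le_mul_left key hα0
  -- strong maximality property
  have hP : ∀ i, ∀ y ∈ C,
      ((-(s i)) (y - xbar) - β0 * d ((1/R) • (y - xbar))) + σ/2 * ‖y - xs i‖ ^ 2 ≤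
      ((-(s i)) (xs i - xbar) - β0 * d ((1/R) • (xs i - xbar))) := by
    intro i y hy
    have hnz : ∀ w : E, ‖(1/R) • w‖ ^ 2 = ‖w‖ ^ 2 / R ^ 2 := by
      intro w
      rw [norm_smul, norm_div, norm_one, Real.norm_eq_abs, abs_of_pos hR, mul_pow, div_pow]
      ring
    cases i with
    | zero =>
      rw [hs0, hx0]
      simp only [ContinuousLinearMap.neg_apply, ContinuousLinearMap.zero_apply, neg_zero,
        sub_self, smul_zero, hd0, mul_zero, sub_zero, zero_sub]
      have h1 := hdlb _ (hzball y hy)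
      have h5 : σ/2 * ‖y - xbar‖ ^ 2 = β0 * (μd/2 * ‖(1/R) • (y - xbar)‖ ^ 2) := by
        rw [hnz, hσ]; ring
      have h6 : β0 * (μd/2 * ‖(1/R) • (y - xbar)‖ ^ 2) ≤ β0 * d ((1/R) • (y - xbar)) :=
        mul_le_mul_of_nonneg_left h1 hβ0pos.le
      linarith
    | succ j =>
      have hx1C := hxsC (j + 1)
      have key : β0 * (μd/2 * (‖y - xs (j+1)‖ ^ 2 / R ^ 2)) ≤
          ((-(s (j+1))) (xs (j+1) - xbar) - β0 * d ((1/R) • (xs (j+1) - xbar))) -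
          ((-(s (j+1))) (y - xbar) - β0 * d ((1/R) • (y - xbar))) := by
        refine aux_lim1 _ _ (fun α hα0 hα1 => ?_)
        have hwC : α • y + (1-α) • xs (j+1) ∈ C :=
          hCconv hy hx1C hα0.le (by linarith) (by ring)
        have hmax := (hxrec j).2 _ hwC
        rw [hβ (j+1)] at hmax
        have harg : (α • y + (1-α) • xs (j+1)) - xbar
            = α • (y - xbar) + (1-α) • (xs (j+1) - xbar) := by module
        have hlin : (-(s (j+1))) ((α • y + (1-α) • xs (j+1)) - xbar)
            = α * (-(s (j+1))) (y - xbar) + (1-α) * (-(s (j+1))) (xs (j+1) - xbar) := by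
          rw [harg, map_add, map_smul, map_smul]; simp [smul_eq_mul]
        have hdarg : (1/R) • ((α • y + (1-α) • xs (j+1)) - xbar)
            = α • ((1/R) • (y - xbar)) + (1-α) • ((1/R) • (xs (j+1) - xbar)) := by
          rw [harg]; module
        rw [hlin, hdarg] at hmax
        have hdsc := hd_sc _ (hzball y hy) _ (hzball _ hx1C) α ⟨hα0.le, hα1.le⟩
        have hzdiff : ‖(1/R) • (y - xbar) - (1/R) • (xs (j+1) - xbar)‖ ^ 2
            = ‖y - xs (j+1)‖ ^ 2 / R ^ 2 := by
          rw [← smul_sub, hnz, show (y - xbar) - (xs (j+1) - xbar) = y - xs (j+1) by abel]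
        rw [hzdiff] at hdsc
        have hmul := mul_le_mul_of_nonneg_left hdsc hβ0pos.le
        have key2 : α * ((1-α) * (β0 * (μd/2 * (‖y - xs (j+1)‖ ^ 2 / R ^ 2))))
            ≤ α * (((-(s (j+1))) (xs (j+1) - xbar) - β0 * d ((1/R) • (xs (j+1) - xbar))) -
              ((-(s (j+1))) (y - xbar) - β0 * d ((1/R) • (y - xbar)))) := by
          nlinarith [hmax, hmul]
        exact le_of_mul_le_mul_left key2 hα0
      have hσeq : σ/2 * ‖y - xs (j+1)‖ ^ 2
          = β0 * (μd/2 * (‖y - xs (j+1)‖ ^ 2 / R ^ 2)) := by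
        rw [hσ]; ring
      linarith
  -- subgradient norm bound
  have hgL : ∀ i, ‖g i‖ ≤ L := fun i => hL (xs i) (hxsC i).1 (g i) (hsub i)
  -- recursion
  have hrec : ∀ i, ((-(s (i+1))) (xs (i+1) - xbar) - β0 * d ((1/R) • (xs (i+1) - xbar)))
      ≤ ((-(s i)) (xs i - xbar) - β0 * d ((1/R) • (xs i - xbar)))
        + (-(g i)) (xs i - xbar) + L ^ 2 / (2 * σ) := by
    intro i
    have h1 : (-(s (i+1))) (xs (i+1) - xbar)
        = (-(s i)) (xs (i+1) - xbar) + (-(g i)) (xs (i+1) - xbar) := by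
      rw [hsrec i]
      simp only [ContinuousLinearMap.neg_apply, ContinuousLinearMap.add_apply]
      ring
    have h2 := hP i (xs (i+1)) (hxsC (i+1))
    have h3 : (-(g i)) (xs (i+1) - xbar)
        = (-(g i)) (xs i - xbar) + (-(g i)) (xs (i+1) - xs i) := by
      rw [← map_add]; congr 1; abel
    have h4 : (-(g i)) (xs (i+1) - xs i) ≤ L * ‖xs (i+1) - xs i‖ := by
      calc (-(g i)) (xs (i+1) - xs i) ≤ ‖(-(g i)) (xs (i+1) - xs i)‖ := le_abs_self _
        _ ≤ ‖-(g i)‖ * ‖xs (i+1) - xs i‖ := ContinuousLinearMap.le_opNorm _ _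
        _ ≤ L * ‖xs (i+1) - xs i‖ := by
            rw [norm_neg]
            exact mul_le_mul_of_nonneg_right (hgL i) (norm_nonneg _)
    have h5 : L * ‖xs (i+1) - xs i‖ - σ/2 * ‖xs (i+1) - xs i‖ ^ 2 ≤ L ^ 2 / (2 * σ) := by
      rw [le_div_iff₀ (by positivity)]
      nlinarith [sq_nonneg (σ * ‖xs (i+1) - xs i‖ - L)]
    linarith
  -- s as a sum
  have hsum_s : ∀ n, s n = ∑ i ∈ Finset.range n, g i := by
    intro n
    induction n with
    | zero => simpa using hs0
    | succ m ih => rw [hsrec m, ih, Finset.sum_range_succ]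
  -- telescoping
  have htel : ∀ n, ((-(s n)) (xs n - xbar) - β0 * d ((1/R) • (xs n - xbar)))
      ≤ ∑ i ∈ Finset.range n, (-(g i)) (xs i - xbar) + n * (L ^ 2 / (2 * σ)) := by
    intro n
    induction n with
    | zero => simp [hs0, hx0, hd0]
    | succ m ih =>
      have := hrec m
      rw [Finset.sum_range_succ, Nat.cast_succ]
      linarith
  -- lower bound via xstar
  have hstarlb : (∑ i ∈ Finset.range (N+1), (-(g i)) (xstar - xbar)) - β0 * A
      ≤ ((-(s (N+1))) (xs (N+1) - xbar) - β0 * d ((1/R) • (xs (N+1) - xbar))) := by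
    have h1 := hP (N+1) xstar hxstarQ
    have h2 : (-(s (N+1))) (xstar - xbar)
        = ∑ i ∈ Finset.range (N+1), (-(g i)) (xstar - xbar) := by
      rw [hsum_s]
      simp [ContinuousLinearMap.neg_apply, ContinuousLinearMap.sum_apply, Finset.sum_neg_distrib]
    have h3 : d ((1/R) • (xstar - xbar)) ≤ A := hdA _ (hzball xstar hxstarQ)
    have h4 : β0 * d ((1/R) • (xstar - xbar)) ≤ β0 * A :=
      mul_le_mul_of_nonneg_left h3 hβ0pos.le
    nlinarith [h1, sq_nonneg ‖xstar - xs (N+1)‖, hσpos.le,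
      mul_nonneg hσpos.le (sq_nonneg ‖xstar - xs (N+1)‖)]
  -- the gap bound
  have hgap : ∑ i ∈ Finset.range (N+1), (g i) (xs i - xstar)
      ≤ β0 * A + ((N:ℝ)+1) * (L ^ 2 / (2 * σ)) := by
    have h1 := htel (N+1)
    have h3 : ∀ i, (g i) (xs i - xstar)
        = (-(g i)) (xstar - xbar) - (-(g i)) (xs i - xbar) := by
      intro i
      simp only [ContinuousLinearMap.neg_apply]
      rw [show xs i - xstar = (xs i - xbar) - (xstar - xbar) by abel, map_sub]
      ring
    rw [Finset.sum_congr rfl (fun i _ => h3 i), Finset.sum_sub_distrib]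
    rw [Nat.cast_succ] at h1
    linarith [hstarlb]
  -- arithmetic: the gap bound equals (N+1) * B
  set B : ℝ := L * R * Real.sqrt (2 * A / (μd * ((N:ℝ)+1))) with hB
  have hBpos : 0 < B := by
    rw [hB]
    have : (0:ℝ) < 2 * A / (μd * ((N:ℝ)+1)) := by positivity
    positivity
  have hgapB : ∑ i ∈ Finset.range (N+1), (g i) (xs i - xstar) ≤ ((N:ℝ)+1) * B := by
    have := aux_arith L R μd A ((N:ℝ)+1) hLpos hR hμd hApos hn1pos
    rw [hσ, hβ0, hγ] at hgap
    rw [hB]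
    linarith [hgap, this.le]
  -- convexity of f
  have hfconv : ConvexOn ℝ Q f := by
    refine ⟨hQconv, fun x hx y hy a b ha hb hab => ?_⟩
    have hb' : b = 1 - a := by linarith
    subst hb'
    have h := huc x hx y hy a ⟨ha, by linarith⟩
    have hnn : 0 ≤ (μf/2) * a * (1-a) * (a ^ (ρ-1) + (1-a) ^ (ρ-1)) * ‖x-y‖ ^ ρ := by
      have h1 : (0:ℝ) ≤ a ^ (ρ-1) := Real.rpow_nonneg ha _
      have h2 : (0:ℝ) ≤ (1-a) ^ (ρ-1) := Real.rpow_nonneg (by linarith) _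
      have h3 : (0:ℝ) ≤ ‖x-y‖ ^ ρ := Real.rpow_nonneg (norm_nonneg _) _
      have : (0:ℝ) ≤ 1 - a := by linarith
      positivity
    simp only [smul_eq_mul]
    linarith
  -- weights
  have hw : ∑ _i ∈ Finset.range (N+1), (1/((N:ℝ)+1)) = 1 := by
    rw [Finset.sum_const, Finset.card_range, nsmul_eq_mul]
    push_cast
    field_simp
  have hxNsum : xN = ∑ i ∈ Finset.range (N+1), (1/((N:ℝ)+1)) • xs i := by
    rw [hxN, Finset.smul_sum]
  -- Jensen for f
  have hJ : f xN ≤ ∑ i ∈ Finset.range (N+1), (1/((N:ℝ)+1)) * f (xs i) := by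
    rw [hxNsum]
    have := hfconv.map_sum_le (fun i _ => by positivity) hw (fun i _ => (hxsC i).1)
    simpa [smul_eq_mul] using this
  -- xN ∈ C
  have hxNC : xN ∈ C := by
    rw [hxNsum]
    exact hCconv.sum_mem (fun i _ => by positivity) hw (fun i _ => hxsC i)
  -- per-iterate strengthened subgradient inequality
  have hper : ∀ i, f (xs i) - f xstar + μf/2 * ‖xs i - xstar‖ ^ ρ ≤ (g i) (xs i - xstar) := by
    intro i
    have key : μf/2 * ‖xs i - xstar‖ ^ ρ ≤ f xstar + (g i) (xs i - xstar) - f (xs i) := by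
      refine aux_lim2 ρ hρ _ _ (fun α hα0 hα1 => ?_)
      have hcomb : α • xstar + (1-α) • xs i ∈ Q :=
        hQconv hxstarQ.1 (hxsC i).1 hα0.le (by linarith) (by ring)
      have h1 := huc xstar hxstarQ.1 (xs i) (hxsC i).1 α ⟨hα0.le, hα1.le⟩
      have h2 := hsub i _ hcomb
      have h3 : (α • xstar + (1-α) • xs i) - xs i = α • (xstar - xs i) := by module
      rw [h3, map_smul, smul_eq_mul] at h2
      have h4 : (g i) (xstar - xs i) = - (g i) (xs i - xstar) := by
        rw [← map_neg]; congr 1; abel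
      rw [h4] at h2
      rw [norm_sub_rev] at h1
      have key2 : α * ((1-α) * (α ^ (ρ-1) + (1-α) ^ (ρ-1)) * (μf/2 * ‖xs i - xstar‖ ^ ρ))
          ≤ α * (f xstar + (g i) (xs i - xstar) - f (xs i)) := by nlinarith [h1, h2]
      exact le_of_mul_le_mul_left key2 hα0
    linarith
  -- lower bound at xN
  have hlow : μf/2 * ‖xN - xstar‖ ^ ρ ≤ f xN - f xstar := by
    refine aux_lim2 ρ hρ _ _ (fun α hα0 hα1 => ?_)
    have hcombC : α • xN + (1-α) • xstar ∈ C :=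
      hCconv hxNC hxstarQ hα0.le (by linarith) (by ring)
    have h1 := huc xN hxNC.1 xstar hxstarQ.1 α ⟨hα0.le, hα1.le⟩
    have h2 := hxstar _ hcombC
    have key2 : α * ((1-α) * (α ^ (ρ-1) + (1-α) ^ (ρ-1)) * (μf/2 * ‖xN - xstar‖ ^ ρ))
        ≤ α * (f xN - f xstar) := by nlinarith [h1, h2]
    exact le_of_mul_le_mul_left key2 hα0
  -- Jensen for ‖·‖^ρ
  have hnormJ : ‖xN - xstar‖ ^ ρ
      ≤ ∑ i ∈ Finset.range (N+1), (1/((N:ℝ)+1)) * ‖xs i - xstar‖ ^ ρ := by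
    have hdiff : xN - xstar = ∑ i ∈ Finset.range (N+1), (1/((N:ℝ)+1)) • (xs i - xstar) := by
      rw [hxNsum]
      rw [show xstar = ∑ _i ∈ Finset.range (N+1), (1/((N:ℝ)+1)) • xstar by
        rw [← Finset.sum_smul, hw, one_smul]]
      rw [← Finset.sum_sub_distrib]
      congr 1
      funext i
      rw [← smul_sub]
      congr 1
      rw [← Finset.sum_smul, hw, one_smul]
    have h1 : ‖xN - xstar‖ ≤ ∑ i ∈ Finset.range (N+1), (1/((N:ℝ)+1)) * ‖xs i - xstar‖ := by
      rw [hdiff]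
      refine (norm_sum_le _ _).trans (le_of_eq ?_)
      refine Finset.sum_congr rfl (fun i _ => ?_)
      rw [norm_smul, Real.norm_eq_abs, abs_of_pos (by positivity)]
    have h2 := (convexOn_rpow (by linarith : (1:ℝ) ≤ ρ)).map_sum_le
      (t := Finset.range (N+1)) (w := fun _ => 1/((N:ℝ)+1))
      (p := fun i => ‖xs i - xstar‖)
      (fun i _ => by positivity) hw (fun i _ => Set.mem_Ici.2 (norm_nonneg _))
    simp only [smul_eq_mul] at h2
    have h3 : ‖xN - xstar‖ ^ ρ
        ≤ (∑ i ∈ Finset.range (N+1), (1/((N:ℝ)+1)) * ‖xs i - xstar‖) ^ ρ :=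
      Real.rpow_le_rpow (norm_nonneg _) h1 (by linarith)
    exact h3.trans h2
  -- assemble
  set S1 : ℝ := ∑ i ∈ Finset.range (N+1), f (xs i) with hS1
  set S2 : ℝ := ∑ i ∈ Finset.range (N+1), ‖xs i - xstar‖ ^ ρ with hS2
  have hS2nn : 0 ≤ S2 :=
    Finset.sum_nonneg (fun i _ => Real.rpow_nonneg (norm_nonneg _) _)
  have hA1 : S1 - ((N:ℝ)+1) * f xstar + μf/2 * S2 ≤ ((N:ℝ)+1) * B := by
    have := Finset.sum_le_sum (fun i (_ : i ∈ Finset.range (N+1)) => hper i)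
    rw [Finset.sum_add_distrib, Finset.sum_sub_distrib, Finset.sum_const,
      Finset.card_range, nsmul_eq_mul, ← Finset.mul_sum] at this
    push_cast at this
    nlinarith [hgapB, this, hS1, hS2]
  have hA2 : ((N:ℝ)+1) * f xN ≤ S1 := by
    have := mul_le_mul_of_nonneg_left hJ hn1pos.le
    rw [← Finset.mul_sum] at this
    calc ((N:ℝ)+1) * f xN ≤ ((N:ℝ)+1) * ((1/((N:ℝ)+1)) * S1) := this
      _ = S1 := by field_simp
  have hA3 : ((N:ℝ)+1) * ‖xN - xstar‖ ^ ρ ≤ S2 := by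
    have := mul_le_mul_of_nonneg_left hnormJ hn1pos.le
    rw [← Finset.mul_sum] at this
    calc ((N:ℝ)+1) * ‖xN - xstar‖ ^ ρ ≤ ((N:ℝ)+1) * ((1/((N:ℝ)+1)) * S2) := this
      _ = S2 := by field_simp
  constructor
  · -- first bound
    have h1 : ((N:ℝ)+1) * (f xN - f xstar) ≤ ((N:ℝ)+1) * B := by
      nlinarith [hA1, hA2, hS2nn, mul_nonneg (by positivity : (0:ℝ) ≤ μf/2) hS2nn]
    exact le_of_mul_le_mul_left h1 hn1pos
  · -- second bound
    have hBdiv : (L * R / μf) * Real.sqrt (2 * A / (μd * ((N:ℝ)+1))) = B / μf := by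
      rw [hB]; ring
    rw [hBdiv, le_div_iff₀ hμf]
    have h1 : ((N:ℝ)+1) * (‖xN - xstar‖ ^ ρ * μf) ≤ ((N:ℝ)+1) * B := by
      have hm3 := mul_le_mul_of_nonneg_left hA3 (by positivity : (0:ℝ) ≤ μf/2)
      have hm4 := mul_le_mul_of_nonneg_left hlow hn1pos.le
      nlinarith [hA1, hA2, hm3, hm4]
    exact le_of_mul_le_mul_left h1 hn1pos
end
end

section
/- (Theorem 3.1, multi-stage method.) Let f be uniformly convex on Q with parameters ρ ≥ 2 and μ(f) > 0, with subgradients bounded by L > 0 in dual norm; let x* minimize f over Q, f* = f(x*), and let y₀ ∈ Q with ‖y₀ − x*‖ ≤ R₀. Fix ε > 0, set τ = 2(ρ−1)/ρ and R_k = (2^{−k} R₀^ρ)^{1/ρ}. Let m ≥ 1 and nonnegative integers N₁,…,N_m satisfy N_k + 1 ≥ 2^{τk}·4L²A(d)/(μ(f)² μ(d) R₀^{2(ρ−1)}) ≥ N_k for each k, and 2^m ≥ μ(f)R₀^ρ/ε ≥ 2^{m−1}. Suppose y₁,…,y_m ∈ Q and reals δ₁,…,δ_m ≥ 0 (the gap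 values of the successive dual-averaging stages) satisfy, for each k = 1,…,m: δ_k ≤ L R_{k−1} √(2A(d)/(μ(d)(N_k+1))), and whenever ‖y_{k−1} − x*‖ ≤ R_{k−1}: f(y_k) − f(x*) ≤ δ_k and μ(f)‖y_k − x*‖^ρ ≤ δ_k. Then: (i) ‖y_k − x*‖^ρ ≤ 2^{−k} R₀^ρ for k = 0,…,m; (ii) δ_k ≤ μ(f) 2^{−k} R₀^ρ for k = 1,…,m; (iii) f(y_m) − f* ≤ ε; (iv) Σ_{k=1}^{m} N_k ≤ 4^{τ+1} L² A(d) / (μ(f)^{2/ρ} μ(d)) · ε^{−τ}. -/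
noncomputable section

open Real

/-- Theorem 3.1, multi-stage method. Given the per-stage
guarantees of Corollary 3.1 (hypotheses `hδbound`, `hstage`), the stage outputs
`y k` and gap values `δ k` of the multi-stage scheme satisfy the stated
localization, gap, accuracy and complexity bounds. -/
theorem multistage_uniformly_convex
    {E : Type*} [NormedAddCommGroup E] [NormedSpace ℝ E] [FiniteDimensional ℝ E]
    (Q : Set E) (hQc : IsClosed Q) (hQconv : Convex ℝ Q)
    (f : E → ℝ) (ρ μf : ℝ) (hρ : 2 ≤ ρ) (hμf : 0 < μf)
    (huc : ∀ x ∈ Q, ∀ y ∈ Q, ∀ α ∈ Set.Icc (0 : ℝ) 1,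
      f (α • x + (1 - α) • y) ≤
        α * f x + (1 - α) * f y -
          (μf / 2) * α * (1 - α) * (α ^ (ρ - 1) + (1 - α) ^ (ρ - 1)) * ‖x - y‖ ^ ρ)
    (L : ℝ) (hLpos : 0 < L)
    (hL : ∀ x ∈ Q, ∀ g : E →L[ℝ] ℝ, (∀ y ∈ Q, f x + g (y - x) ≤ f y) → ‖g‖ ≤ L)
    (A μd : ℝ) (hA : 0 < A) (hμd : 0 < μd)
    (xstar : E) (hxstarQ : xstar ∈ Q) (hxmin : ∀ y ∈ Q, f xstar ≤ f y)
    (y : ℕ → E) (hyQ : ∀ k, y k ∈ Q)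
    (R0 : ℝ) (hR0 : 0 < R0) (hy0 : ‖y 0 - xstar‖ ≤ R0)
    (ε : ℝ) (hε : 0 < ε)
    (τ : ℝ) (hτ : τ = 2 * (ρ - 1) / ρ)
    (Rk : ℕ → ℝ) (hRk : ∀ k, Rk k = ((2 : ℝ) ^ (-(k : ℝ)) * R0 ^ ρ) ^ (1 / ρ))
    (m : ℕ) (hm : 1 ≤ m) (N : ℕ → ℕ)
    (hN : ∀ k ∈ Finset.Icc 1 m,
      (N k : ℝ) + 1 ≥ (2 : ℝ) ^ (τ * k) * (4 * L ^ 2 * A) /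
          (μf ^ 2 * μd * R0 ^ (2 * (ρ - 1))) ∧
      (2 : ℝ) ^ (τ * k) * (4 * L ^ 2 * A) /
          (μf ^ 2 * μd * R0 ^ (2 * (ρ - 1))) ≥ (N k : ℝ))
    (hm2 : (2 : ℝ) ^ m ≥ μf * R0 ^ ρ / ε ∧ μf * R0 ^ ρ / ε ≥ (2 : ℝ) ^ (m - 1))
    (δ : ℕ → ℝ) (hδ0 : ∀ k ∈ Finset.Icc 1 m, 0 ≤ δ k)
    (hδbound : ∀ k ∈ Finset.Icc 1 m,
      δ k ≤ L * Rk (k - 1) * Real.sqrt (2 * A / (μd * ((N k : ℝ) + 1))))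
    (hstage : ∀ k ∈ Finset.Icc 1 m, ‖y (k - 1) - xstar‖ ≤ Rk (k - 1) →
      f (y k) - f xstar ≤ δ k ∧ μf * ‖y k - xstar‖ ^ ρ ≤ δ k) :
    (∀ k ≤ m, ‖y k - xstar‖ ^ ρ ≤ (2 : ℝ) ^ (-(k : ℝ)) * R0 ^ ρ) ∧
    (∀ k ∈ Finset.Icc 1 m, δ k ≤ μf * ((2 : ℝ) ^ (-(k : ℝ)) * R0 ^ ρ)) ∧
    f (y m) - f xstar ≤ ε ∧
    (∑ k ∈ Finset.Icc 1 m, (N k : ℝ)) ≤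
      (4 : ℝ) ^ (τ + 1) * L ^ 2 * A / (μf ^ (2 / ρ) * μd) * ε ^ (-τ) := by
  have hρ0 : (0:ℝ) < ρ := by linarith
  have hρne : ρ ≠ 0 := ne_of_gt hρ0
  have hR0ρ : (0:ℝ) < R0 ^ ρ := Real.rpow_pos_of_pos hR0 ρ
  have h2p : ∀ t : ℝ, (0:ℝ) < (2:ℝ) ^ t := fun t => Real.rpow_pos_of_pos two_pos t
  have hτ1 : 1 ≤ τ := by
    rw [hτ, le_div_iff₀ hρ0]; linarith
  -- closed form for Rk
  have hRkval : ∀ k : ℕ, Rk k = R0 * (2:ℝ) ^ (-(k:ℝ)/ρ) := by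
    intro k
    rw [hRk k, Real.mul_rpow (h2p _).le hR0ρ.le, ← Real.rpow_mul (by norm_num : (0:ℝ) ≤ 2),
      ← Real.rpow_mul hR0.le, mul_one_div_cancel hρne, Real.rpow_one,
      show (-(k:ℝ)) * (1/ρ) = -(k:ℝ)/ρ by ring, mul_comm]
  -- localization helper
  have hloc : ∀ j : ℕ, ‖y j - xstar‖ ^ ρ ≤ (2:ℝ) ^ (-(j:ℝ)) * R0 ^ ρ →
      ‖y j - xstar‖ ≤ Rk j := by
    intro j h
    have h1 : (‖y j - xstar‖ ^ ρ) ^ (1/ρ) ≤ ((2:ℝ) ^ (-(j:ℝ)) * R0 ^ ρ) ^ (1/ρ) :=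
      Real.rpow_le_rpow (Real.rpow_nonneg (norm_nonneg _) _) h (by positivity)
    rwa [← Real.rpow_mul (norm_nonneg _), mul_one_div_cancel hρne, Real.rpow_one,
      ← hRk j] at h1
  -- the gap bound (unconditional)
  have hgap : ∀ k ∈ Finset.Icc 1 m, δ k ≤ μf * ((2:ℝ) ^ (-(k:ℝ)) * R0 ^ ρ) := by
    intro k hk
    obtain ⟨hk1, hkm⟩ := Finset.mem_Icc.mp hk
    have hRk1 : Rk (k-1) = R0 * (2:ℝ) ^ (-((k:ℝ)-1)/ρ) := by
      rw [hRkval (k-1)]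
      congr 2
      rw [Nat.cast_sub hk1]
      norm_num
    have hRk1pos : 0 < Rk (k-1) := by rw [hRk1]; positivity
    have hNk := hN k hk
    have hNpos : (0:ℝ) < (N k : ℝ) + 1 := by positivity
    set T := μf * ((2:ℝ) ^ (-(k:ℝ)) * R0 ^ ρ) with hT
    have hTpos : 0 < T := by rw [hT]; positivity
    -- core algebraic inequality
    have hcore : 2 * A * (L * Rk (k-1)) ^ 2 ≤
        T ^ 2 * ((2:ℝ) ^ (τ * k) * (4 * L ^ 2 * A) / (μf ^ 2 * R0 ^ (2 * (ρ - 1)))) := by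
      have eqL : 2 * A * (L * Rk (k-1)) ^ 2 =
          (4 * A * L ^ 2 * R0 ^ 2) * (2:ℝ) ^ (-2*((k:ℝ)-1)/ρ - 1) := by
        rw [hRk1, Real.rpow_sub two_pos, Real.rpow_one,
          show (-2*((k:ℝ)-1)/ρ) = (-((k:ℝ)-1)/ρ) + (-((k:ℝ)-1)/ρ) by ring,
          Real.rpow_add two_pos]
        ring
      have eqR : T ^ 2 * ((2:ℝ) ^ (τ * k) * (4 * L ^ 2 * A) / (μf ^ 2 * R0 ^ (2 * (ρ - 1)))) =
          (4 * A * L ^ 2 * R0 ^ 2) * (2:ℝ) ^ (τ * k - 2 * (k:ℝ)) := by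
        have hR0sq : R0 ^ ρ * R0 ^ ρ = R0 ^ (2*(ρ-1)) * R0 ^ (2:ℕ) := by
          rw [← Real.rpow_natCast R0 2, ← Real.rpow_add hR0, ← Real.rpow_add hR0]
          congr 1
          push_cast; ring
        have h2sq : (2:ℝ) ^ (-(k:ℝ)) * (2:ℝ) ^ (-(k:ℝ)) * (2:ℝ) ^ (τ*k) =
            (2:ℝ) ^ (τ * k - 2 * (k:ℝ)) := by
          rw [← Real.rpow_add two_pos, ← Real.rpow_add two_pos]
          congr 1; ring
        rw [hT]
        have hden : μf ^ 2 * R0 ^ (2*(ρ-1)) ≠ 0 := by positivity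
        rw [mul_div_assoc', div_eq_iff hden]
        linear_combination (4*L^2*A*μf^2*(R0 ^ ρ * R0 ^ ρ)) * h2sq +
          (4*L^2*A*μf^2*(2:ℝ)^(τ*k - 2*(k:ℝ))) * hR0sq
      rw [eqL, eqR]
      have hexp : (-2*((k:ℝ)-1)/ρ - 1) ≤ τ * k - 2 * (k:ℝ) := by
        have e1 : (-2*((k:ℝ)-1)/ρ - 1) = (-2*((k:ℝ)-1) - ρ)/ρ := by field_simp
        have e2 : τ*(k:ℝ) - 2*(k:ℝ) = (-2*(k:ℝ))/ρ := by rw [hτ]; field_simp; ring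
        rw [e1, e2]
        gcongr
        linarith
      have := Real.rpow_le_rpow_of_exponent_le one_le_two hexp
      gcongr
    -- lower bound on μd * (N k + 1)
    have hlb : (2:ℝ) ^ (τ * k) * (4 * L ^ 2 * A) / (μf ^ 2 * R0 ^ (2 * (ρ - 1))) ≤
        μd * ((N k : ℝ) + 1) := by
      have h1 := hNk.1
      have h2 : μd * ((2:ℝ) ^ (τ * k) * (4 * L ^ 2 * A) /
          (μf ^ 2 * μd * R0 ^ (2 * (ρ - 1)))) =
          (2:ℝ) ^ (τ * k) * (4 * L ^ 2 * A) / (μf ^ 2 * R0 ^ (2 * (ρ - 1))) := by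
        field_simp
      calc (2:ℝ) ^ (τ * k) * (4 * L ^ 2 * A) / (μf ^ 2 * R0 ^ (2 * (ρ - 1)))
          = μd * ((2:ℝ) ^ (τ * k) * (4 * L ^ 2 * A) /
              (μf ^ 2 * μd * R0 ^ (2 * (ρ - 1)))) := h2.symm
        _ ≤ μd * ((N k : ℝ) + 1) := by gcongr
    have hsq : 2 * A / (μd * ((N k : ℝ) + 1)) ≤ (T / (L * Rk (k-1))) ^ 2 := by
      rw [div_pow, div_le_div_iff₀ (by positivity) (by positivity)]
      calc 2 * A * (L * Rk (k-1)) ^ 2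
          ≤ T ^ 2 * ((2:ℝ) ^ (τ * k) * (4 * L ^ 2 * A) /
              (μf ^ 2 * R0 ^ (2 * (ρ - 1)))) := hcore
        _ ≤ T ^ 2 * (μd * ((N k:ℝ)+1)) := by gcongr
    have hsqrt : Real.sqrt (2 * A / (μd * ((N k : ℝ) + 1))) ≤ T / (L * Rk (k-1)) := by
      calc Real.sqrt (2 * A / (μd * ((N k : ℝ) + 1)))
          ≤ Real.sqrt ((T / (L * Rk (k-1))) ^ 2) := Real.sqrt_le_sqrt hsq
        _ = T / (L * Rk (k-1)) := Real.sqrt_sq (by positivity)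
    calc δ k ≤ L * Rk (k - 1) * Real.sqrt (2 * A / (μd * ((N k : ℝ) + 1))) := hδbound k hk
      _ ≤ L * Rk (k - 1) * (T / (L * Rk (k-1))) := by gcongr
      _ = T := by field_simp
  -- part (i): localization by induction
  have hi : ∀ k, k ≤ m → ‖y k - xstar‖ ^ ρ ≤ (2:ℝ) ^ (-(k:ℝ)) * R0 ^ ρ := by
    intro k
    induction k with
    | zero =>
      intro _
      simp only [Nat.cast_zero, neg_zero, Real.rpow_zero, one_mul]
      exact Real.rpow_le_rpow (norm_nonneg _) hy0 (by positivity)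
    | succ n ih =>
      intro h
      have hn : n ≤ m := Nat.le_of_succ_le h
      have hmem : n + 1 ∈ Finset.Icc 1 m := Finset.mem_Icc.mpr ⟨Nat.succ_le_succ (Nat.zero_le n), h⟩
      have hloc' : ‖y (n + 1 - 1) - xstar‖ ≤ Rk (n + 1 - 1) := by
        simpa using hloc n (ih hn)
      have hst := (hstage (n+1) hmem hloc').2
      have hg := hgap (n+1) hmem
      have : μf * ‖y (n+1) - xstar‖ ^ ρ ≤ μf * ((2:ℝ) ^ (-((n:ℝ)+1)) * R0 ^ ρ) := by
        calc μf * ‖y (n+1) - xstar‖ ^ ρ ≤ δ (n+1) := hst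
          _ ≤ μf * ((2:ℝ) ^ (-(((n+1:ℕ)):ℝ)) * R0 ^ ρ) := hg
          _ = μf * ((2:ℝ) ^ (-((n:ℝ)+1)) * R0 ^ ρ) := by push_cast; ring_nf
      have := le_of_mul_le_mul_left this hμf
      convert this using 3
      push_cast
      all_goals norm_num
      all_goals rfl
  refine ⟨hi, hgap, ?_, ?_⟩
  -- part (iii): accuracy
  · have hmem : m ∈ Finset.Icc 1 m := Finset.mem_Icc.mpr ⟨hm, le_refl m⟩
    have hloc' : ‖y (m - 1) - xstar‖ ≤ Rk (m - 1) :=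
      hloc (m-1) (hi (m-1) (Nat.sub_le m 1))
    have hst := (hstage m hmem hloc').1
    have hg := hgap m hmem
    have hfin : μf * ((2:ℝ) ^ (-(m:ℝ)) * R0 ^ ρ) ≤ ε := by
      have h1 : μf * R0 ^ ρ ≤ ε * (2:ℝ) ^ m := by
        have := hm2.1
        rw [ge_iff_le, div_le_iff₀ hε] at this
        linarith
      have h2 : (2:ℝ) ^ (-(m:ℝ)) = ((2:ℝ) ^ m)⁻¹ := by
        rw [Real.rpow_neg (by norm_num), Real.rpow_natCast]
      rw [h2]
      rw [mul_comm ((2:ℝ)^m)⁻¹ (R0 ^ ρ), ← mul_assoc, ← div_eq_mul_inv,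
        div_le_iff₀ (by positivity)]
      linarith
    linarith
  -- part (iv): complexity
  · have hC : (0:ℝ) < 4 * L ^ 2 * A / (μf ^ 2 * μd * R0 ^ (2 * (ρ - 1))) := by positivity
    set C := 4 * L ^ 2 * A / (μf ^ 2 * μd * R0 ^ (2 * (ρ - 1))) with hCdef
    have h2τ : (2:ℝ) ≤ (2:ℝ) ^ τ := by
      calc (2:ℝ) = (2:ℝ) ^ (1:ℝ) := (Real.rpow_one 2).symm
        _ ≤ (2:ℝ) ^ τ := Real.rpow_le_rpow_of_exponent_le one_le_two hτ1
    have hgeo : ∀ n : ℕ, (∑ k ∈ Finset.Icc 1 n, (2:ℝ) ^ (τ * k)) ≤ 2 * (2:ℝ) ^ (τ * n) := by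
      intro n
      induction n with
      | zero => simp
      | succ n ih =>
        rw [Finset.sum_Icc_succ_top (by omega : 1 ≤ n + 1)]
        have hstep : 2 * (2:ℝ) ^ (τ * n) ≤ (2:ℝ) ^ (τ * ((n:ℝ)+1)) := by
          rw [show τ * ((n:ℝ)+1) = τ * n + τ by ring, Real.rpow_add two_pos]
          have := mul_le_mul_of_nonneg_left h2τ (h2p (τ * n)).le
          linarith
        push_cast
        push_cast at ih
        linarith [ih]
    have hsum1 : (∑ k ∈ Finset.Icc 1 m, (N k : ℝ)) ≤
        (∑ k ∈ Finset.Icc 1 m, (2:ℝ) ^ (τ * k)) * C := by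
      rw [Finset.sum_mul]
      apply Finset.sum_le_sum
      intro k hk
      have := (hN k hk).2
      calc (N k : ℝ) ≤ (2:ℝ) ^ (τ * k) * (4 * L ^ 2 * A) /
            (μf ^ 2 * μd * R0 ^ (2 * (ρ - 1))) := this
        _ = (2:ℝ) ^ (τ * k) * C := by rw [hCdef]; ring
    have hsum2 : (∑ k ∈ Finset.Icc 1 m, (N k : ℝ)) ≤ 2 * (2:ℝ) ^ (τ * m) * C := by
      calc (∑ k ∈ Finset.Icc 1 m, (N k : ℝ)) ≤
          (∑ k ∈ Finset.Icc 1 m, (2:ℝ) ^ (τ * k)) * C := hsum1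
        _ ≤ 2 * (2:ℝ) ^ (τ * m) * C := by gcongr; exact hgeo m
    -- bound 2^(τ m)
    have hm' : (2:ℝ) ^ (m:ℝ) ≤ 2 * (μf * R0 ^ ρ / ε) := by
      have h1 := hm2.2
      have h2 : (2:ℝ) ^ m = 2 * (2:ℝ) ^ (m - 1) := by
        conv_lhs => rw [show m = (m - 1) + 1 from (Nat.succ_pred_eq_of_pos hm).symm]
        rw [pow_succ]
        ring
      rw [Real.rpow_natCast, h2]
      linarith
    have h2τm : (2:ℝ) ^ (τ * m) ≤ (2 * (μf * R0 ^ ρ / ε)) ^ τ := by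
      rw [mul_comm τ (m:ℝ), Real.rpow_mul (by norm_num : (0:ℝ) ≤ 2)]
      exact Real.rpow_le_rpow (h2p _).le hm' (by linarith)
    -- expand the rpow of the product
    have hexpand : (2 * (μf * R0 ^ ρ / ε)) ^ τ =
        (2:ℝ) ^ τ * (μf ^ τ * (R0 ^ (2*(ρ-1)) * ε ^ (-τ))) := by
      rw [Real.mul_rpow (by norm_num) (by positivity),
        Real.div_rpow (by positivity) hε.le,
        Real.mul_rpow hμf.le hR0ρ.le]
      have hRρτ : (R0 ^ ρ) ^ τ = R0 ^ (2*(ρ-1)) := by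
        rw [← Real.rpow_mul hR0.le]
        congr 1
        rw [hτ]; field_simp
      have hεinv : ε ^ (-τ) = (ε ^ τ)⁻¹ := Real.rpow_neg hε.le τ
      rw [hRρτ, hεinv]
      ring
    have hb : (2:ℝ) ^ (τ * m) ≤ (2:ℝ) ^ τ * (μf ^ τ * (R0 ^ (2*(ρ-1)) * ε ^ (-τ))) :=
      hexpand ▸ h2τm
    have hμf2 : μf ^ τ * μf ^ ((2:ℝ)/ρ) = μf ^ 2 := by
      rw [← Real.rpow_add hμf, show τ + (2:ℝ)/ρ = ((2:ℕ):ℝ) by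
        rw [hτ]; field_simp; ring]
      exact Real.rpow_natCast μf 2
    have hμfτ : μf ^ τ / μf ^ 2 = (μf ^ ((2:ℝ)/ρ))⁻¹ := by
      rw [← hμf2]
      have h1 : μf ^ τ ≠ 0 := by positivity
      field_simp
    have h48 : 2 * (2:ℝ) ^ τ * 4 ≤ (4:ℝ) ^ (τ + 1) := by
      have e1 : 2 * (2:ℝ) ^ τ * 4 = (2:ℝ) ^ (τ + 3) := by
        rw [show τ + 3 = τ + (3:ℕ) by norm_num, Real.rpow_add two_pos,
          Real.rpow_natCast]
        norm_num
        ring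
      have e2 : (4:ℝ) ^ (τ + 1) = (2:ℝ) ^ (2 * (τ + 1)) := by
        rw [show (4:ℝ) = (2:ℝ) ^ (2:ℝ) by
          rw [show (2:ℝ) = ((2:ℕ):ℝ) by norm_num, Real.rpow_natCast]; norm_num,
          ← Real.rpow_mul (by norm_num : (0:ℝ) ≤ 2)]
      rw [e1, e2]
      exact Real.rpow_le_rpow_of_exponent_le one_le_two (by linarith)
    have hμfne : μf ≠ 0 := ne_of_gt hμf
    have hμdne : μd ≠ 0 := ne_of_gt hμd
    have hR0e : R0 ^ (2*(ρ-1)) ≠ 0 := by positivity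
    calc (∑ k ∈ Finset.Icc 1 m, (N k : ℝ)) ≤ 2 * (2:ℝ) ^ (τ * m) * C := hsum2
      _ ≤ 2 * ((2:ℝ) ^ τ * (μf ^ τ * (R0 ^ (2*(ρ-1)) * ε ^ (-τ)))) * C := by
          gcongr
      _ = (2 * (2:ℝ) ^ τ * 4) * (L ^ 2 * A / μd) * ε ^ (-τ) * (μf ^ τ / μf ^ 2) := by
          rw [hCdef]
          field_simp
      _ ≤ (4:ℝ) ^ (τ + 1) * (L ^ 2 * A / μd) * ε ^ (-τ) * (μf ^ τ / μf ^ 2) := by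
          gcongr
      _ = (4:ℝ) ^ (τ + 1) * L ^ 2 * A / (μf ^ ((2:ℝ)/ρ) * μd) * ε ^ (-τ) := by
          rw [hμfτ]
          field_simp
end
end

section
/- (Corollary 3.2 of the paper; fixed-budget multi-stage method.) Let f be uniformly convex on Q with parameters ρ ≥ 2 and μ(f) > 0, with subgradients bounded by L > 0 in dual norm; let x* minimize f over Q, f* = f(x*), y₀ ∈ Q with ‖y₀ − x*‖ ≤ R₀, τ = 2(ρ−1)/ρ, R_k = (2^{−k}R₀^ρ)^{1/ρ}. Assume the budget N satisfies N ≥ 2^τ(2^τ+1)·4L²A(d)/(μ(f)²μ(d)R₀^{2(ρ−1)}). For j ≥ 1 let N_j be nonnegative integers with N_j + 1 ≥ 2^{τj}·4L²A(d)/(μ(f)²μ(d)R₀^{2(ρ−1)}) ≥ N_j, and set m(N) = max{k : Σ_{j=1}^{k} N_j ≤ N}. Suppose y₁,…,y_{m(N)} ∈ Q and δ₁,…,δ_{m(N)} ≥ 0 satisfy for each k: δ_k ≤ L R_{k−1}√(2A(d)/(μ(d)(N_k+1))), and whenever ‖y_{k−1} − x*‖ ≤ R_{k−1}: f(y_k)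 − f(x*) ≤ δ_k and μ(f)‖y_k − x*‖^ρ ≤ δ_k. Then f(y_{m(N)}) − f* ≤ 2 (8 L² A(d)/(μ(f)^{2/ρ} μ(d) N))^{1/τ}. -/
noncomputable section

open Real

private lemma two_rpow_sq (e : ℝ) : ((2:ℝ) ^ e) ^ 2 = (2:ℝ) ^ (2 * e) := by
  rw [← Real.rpow_natCast ((2:ℝ) ^ e) 2, ← Real.rpow_mul (by norm_num : (0:ℝ) ≤ 2)]
  norm_num [mul_comm]

/-- Corollary 3.2, fixed-budget multi-stage method. -/
theorem multistage_fixed_budget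
    {E : Type*} [NormedAddCommGroup E] [NormedSpace ℝ E] [FiniteDimensional ℝ E]
    (Q : Set E) (hQc : IsClosed Q) (hQconv : Convex ℝ Q)
    (f : E → ℝ) (ρ μf : ℝ) (hρ : 2 ≤ ρ) (hμf : 0 < μf)
    (huc : ∀ x ∈ Q, ∀ y ∈ Q, ∀ α ∈ Set.Icc (0 : ℝ) 1,
      f (α • x + (1 - α) • y) ≤
        α * f x + (1 - α) * f y -
          (μf / 2) * α * (1 - α) * (α ^ (ρ - 1) + (1 - α) ^ (ρ - 1)) * ‖x - y‖ ^ ρ)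
    (L : ℝ) (hLpos : 0 < L)
    (hL : ∀ x ∈ Q, ∀ g : E →L[ℝ] ℝ, (∀ y ∈ Q, f x + g (y - x) ≤ f y) → ‖g‖ ≤ L)
    (A μd : ℝ) (hA : 0 < A) (hμd : 0 < μd)
    (xstar : E) (hxstarQ : xstar ∈ Q) (hxmin : ∀ y ∈ Q, f xstar ≤ f y)
    (y : ℕ → E) (hyQ : ∀ k, y k ∈ Q)
    (R0 : ℝ) (hR0 : 0 < R0) (hy0 : ‖y 0 - xstar‖ ≤ R0)
    (τ : ℝ) (hτ : τ = 2 * (ρ - 1) / ρ)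
    (Rk : ℕ → ℝ) (hRk : ∀ k, Rk k = ((2 : ℝ) ^ (-(k : ℝ)) * R0 ^ ρ) ^ (1 / ρ))
    (N : ℕ)
    (hbudget : (N : ℝ) ≥ (2 : ℝ) ^ τ * ((2 : ℝ) ^ τ + 1) * (4 * L ^ 2 * A) /
      (μf ^ 2 * μd * R0 ^ (2 * (ρ - 1))))
    (Nj : ℕ → ℕ)
    (hNj : ∀ j : ℕ, 1 ≤ j →
      (Nj j : ℝ) + 1 ≥ (2 : ℝ) ^ (τ * j) * (4 * L ^ 2 * A) /
          (μf ^ 2 * μd * R0 ^ (2 * (ρ - 1))) ∧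
      (2 : ℝ) ^ (τ * j) * (4 * L ^ 2 * A) /
          (μf ^ 2 * μd * R0 ^ (2 * (ρ - 1))) ≥ (Nj j : ℝ))
    (mN : ℕ)
    (hmN : (∑ j ∈ Finset.Icc 1 mN, Nj j) ≤ N ∧
      ∀ k : ℕ, (∑ j ∈ Finset.Icc 1 k, Nj j) ≤ N → k ≤ mN)
    (δ : ℕ → ℝ) (hδ0 : ∀ k ∈ Finset.Icc 1 mN, 0 ≤ δ k)
    (hδbound : ∀ k ∈ Finset.Icc 1 mN,
      δ k ≤ L * Rk (k - 1) * Real.sqrt (2 * A / (μd * ((Nj k : ℝ) + 1))))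
    (hstage : ∀ k ∈ Finset.Icc 1 mN, ‖y (k - 1) - xstar‖ ≤ Rk (k - 1) →
      f (y k) - f xstar ≤ δ k ∧ μf * ‖y k - xstar‖ ^ ρ ≤ δ k) :
    f (y mN) - f xstar ≤
      2 * (8 * L ^ 2 * A / (μf ^ (2 / ρ) * μd * N)) ^ (1 / τ) := by
  obtain ⟨hmle, hmmax⟩ := hmN
  have hρ0 : (0:ℝ) < ρ := by linarith
  have hτ1 : 1 ≤ τ := by
    rw [hτ, le_div_iff₀ hρ0]; linarith
  have hτ0 : (0:ℝ) < τ := by linarith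
  have hRρpos : (0:ℝ) < R0 ^ (2 * (ρ - 1)) := Real.rpow_pos_of_pos hR0 _
  set D : ℝ := μf ^ 2 * μd * R0 ^ (2 * (ρ - 1)) with hD
  have hDpos : 0 < D := by rw [hD]; positivity
  set C : ℝ := 4 * L ^ 2 * A / D with hC
  have hCpos : 0 < C := div_pos (by positivity) hDpos
  -- formula for Rk
  have hRkval : ∀ k : ℕ, Rk k = (2:ℝ) ^ (-(k:ℝ)/ρ) * R0 := by
    intro k
    rw [hRk k, Real.mul_rpow (by positivity) (by positivity),
      ← Real.rpow_mul (by norm_num : (0:ℝ) ≤ 2), ← Real.rpow_mul hR0.le,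
      mul_one_div, mul_one_div, div_self hρ0.ne', Real.rpow_one]
  have hRkpos : ∀ k : ℕ, 0 < Rk k := by
    intro k; rw [hRkval k]; positivity
  have hRkρ : ∀ k : ℕ, Rk k ^ ρ = (2:ℝ) ^ (-(k:ℝ)) * R0 ^ ρ := by
    intro k
    rw [hRk k, ← Real.rpow_mul (by positivity), one_div, inv_mul_cancel₀ hρ0.ne',
      Real.rpow_one]
  -- Sublemma A : the per-stage bound on δ
  have hdelta : ∀ k ∈ Finset.Icc 1 mN, δ k ≤ μf * ((2:ℝ) ^ (-(k:ℝ)) * R0 ^ ρ) := by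
    intro k hk
    have hk1 : 1 ≤ k := (Finset.mem_Icc.mp hk).1
    have hNjk : (2:ℝ) ^ (τ * k) * C ≤ (Nj k : ℝ) + 1 := by
      have h := (hNj k hk1).1
      rw [ge_iff_le, mul_div_assoc] at h
      exact h
    have h2τkC : (0:ℝ) < 2 ^ (τ * (k:ℝ)) * C :=
      mul_pos (Real.rpow_pos_of_pos two_pos _) hCpos
    have hNk1pos : (0:ℝ) < (Nj k : ℝ) + 1 := by positivity
    refine (hδbound k hk).trans ?_
    have hB : (0:ℝ) < μf * ((2:ℝ) ^ (-(k:ℝ)) * R0 ^ ρ) := by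
      have := Real.rpow_pos_of_pos hR0 ρ
      positivity
    have hLHS0 : 0 ≤ L * Rk (k-1) * Real.sqrt (2 * A / (μd * ((Nj k : ℝ) + 1))) := by
      have := (hRkpos (k-1)).le
      positivity
    rw [← pow_le_pow_iff_left₀ hLHS0 hB.le (two_ne_zero)]
    rw [mul_pow, mul_pow, Real.sq_sqrt (by positivity)]
    calc L ^ 2 * Rk (k-1) ^ 2 * (2 * A / (μd * ((Nj k : ℝ) + 1)))
        ≤ L ^ 2 * Rk (k-1) ^ 2 * (2 * A / (μd * ((2:ℝ) ^ (τ * k) * C))) := by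
          gcongr
          all_goals first
            | exact (hRkpos _).le
            | exact mul_pos hμd h2τkC
            | exact hNjk
            | positivity
      _ ≤ (μf * ((2:ℝ) ^ (-(k:ℝ)) * R0 ^ ρ)) ^ 2 := ?_
    -- now pure algebra
    have hkcast : ((k - 1 : ℕ) : ℝ) = (k:ℝ) - 1 := by
      push_cast [hk1]; ring
    rw [hRkval (k-1), hkcast]
    have eR0 : (R0 ^ ρ) ^ 2 = R0 ^ 2 * R0 ^ (2*(ρ-1)) := by
      rw [← Real.rpow_natCast (R0 ^ ρ) 2, ← Real.rpow_mul hR0.le,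
        ← Real.rpow_natCast R0 2, ← Real.rpow_add hR0]
      congr 1
      push_cast; ring
    have eLHS : L ^ 2 * ((2:ℝ) ^ (-((k:ℝ)-1)/ρ) * R0) ^ 2 *
        (2 * A / (μd * ((2:ℝ) ^ (τ * (k:ℝ)) * C))) =
        (μf ^ 2 * (R0 ^ 2 * R0 ^ (2*(ρ-1)))) *
          (((2:ℝ) ^ (-((k:ℝ)-1)/ρ)) ^ 2 / (2 * (2:ℝ) ^ (τ * (k:ℝ)))) := by
      rw [hC, hD]
      have h1 : ((2:ℝ) ^ (τ * (k:ℝ))) ≠ 0 := (Real.rpow_pos_of_pos two_pos _).ne'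
      field_simp
      ring
    rw [eLHS, mul_pow, mul_pow, eR0]
    rw [show μf ^ 2 * (((2:ℝ) ^ (-(k:ℝ))) ^ 2 * (R0 ^ 2 * R0 ^ (2*(ρ-1)))) =
      (μf ^ 2 * (R0 ^ 2 * R0 ^ (2*(ρ-1)))) * ((2:ℝ) ^ (-(k:ℝ))) ^ 2 by ring]
    apply mul_le_mul_of_nonneg_left _ (by positivity)
    rw [two_rpow_sq, two_rpow_sq]
    have hcomb : (2:ℝ) ^ (2 * (-((k:ℝ)-1)/ρ) - (1 + τ * (k:ℝ))) =
        (2:ℝ) ^ (2 * (-((k:ℝ)-1)/ρ)) / (2 * (2:ℝ) ^ (τ * (k:ℝ))) := by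
      rw [Real.rpow_sub two_pos, Real.rpow_add two_pos, Real.rpow_one]
    rw [← hcomb]
    apply (Real.rpow_le_rpow_left_iff one_lt_two).mpr
    -- exponent inequality
    have h2 : τ * (k:ℝ) = 2*(k:ℝ) - 2*(k:ℝ)/ρ := by
      rw [hτ]; field_simp
    have h4 : 2/ρ ≤ 1 := by rw [div_le_one hρ0]; linarith
    have h5 : 2 * (-((k:ℝ)-1)/ρ) = 2/ρ - 2*(k:ℝ)/ρ := by ring
    rw [h2, h5]
    linarith
  -- Sublemma B : induction ‖y k - x*‖ ≤ Rk k
  have hind : ∀ k, k ≤ mN → ‖y k - xstar‖ ≤ Rk k := by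
    intro k
    induction k with
    | zero =>
      intro _
      rw [hRkval 0]
      simpa using hy0
    | succ n ih =>
      intro hle
      have hmem : n + 1 ∈ Finset.Icc 1 mN :=
        Finset.mem_Icc.mpr ⟨Nat.succ_le_succ (Nat.zero_le n), hle⟩
      have hprev : ‖y ((n+1) - 1) - xstar‖ ≤ Rk ((n+1) - 1) := by
        simpa using ih (Nat.le_of_succ_le hle)
      have hst := (hstage _ hmem hprev).2
      have hδn := hdelta _ hmem
      have h1 : ‖y (n+1) - xstar‖ ^ ρ ≤ Rk (n+1) ^ ρ := by
        rw [hRkρ]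
        have h := hst.trans hδn
        exact le_of_mul_le_mul_left h hμf
      exact (Real.rpow_le_rpow_iff (norm_nonneg _) (hRkpos _).le hρ0).mp h1
  -- geometric sum bound
  have hgeo : ∀ k : ℕ, (∑ j ∈ Finset.Icc 1 k, (2:ℝ) ^ (τ * j)) ≤ 2 * 2 ^ (τ * k) := by
    intro k
    induction k with
    | zero =>
      simp only [Finset.Icc_eq_empty_of_lt (by norm_num : (0:ℕ) < 1), Finset.sum_empty]
      positivity
    | succ n ih =>
      rw [Finset.sum_Icc_succ_top (Nat.succ_le_succ (Nat.zero_le n))]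
      have h2τ : (2:ℝ) ≤ 2 ^ τ := by
        calc (2:ℝ) = 2 ^ (1:ℝ) := (Real.rpow_one 2).symm
          _ ≤ 2 ^ τ := Real.rpow_le_rpow_of_exponent_le one_le_two hτ1
      have hstep : 2 * (2:ℝ) ^ (τ * (n:ℝ)) ≤ 2 ^ (τ * ((n:ℝ)+1)) := by
        rw [show τ * ((n:ℝ)+1) = τ * (n:ℝ) + τ by ring, Real.rpow_add two_pos]
        nlinarith [Real.rpow_pos_of_pos two_pos (τ * (n:ℝ))]
      push_cast
      push_cast at ih
      linarith
  -- cast bound on Nj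
  have hNj_le : ∀ j : ℕ, 1 ≤ j → (Nj j : ℝ) ≤ 2 ^ (τ * j) * C := by
    intro j hj
    have h := (hNj j hj).2
    rw [ge_iff_le, mul_div_assoc] at h
    exact h
  -- N < sum of first mN+1 stages
  have hsum_lt : (N:ℝ) < ∑ j ∈ Finset.Icc 1 (mN+1), (Nj j : ℝ) := by
    have h1 : ¬ ((∑ j ∈ Finset.Icc 1 (mN+1), Nj j) ≤ N) := by
      intro h
      exact (Nat.not_succ_le_self mN) (hmmax _ h)
    push_neg at h1
    exact_mod_cast h1
  have hNlt : (N:ℝ) < 2 * C * 2 ^ (τ * ((mN:ℝ)+1)) := by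
    calc (N:ℝ) < ∑ j ∈ Finset.Icc 1 (mN+1), (Nj j : ℝ) := hsum_lt
      _ ≤ ∑ j ∈ Finset.Icc 1 (mN+1), (2:ℝ) ^ (τ * j) * C :=
          Finset.sum_le_sum (fun j hj => hNj_le j (Finset.mem_Icc.mp hj).1)
      _ = (∑ j ∈ Finset.Icc 1 (mN+1), (2:ℝ) ^ (τ * j)) * C := by
          rw [Finset.sum_mul]
      _ ≤ (2 * 2 ^ (τ * ((mN:ℝ)+1))) * C := by
          have := hgeo (mN+1)
          push_cast at this
          exact mul_le_mul_of_nonneg_right this hCpos.le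
      _ = 2 * C * 2 ^ (τ * ((mN:ℝ)+1)) := by ring
  -- mN ≥ 1
  have hbudget' : 2 ^ τ * ((2:ℝ) ^ τ + 1) * C ≤ (N:ℝ) := by
    have h := hbudget
    rw [ge_iff_le, mul_div_assoc] at h
    exact h
  have hm1 : 1 ≤ mN := by
    apply hmmax 1
    have h1 : (Nj 1 : ℝ) ≤ 2 ^ (τ * (1:ℕ)) * C := hNj_le 1 le_rfl
    have h1' : (Nj 1 : ℝ) ≤ 2 ^ τ * C := by
      simpa using h1
    have h2 : (2:ℝ) ^ τ * C ≤ (N:ℝ) := by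
      nlinarith [Real.rpow_pos_of_pos two_pos τ, hCpos,
        mul_pos (mul_pos (Real.rpow_pos_of_pos two_pos τ) (Real.rpow_pos_of_pos two_pos τ)) hCpos]
    have : (Nj 1 : ℝ) ≤ (N:ℝ) := h1'.trans h2
    have hn : Nj 1 ≤ N := by exact_mod_cast this
    simpa using hn
  have hNRpos : (0:ℝ) < (N:ℝ) := by
    have hp : (0:ℝ) < 2 ^ τ * ((2:ℝ) ^ τ + 1) * C := by
      have := Real.rpow_pos_of_pos two_pos τ
      positivity
    linarith
  -- final chain
  have hmem : mN ∈ Finset.Icc 1 mN := Finset.mem_Icc.mpr ⟨hm1, le_rfl⟩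
  have hprev : ‖y (mN - 1) - xstar‖ ≤ Rk (mN - 1) := hind (mN - 1) (Nat.sub_le mN 1)
  have hf := (hstage mN hmem hprev).1
  have hδm := hdelta mN hmem
  refine hf.trans (hδm.trans ?_)
  -- remaining: μf * (2^(-mN) * R0^ρ) ≤ 2 * b^(1/τ)
  set b : ℝ := 8 * L ^ 2 * A / (μf ^ (2/ρ) * μd * N) with hb
  have hbpos : 0 < b := by
    rw [hb]
    have := Real.rpow_pos_of_pos hμf (2/ρ)
    positivity
  set a : ℝ := μf * ((2:ℝ) ^ (-(mN:ℝ)) * R0 ^ ρ) with ha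
  have hapos : 0 < a := by
    rw [ha]
    have := Real.rpow_pos_of_pos hR0 ρ
    positivity
  have hRHSpos : 0 < 2 * b ^ (1/τ) := by positivity
  suffices h : a ^ τ ≤ (2 * b ^ (1/τ)) ^ τ by
    have h2 := Real.rpow_le_rpow (Real.rpow_nonneg hapos.le τ) h (by positivity : (0:ℝ) ≤ 1/τ)
    rwa [← Real.rpow_mul hapos.le, ← Real.rpow_mul hRHSpos.le, mul_one_div,
      div_self hτ0.ne', Real.rpow_one, Real.rpow_one] at h2
  have hRHSeq : (2 * b ^ (1/τ)) ^ τ = 2 ^ τ * b := by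
    rw [Real.mul_rpow (by norm_num) (Real.rpow_nonneg hbpos.le _),
      ← Real.rpow_mul hbpos.le, one_div, inv_mul_cancel₀ hτ0.ne', Real.rpow_one]
  have haeq : a ^ τ = μf ^ τ * ((2:ℝ) ^ (-(mN:ℝ) * τ) * R0 ^ (2*(ρ-1))) := by
    rw [ha, Real.mul_rpow hμf.le (by positivity),
      Real.mul_rpow (by positivity) (by positivity),
      ← Real.rpow_mul (by norm_num : (0:ℝ) ≤ 2), ← Real.rpow_mul hR0.le]
    congr 2
    rw [hτ]; field_simp
    all_goals ring
  rw [hRHSeq, haeq]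
  -- reduce to the budget inequality
  have hμfid : μf ^ τ * μf ^ (2/ρ) = μf ^ 2 := by
    rw [← Real.rpow_add hμf, show τ + 2/ρ = ((2:ℕ):ℝ) by
      (rw [hτ]; push_cast; field_simp; all_goals ring), Real.rpow_natCast]
  have hbpos' : (0:ℝ) < μf ^ (2/ρ) * μd * N := by
    have := Real.rpow_pos_of_pos hμf (2/ρ)
    positivity
  rw [hb, mul_div_assoc', le_div_iff₀ hbpos']
  have hkey : μf ^ τ * ((2:ℝ) ^ (-(mN:ℝ) * τ) * R0 ^ (2*(ρ-1))) * (μf ^ (2/ρ) * μd * N) =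
      (μf ^ 2 * μd * R0 ^ (2*(ρ-1)) * (2:ℝ) ^ (-(mN:ℝ) * τ)) * N := by
    rw [← hμfid]; ring
  rw [hkey]
  have hfinal : (μf ^ 2 * μd * R0 ^ (2*(ρ-1)) * (2:ℝ) ^ (-(mN:ℝ) * τ)) *
      (2 * C * 2 ^ (τ * ((mN:ℝ)+1))) = 2 ^ τ * (8 * L ^ 2 * A) := by
    have h2 : (2:ℝ) ^ (-(mN:ℝ) * τ) * 2 ^ (τ * ((mN:ℝ)+1)) = 2 ^ τ := by
      rw [← Real.rpow_add two_pos]; congr 1; ring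
    calc (μf ^ 2 * μd * R0 ^ (2*(ρ-1)) * (2:ℝ) ^ (-(mN:ℝ) * τ)) *
        (2 * C * 2 ^ (τ * ((mN:ℝ)+1)))
        = ((2:ℝ) ^ (-(mN:ℝ) * τ) * 2 ^ (τ * ((mN:ℝ)+1))) * (8 * L ^ 2 * A) *
            ((μf ^ 2 * μd * R0 ^ (2*(ρ-1))) / D) := by rw [hC]; ring
      _ = 2 ^ τ * (8 * L ^ 2 * A) := by
          rw [h2, hD, div_self hDpos.ne']; ring
  have hposfac : (0:ℝ) < μf ^ 2 * μd * R0 ^ (2*(ρ-1)) * (2:ℝ) ^ (-(mN:ℝ) * τ) := by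
    have := Real.rpow_pos_of_pos two_pos (-(mN:ℝ) * τ)
    positivity
  calc μf ^ 2 * μd * R0 ^ (2*(ρ-1)) * (2:ℝ) ^ (-(mN:ℝ) * τ) * N
      ≤ (μf ^ 2 * μd * R0 ^ (2*(ρ-1)) * (2:ℝ) ^ (-(mN:ℝ) * τ)) *
          (2 * C * 2 ^ (τ * ((mN:ℝ)+1))) :=
        mul_le_mul_of_nonneg_left hNlt.le hposfac.le
    _ = 2 ^ τ * (8 * L ^ 2 * A) := hfinal
end
end

section
/- (Corollary for prox-functions of quadratic growth.) Let the prox-function d additionally satisfy d(x) ≤ C(d)‖x‖² on the unit ball. Let f be uniformly convex on Q with parameters ρ ≥ 2 and μ(f) > 0, with subgradients bounded by L > 0 in dual norm, let x̄ ∈ Q, 0 < r ≤ R, let x* be a minimizer of f over Q_R(x̄), and assume ‖x̄ − x*‖ ≤ r. Run dual averaging over Q_R(x̄) with λ_i = 1 and β_i = γ√(N+1), where γ = R² L/(r √(2 C(d) μ(d))), with output x_N(x̄,R) = (1/(N+1)) Σ_{i=0}^{N} x_i. Then f(x_N(x̄,R)) − f(x*) ≤ r L √(2 C(d)/(μ(d)(N+1)))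 and ‖x_N(x̄,R) − x*‖^ρ ≤ (r L/μ(f)) √(2 C(d)/(μ(d)(N+1))). -/
noncomputable section

open Real

private lemma helper_lim {A B : ℝ} {φ : ℝ → ℝ}
    (hφ : Filter.Tendsto φ (nhdsWithin 0 (Set.Ioi 0)) (nhds B))
    (h : ∀ α : ℝ, 0 < α → α ≤ 1 → A ≤ φ α) : A ≤ B :=
  ge_of_tendsto hφ (by
    filter_upwards [Ioc_mem_nhdsGT_of_mem (Set.mem_Ico.mpr ⟨le_refl 0, one_pos⟩)] with α hα
    exact h α hα.1 hα.2)

private lemma helper_lin {A : ℝ} (c : ℝ) (h : ∀ α : ℝ, 0 < α → α ≤ 1 → A ≤ c * α) : A ≤ 0 := by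
  have h0 : Filter.Tendsto (fun α : ℝ => c * α) (nhdsWithin 0 (Set.Ioi 0)) (nhds (c * 0)) :=
    ((continuous_const.mul continuous_id).tendsto (0:ℝ)).mono_left nhdsWithin_le_nhds
  rw [mul_zero] at h0
  exact helper_lim h0 h

private lemma helper_w {A c ρ : ℝ} (hρ : 2 ≤ ρ)
    (h : ∀ α : ℝ, 0 < α → α ≤ 1 →
      A ≤ c * (1 - (1 - α) * (α ^ (ρ - 1) + (1 - α) ^ (ρ - 1)))) : A ≤ 0 := by
  have hρ1 : (0:ℝ) < ρ - 1 := by linarith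
  have h1 : ContinuousAt (fun α : ℝ => α ^ (ρ - 1)) 0 :=
    Real.continuousAt_rpow_const 0 (ρ - 1) (Or.inr hρ1.le)
  have h2 : ContinuousAt (fun α : ℝ => (1 - α) ^ (ρ - 1)) 0 := by
    have hc : ContinuousAt (fun α : ℝ => (1 - α)) 0 :=
      (continuous_const.sub continuous_id).continuousAt
    exact (Real.continuousAt_rpow_const (1 - 0) (ρ - 1) (Or.inl (by norm_num))).comp hc
  have hcont : ContinuousAt
      (fun α : ℝ => c * (1 - (1 - α) * (α ^ (ρ - 1) + (1 - α) ^ (ρ - 1)))) 0 :=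
    continuousAt_const.mul (continuousAt_const.sub
      (((continuous_const.sub continuous_id).continuousAt).mul (h1.add h2)))
  have h0 := hcont.tendsto.mono_left (nhdsWithin_le_nhds (s := Set.Ioi (0:ℝ)))
  have hval : c * (1 - (1 - (0:ℝ)) * ((0:ℝ) ^ (ρ - 1) + (1 - (0:ℝ)) ^ (ρ - 1))) = 0 := by
    rw [Real.zero_rpow (ne_of_gt hρ1)]
    norm_num
  rw [hval] at h0
  exact helper_lim h0 h

private lemma quad_bound {L a x : ℝ} (ha : 0 < a) : L * x - a/2 * x^2 ≤ L^2/(2*a) := by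
  rw [le_div_iff₀ (by positivity : (0:ℝ) < 2*a)]
  nlinarith [sq_nonneg (L - a*x)]

private lemma gain_eq {R L r t s1 μd : ℝ} (hR : 0 < R) (hL : 0 < L) (hr : 0 < r)
    (ht : 0 < t) (hs1 : 0 < s1) (hμd : 0 < μd) :
    R ^ 2 * L / (r * t) * s1 * (t^2/(2*μd) * r ^ 2 / R ^ 2)
      + s1 ^ 2 * (L ^ 2 / (2 * (μd / R ^ 2) * (R ^ 2 * L / (r * t) * s1)))
    = s1 ^ 2 * (r * L * (t / (μd * s1))) := by
  field_simp
  ring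

set_option maxHeartbeats 2000000 in
/-- Corollary 3.2 for prox-functions of quadratic growth.
The prox-function additionally satisfies `d x ≤ C ‖x‖²` on the unit ball, the
starting point satisfies `‖x̄ − x*‖ ≤ r ≤ R`, and the gain is
`γ = R² L /(r √(2 C μ(d)))`. -/
theorem dual_averaging_quadratic_growth
    {E : Type*} [NormedAddCommGroup E] [NormedSpace ℝ E] [FiniteDimensional ℝ E]
    (Q : Set E) (hQc : IsClosed Q) (hQconv : Convex ℝ Q)
    (d : E → ℝ) (μd C : ℝ) (hμd : 0 < μd)
    (hd_cont : ContinuousOn d (Metric.closedBall (0 : E) 1))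
    (hd_sc : ∀ x ∈ Metric.closedBall (0 : E) 1, ∀ y ∈ Metric.closedBall (0 : E) 1,
      ∀ α ∈ Set.Icc (0 : ℝ) 1,
      d (α • x + (1 - α) • y) ≤
        α * d x + (1 - α) * d y - (μd / 2) * α * (1 - α) * ‖x - y‖ ^ 2)
    (hd0 : d 0 = 0)
    (hd_nonneg : ∀ x ∈ Metric.closedBall (0 : E) 1, 0 ≤ d x)
    (hdC : ∀ x ∈ Metric.closedBall (0 : E) 1, d x ≤ C * ‖x‖ ^ 2)
    (f : E → ℝ) (ρ μf : ℝ) (hρ : 2 ≤ ρ) (hμf : 0 < μf)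
    (huc : ∀ x ∈ Q, ∀ y ∈ Q, ∀ α ∈ Set.Icc (0 : ℝ) 1,
      f (α • x + (1 - α) • y) ≤
        α * f x + (1 - α) * f y -
          (μf / 2) * α * (1 - α) * (α ^ (ρ - 1) + (1 - α) ^ (ρ - 1)) * ‖x - y‖ ^ ρ)
    (L : ℝ) (hLpos : 0 < L)
    (hL : ∀ x ∈ Q, ∀ g : E →L[ℝ] ℝ, (∀ y ∈ Q, f x + g (y - x) ≤ f y) → ‖g‖ ≤ L)
    (xbar : E) (hxbar : xbar ∈ Q) (r R : ℝ) (hr : 0 < r) (hrR : r ≤ R)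
    (xstar : E) (hxstarQ : xstar ∈ Q ∩ Metric.closedBall xbar R)
    (hxstar : ∀ y ∈ Q ∩ Metric.closedBall xbar R, f xstar ≤ f y)
    (hclose : ‖xbar - xstar‖ ≤ r)
    (N : ℕ) (γ : ℝ) (hγ : γ = R ^ 2 * L / (r * Real.sqrt (2 * C * μd)))
    (β : ℕ → ℝ) (hβ : ∀ i, β i = γ * Real.sqrt ((N : ℝ) + 1))
    (xs : ℕ → E) (g : ℕ → E →L[ℝ] ℝ) (s : ℕ → E →L[ℝ] ℝ)
    (hx0 : xs 0 = xbar) (hs0 : s 0 = 0)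
    (hsub : ∀ i, ∀ y ∈ Q, f (xs i) + (g i) (y - xs i) ≤ f y)
    (hsrec : ∀ i, s (i + 1) = s i + g i)
    (hxrec : ∀ i, xs (i + 1) ∈ Q ∩ Metric.closedBall xbar R ∧
      ∀ y ∈ Q ∩ Metric.closedBall xbar R,
        (-(s (i + 1))) (y - xbar) - β (i + 1) * d ((1 / R) • (y - xbar)) ≤
          (-(s (i + 1))) (xs (i + 1) - xbar)
            - β (i + 1) * d ((1 / R) • (xs (i + 1) - xbar)))
    (xN : E) (hxN : xN = (1 / ((N : ℝ) + 1)) • ∑ i ∈ Finset.range (N + 1), xs i) :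
    f xN - f xstar ≤ r * L * Real.sqrt (2 * C / (μd * ((N : ℝ) + 1))) ∧
    ‖xN - xstar‖ ^ ρ ≤ (r * L / μf) * Real.sqrt (2 * C / (μd * ((N : ℝ) + 1))) := by
  have hρ0 : (0:ℝ) < ρ := by linarith
  by_cases hC : 0 < C
  case neg =>
    -- degenerate case: C ≤ 0 forces E to be trivial
    have hC' : C ≤ 0 := not_lt.mp hC
    have hEtriv : ∀ v : E, v = 0 := by
      intro v; by_contra hv
      have hvn : 0 < ‖v‖ := norm_pos_iff.mpr hv
      set u : E := ‖v‖⁻¹ • v with hu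
      have hun : ‖u‖ = 1 := by
        rw [hu, norm_smul, norm_inv, norm_norm]; field_simp
      have humem : u ∈ Metric.closedBall (0:E) 1 := by
        rw [Metric.mem_closedBall, dist_zero_right, hun]
      have h0mem : (0:E) ∈ Metric.closedBall (0:E) 1 := by simp
      have hd_lb : μd/2 - d u ≤ 0 := by
        apply helper_lin (μd/2)
        intro α hα0 hα1
        have h1 := hd_sc u humem 0 h0mem α ⟨hα0.le, hα1⟩
        have hmem2 : α • u + (1-α) • (0:E) ∈ Metric.closedBall (0:E) 1 := by
          rw [smul_zero, add_zero, Metric.mem_closedBall, dist_zero_right, norm_smul, hun,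
            mul_one, Real.norm_eq_abs, abs_of_pos hα0]
          exact hα1
        have h2 := hd_nonneg _ hmem2
        rw [sub_zero, hun, hd0, one_pow, mul_one] at h1
        have h3 : (μd/2) * α * (1-α) ≤ α * d u := by linarith
        have h4 : μd/2 * (1-α) ≤ d u := by
          by_contra hcon; push_neg at hcon
          have h5 := mul_lt_mul_of_pos_left hcon hα0
          have h6 : (μd/2) * α * (1-α) = α * (μd/2 * (1-α)) := by ring
          linarith
        have h7 : μd/2 * α = μd/2 - μd/2 * (1-α) := by ring
        linarith
      have hub := hdC u humem
      rw [hun, one_pow, mul_one] at hub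
      linarith
    have hxx : xN = xstar := by rw [hEtriv xN, hEtriv xstar]
    constructor
    · rw [hxx, sub_self]; positivity
    · rw [hxx, sub_self, norm_zero, Real.zero_rpow (ne_of_gt hρ0)]; positivity
  case pos =>
  have hR : 0 < R := lt_of_lt_of_le hr hrR
  set n1 : ℝ := (N:ℝ) + 1 with hn1def
  have hn1 : 0 < n1 := by positivity
  set s1 := Real.sqrt n1 with hs1def
  have hs1 : 0 < s1 := Real.sqrt_pos.mpr hn1
  have hs1sq : s1 ^ 2 = n1 := Real.sq_sqrt hn1.le
  set t := Real.sqrt (2*C*μd) with htdef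
  have ht : 0 < t := Real.sqrt_pos.mpr (by positivity)
  have htsq : t ^ 2 = 2*C*μd := Real.sq_sqrt (by positivity)
  have hγpos : 0 < γ := by rw [hγ]; positivity
  set B := γ * s1 with hBdef
  have hB : 0 < B := by positivity
  set σ := μd / R^2 with hσdef
  have hσ : 0 < σ := by positivity
  clear_value n1 s1 t B σ
  set QR := Q ∩ Metric.closedBall xbar R with hQRdef
  have hQRconv : Convex ℝ QR := hQconv.inter (convex_closedBall _ _)
  have hxbarQR : xbar ∈ QR := ⟨hxbar, by simp [Metric.mem_closedBall]; linarith⟩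
  have hxsQR : ∀ k, xs k ∈ QR := by
    intro k
    cases k with
    | zero => rw [hx0]; exact hxbarQR
    | succ m => exact (hxrec m).1
  -- scaled points live in the unit ball
  have hball : ∀ x ∈ Metric.closedBall xbar R, (1/R) • (x - xbar) ∈ Metric.closedBall (0:E) 1 := by
    intro x hx
    rw [Metric.mem_closedBall, dist_zero_right, norm_smul, Real.norm_eq_abs,
      abs_of_pos (by positivity : (0:ℝ) < 1/R)]
    rw [Metric.mem_closedBall, dist_eq_norm] at hx
    calc (1/R) * ‖x - xbar‖ ≤ (1/R) * R := by
          exact mul_le_mul_of_nonneg_left hx (by positivity)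
      _ = 1 := by field_simp
  -- strong convexity of the scaled prox function
  have hDsc : ∀ x ∈ Metric.closedBall xbar R, ∀ y ∈ Metric.closedBall xbar R,
      ∀ α : ℝ, 0 ≤ α → α ≤ 1 →
      d ((1/R) • (α • x + (1-α) • y - xbar)) ≤
        α * d ((1/R) • (x - xbar)) + (1-α) * d ((1/R) • (y - xbar))
          - (σ/2) * α * (1-α) * ‖x - y‖^2 := by
    intro x hx y hy α hα0 hα1
    have he : (1/R) • (α • x + (1-α) • y - xbar)
        = α • ((1/R) • (x - xbar)) + (1-α) • ((1/R) • (y - xbar)) := by module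
    have h1 := hd_sc _ (hball x hx) _ (hball y hy) α ⟨hα0, hα1⟩
    rw [he]
    have hne : (1/R) • (x - xbar) - (1/R) • (y - xbar) = (1/R) • (x - y) := by module
    rw [hne, norm_smul, Real.norm_eq_abs, abs_of_pos (by positivity : (0:ℝ) < 1/R)] at h1
    have heq : (μd/2) * α * (1-α) * (1/R * ‖x - y‖)^2 = (σ/2) * α * (1-α) * ‖x - y‖^2 := by
      rw [hσdef]; field_simp
    linarith only [h1, heq.ge, heq.le]
  -- maximality of xs k
  have hmax : ∀ k, ∀ y ∈ QR,
      -(s k (y - xbar)) - B * d ((1/R) • (y - xbar)) ≤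
        -(s k (xs k - xbar)) - B * d ((1/R) • (xs k - xbar)) := by
    intro k
    cases k with
    | zero =>
      intro y hy
      rw [hs0, hx0]
      simp only [ContinuousLinearMap.zero_apply, neg_zero, sub_self, smul_zero, hd0, mul_zero]
      have h1 := mul_nonneg hB.le (hd_nonneg _ (hball y hy.2))
      linarith
    | succ m =>
      intro y hy
      have h := (hxrec m).2 y hy
      rw [hβ] at h
      simpa only [ContinuousLinearMap.neg_apply] using h
  -- strong maximality
  have hmaxs : ∀ k, ∀ y ∈ QR,
      -(s k (y - xbar)) - B * d ((1/R) • (y - xbar)) + σ*B/2 * ‖y - xs k‖^2 ≤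
        -(s k (xs k - xbar)) - B * d ((1/R) • (xs k - xbar)) := by
    intro k y hy
    have hA : -(s k (y - xbar)) - B * d ((1/R) • (y - xbar)) + σ*B/2 * ‖y - xs k‖^2
        - (-(s k (xs k - xbar)) - B * d ((1/R) • (xs k - xbar))) ≤ 0 := by
      apply helper_lin (σ*B/2 * ‖y - xs k‖^2)
      intro α hα0 hα1
      have hz : α • y + (1-α) • (xs k) ∈ QR :=
        hQRconv hy (hxsQR k) hα0.le (by linarith) (by ring)
      have h1 := hmax k _ hz
      have h2 := hDsc y hy.2 (xs k) (hxsQR k).2 α hα0.le hα1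
      have h3 : s k (α • y + (1-α) • (xs k) - xbar)
          = α * s k (y - xbar) + (1-α) * s k (xs k - xbar) := by
        have he : α • y + (1-α) • (xs k) - xbar
            = α • (y - xbar) + (1-α) • (xs k - xbar) := by module
        rw [he, map_add, map_smul, map_smul, smul_eq_mul, smul_eq_mul]
      have h4 := mul_le_mul_of_nonneg_left h2 hB.le
      rw [h3] at h1
      have hkey : α * ((-(s k (y - xbar)) - B * d ((1/R) • (y - xbar)))
          - (-(s k (xs k - xbar)) - B * d ((1/R) • (xs k - xbar)))
          + σ*B/2 * (1-α) * ‖y - xs k‖^2) ≤ 0 := by linarith only [h1, h4]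
      have hX : (-(s k (y - xbar)) - B * d ((1/R) • (y - xbar)))
          - (-(s k (xs k - xbar)) - B * d ((1/R) • (xs k - xbar)))
          + σ*B/2 * (1-α) * ‖y - xs k‖^2 ≤ 0 := by
        by_contra hcon; push_neg at hcon
        have h6 := mul_pos hα0 hcon
        linarith only [hkey, h6]
      have h7 : σ*B/2 * (1-α) * ‖y - xs k‖^2
          = σ*B/2 * ‖y - xs k‖^2 - σ*B/2 * ‖y - xs k‖^2 * α := by ring
      linarith only [hX, h7]
    linarith
  -- s is the sum of the g i
  have hs_sum : ∀ k, s k = ∑ i ∈ Finset.range k, g i := by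
    intro k
    induction k with
    | zero => simpa using hs0
    | succ m ih => rw [hsrec m, ih, Finset.sum_range_succ]
  have hgL : ∀ k, ‖g k‖ ≤ L := fun k => hL (xs k) (hxsQR k).1 (g k) (hsub k)
  -- telescoping bound
  have htel : ∀ m : ℕ,
      -(s m (xs m - xbar)) - B * d ((1/R) • (xs m - xbar)) ≤
        -(∑ i ∈ Finset.range m, g i (xs i - xbar)) + (m:ℝ) * (L^2/(2*σ*B)) := by
    intro m
    induction m with
    | zero =>
      rw [hs0, hx0]
      simp [hd0]
    | succ m ih =>
      have hms := hmaxs m (xs (m+1)) (hxsQR (m+1))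
      have hsplit : s (m+1) (xs (m+1) - xbar)
          = s m (xs (m+1) - xbar) + g m (xs (m+1) - xbar) := by
        rw [hsrec m]; simp
      have hdecomp : g m (xs (m+1) - xbar) = g m (xs m - xbar) + g m (xs (m+1) - xs m) := by
        rw [← map_add]; congr 1; abel
      have hCS : -(g m (xs (m+1) - xs m)) ≤ L * ‖xs (m+1) - xs m‖ := by
        have h1 : ‖g m (xs (m+1) - xs m)‖ ≤ ‖g m‖ * ‖xs (m+1) - xs m‖ :=
          (g m).le_opNorm _
        have h2 : ‖g m‖ * ‖xs (m+1) - xs m‖ ≤ L * ‖xs (m+1) - xs m‖ :=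
          mul_le_mul_of_nonneg_right (hgL m) (norm_nonneg _)
        rw [Real.norm_eq_abs] at h1
        have := neg_abs_le (g m (xs (m+1) - xs m))
        linarith
      have hq : L * ‖xs (m+1) - xs m‖ - (σ*B)/2 * ‖xs (m+1) - xs m‖^2 ≤ L^2/(2*(σ*B)) :=
        quad_bound (mul_pos hσ hB)
      rw [Finset.sum_range_succ]
      push_cast
      have hstep : -(s (m+1) (xs (m+1) - xbar)) - B * d ((1/R) • (xs (m+1) - xbar)) ≤
          -(s m (xs m - xbar)) - B * d ((1/R) • (xs m - xbar))
            - g m (xs m - xbar) + L^2/(2*σ*B) := by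
        rw [hsplit, hdecomp]
        have h9 := hmaxs m (xs (m+1)) (hxsQR (m+1))
        have h10 : s m (xs (m+1) - xbar) = s m (xs m - xbar) + s m (xs (m+1) - xs m) := by
          rw [← map_add]; congr 1; abel
        have hq2 : L^2/(2*(σ*B)) = L^2/(2*σ*B) := by ring
        linarith only [h9, hCS, hq, h10.le, h10.ge, hq2.le, hq2.ge]
      linarith only [hstep, ih]
  -- bound on the sum of linearizations
  have hDxstar : d ((1/R) • (xstar - xbar)) ≤ C * r^2 / R^2 := by
    have hub := hdC _ (hball xstar hxstarQ.2)
    have hnrm : ‖(1/R) • (xstar - xbar)‖ = ‖xstar - xbar‖ / R := by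
      rw [norm_smul, Real.norm_eq_abs, abs_of_pos (by positivity : (0:ℝ) < 1/R)]; ring
    rw [hnrm] at hub
    have hle : ‖xstar - xbar‖ ≤ r := by rw [norm_sub_rev]; exact hclose
    have : C * (‖xstar - xbar‖ / R)^2 ≤ C * r^2 / R^2 := by
      rw [div_pow, mul_div_assoc]
      gcongr
    linarith only [hub, this]
  have hSbound : ∑ i ∈ Finset.range (N+1), g i (xs i - xstar) ≤
      B * (C * r^2 / R^2) + n1 * (L^2/(2*σ*B)) := by
    have h1 := hmax (N+1) xstar hxstarQ
    have h2 := htel (N+1)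
    have h3 : s (N+1) (xstar - xbar) = ∑ i ∈ Finset.range (N+1), g i (xstar - xbar) := by
      rw [hs_sum (N+1)]; exact ContinuousLinearMap.sum_apply _ _ _
    have h4 : ∀ i, g i (xs i - xstar) = g i (xs i - xbar) - g i (xstar - xbar) := by
      intro i
      rw [← map_sub]; congr 1; abel
    have h5 : ∑ i ∈ Finset.range (N+1), g i (xs i - xstar)
        = (∑ i ∈ Finset.range (N+1), g i (xs i - xbar))
          - ∑ i ∈ Finset.range (N+1), g i (xstar - xbar) := by
      rw [← Finset.sum_sub_distrib]
      exact Finset.sum_congr rfl fun i _ => h4 i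
    have hcast : ((N+1 : ℕ) : ℝ) = n1 := by push_cast [hn1def]; ring
    rw [hcast] at h2
    have h6 := mul_le_mul_of_nonneg_left hDxstar hB.le
    rw [h5, ← h3]
    linarith only [h1, h2, h6]
  -- the value of the right-hand side
  have hδeq : B * (C * r^2 / R^2) + n1 * (L^2/(2*σ*B))
      = n1 * (r * L * Real.sqrt (2*C/(μd*n1))) := by
    have hsq : Real.sqrt (2*C/(μd*n1)) = t/(μd*s1) := by
      rw [show 2*C/(μd*n1) = (t/(μd*s1))^2 by
        rw [div_pow, mul_pow, htsq, hs1sq]; field_simp]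
      exact Real.sqrt_sq (by positivity)
    have hCt : C = t^2/(2*μd) := by
      rw [eq_div_iff (by positivity : (0:ℝ) < 2*μd).ne', htsq]; ring
    rw [hsq, hBdef, hγ, hσdef, ← hs1sq, hCt]
    exact gain_eq hR hLpos hr ht hs1 hμd
  have hcastN : ((N+1 : ℕ) : ℝ) = n1 := by push_cast [hn1def]; ring
  -- uniform convexity with subgradients
  have huc_sub : ∀ k, f (xs k) - f xstar + μf/2 * ‖xs k - xstar‖ ^ ρ ≤ g k (xs k - xstar) := by
    intro k
    have hswap' : ‖xstar - xs k‖ ^ ρ = ‖xs k - xstar‖ ^ ρ := by rw [norm_sub_rev]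
    have hneg' : g k (xstar - xs k) = -(g k (xs k - xstar)) := by
      rw [← neg_sub (xs k) xstar, map_neg]
    have hA : -(g k (xs k - xstar)) + (f (xs k) - f xstar) + μf/2 * ‖xs k - xstar‖ ^ ρ ≤ 0 := by
      apply helper_w hρ (c := μf/2 * ‖xs k - xstar‖ ^ ρ)
      intro α hα0 hα1
      have hzQ : α • xstar + (1-α) • (xs k) ∈ Q :=
        hQconv hxstarQ.1 (hxsQR k).1 hα0.le (by linarith) (by ring)
      have h1 := huc xstar hxstarQ.1 (xs k) (hxsQR k).1 α ⟨hα0.le, hα1⟩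
      have h2 := hsub k _ hzQ
      have he : α • xstar + (1-α) • (xs k) - xs k = α • (xstar - xs k) := by module
      rw [he, map_smul, smul_eq_mul] at h2
      have hkey : α * (g k (xstar - xs k) + (f (xs k) - f xstar)
          + μf/2 * (1-α) * (α ^ (ρ-1) + (1-α) ^ (ρ-1)) * ‖xstar - xs k‖ ^ ρ) ≤ 0 := by
        linarith only [h1, h2]
      have hX : g k (xstar - xs k) + (f (xs k) - f xstar)
          + μf/2 * (1-α) * (α ^ (ρ-1) + (1-α) ^ (ρ-1)) * ‖xstar - xs k‖ ^ ρ ≤ 0 := by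
        by_contra hcon; push_neg at hcon
        have h6 := mul_pos hα0 hcon
        linarith only [hkey, h6]
      rw [hswap', hneg'] at hX
      have h7 : μf/2 * ‖xs k - xstar‖ ^ ρ * (1 - (1-α) * (α ^ (ρ-1) + (1-α) ^ (ρ-1)))
          = μf/2 * ‖xs k - xstar‖ ^ ρ
            - μf/2 * (1-α) * (α ^ (ρ-1) + (1-α) ^ (ρ-1)) * ‖xs k - xstar‖ ^ ρ := by ring
      linarith only [hX, h7.le, h7.ge]
    linarith only [hA]
  have hSsum : ∑ i ∈ Finset.range (N+1), (f (xs i) - f xstar + μf/2 * ‖xs i - xstar‖ ^ ρ)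
      ≤ n1 * (r * L * Real.sqrt (2*C/(μd*n1))) := by
    calc ∑ i ∈ Finset.range (N+1), (f (xs i) - f xstar + μf/2 * ‖xs i - xstar‖ ^ ρ)
        ≤ ∑ i ∈ Finset.range (N+1), g i (xs i - xstar) :=
          Finset.sum_le_sum fun i _ => huc_sub i
      _ ≤ B * (C * r^2 / R^2) + n1 * (L^2/(2*σ*B)) := hSbound
      _ = n1 * (r * L * Real.sqrt (2*C/(μd*n1))) := hδeq
  set δ := r * L * Real.sqrt (2*C/(μd*n1)) with hδdef
  clear_value δ
  have hw0 : ∀ i ∈ Finset.range (N+1), 0 ≤ (1/n1 : ℝ) := fun i _ => by positivity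
  have hw1 : ∑ i ∈ Finset.range (N+1), (1/n1 : ℝ) = 1 := by
    rw [Finset.sum_const, Finset.card_range, nsmul_eq_mul, hcastN, mul_one_div,
      div_self hn1.ne']
  have hxNsum : xN = ∑ i ∈ Finset.range (N+1), (1/n1 : ℝ) • xs i := by
    rw [hxN, Finset.smul_sum]
  -- convexity of f on Q
  have hfconv : ConvexOn ℝ Q f := by
    refine ⟨hQconv, fun x hx y hy a b ha hb hab => ?_⟩
    have hb' : b = 1 - a := by linarith
    subst hb'
    have h1 := huc x hx y hy a ⟨ha, by linarith⟩
    have h2 : 0 ≤ μf / 2 * a * (1 - a) * (a ^ (ρ - 1) + (1 - a) ^ (ρ - 1)) * ‖x - y‖ ^ ρ := by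
      have ha1 := Real.rpow_nonneg ha (ρ - 1)
      have ha2 := Real.rpow_nonneg hb (ρ - 1)
      have hn := Real.rpow_nonneg (norm_nonneg (x - y)) ρ
      exact mul_nonneg (mul_nonneg (mul_nonneg (mul_nonneg
        (by positivity : (0:ℝ) ≤ μf/2) ha) hb) (add_nonneg ha1 ha2)) hn
    simp only [smul_eq_mul]
    linarith only [h1, h2]
  have hJ1 : f xN ≤ ∑ i ∈ Finset.range (N+1), (1/n1) * f (xs i) := by
    rw [hxNsum]
    exact hfconv.map_sum_le hw0 hw1 (fun i _ => (hxsQR i).1)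
  have hJ1' : n1 * f xN ≤ ∑ i ∈ Finset.range (N+1), f (xs i) := by
    rw [← Finset.mul_sum] at hJ1
    have h3 := mul_le_mul_of_nonneg_left hJ1 hn1.le
    have h4 : n1 * ((1/n1) * ∑ i ∈ Finset.range (N+1), f (xs i))
        = ∑ i ∈ Finset.range (N+1), f (xs i) := by
      field_simp
    rwa [h4] at h3
  -- Jensen for the norm power
  have hxstar_sum : ∑ i ∈ Finset.range (N+1), (1/n1 : ℝ) • xstar = xstar := by
    rw [Finset.sum_const, Finset.card_range, ← Nat.cast_smul_eq_nsmul ℝ, smul_smul,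
      hcastN, mul_one_div, div_self hn1.ne', one_smul]
  have hnormle : ‖xN - xstar‖ ≤ ∑ i ∈ Finset.range (N+1), (1/n1) * ‖xs i - xstar‖ := by
    have hdiff : xN - xstar = ∑ i ∈ Finset.range (N+1), (1/n1 : ℝ) • (xs i - xstar) := by
      rw [hxNsum]
      simp only [smul_sub, Finset.sum_sub_distrib, hxstar_sum]
    rw [hdiff]
    refine (norm_sum_le _ _).trans (le_of_eq (Finset.sum_congr rfl fun i _ => ?_))
    rw [norm_smul, Real.norm_eq_abs, abs_of_pos (by positivity : (0:ℝ) < 1/n1)]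
  have hJ2 : ‖xN - xstar‖ ^ ρ ≤ ∑ i ∈ Finset.range (N+1), (1/n1) * ‖xs i - xstar‖ ^ ρ := by
    have h1 : ‖xN - xstar‖ ^ ρ
        ≤ (∑ i ∈ Finset.range (N+1), (1/n1) * ‖xs i - xstar‖) ^ ρ :=
      Real.rpow_le_rpow (norm_nonneg _) hnormle (by linarith)
    have h2 : (∑ i ∈ Finset.range (N+1), (1/n1 : ℝ) • ‖xs i - xstar‖) ^ ρ
        ≤ ∑ i ∈ Finset.range (N+1), (1/n1 : ℝ) * ‖xs i - xstar‖ ^ ρ :=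
      (convexOn_rpow (p := ρ) (by linarith : 1 ≤ ρ)).map_sum_le hw0 hw1
        (fun i _ => Set.mem_Ici.mpr (norm_nonneg _))
    simp only [smul_eq_mul] at h2
    exact h1.trans h2
  have hJ2' : n1 * ‖xN - xstar‖ ^ ρ ≤ ∑ i ∈ Finset.range (N+1), ‖xs i - xstar‖ ^ ρ := by
    rw [← Finset.mul_sum] at hJ2
    have h3 := mul_le_mul_of_nonneg_left hJ2 hn1.le
    have h4 : n1 * ((1/n1) * ∑ i ∈ Finset.range (N+1), ‖xs i - xstar‖ ^ ρ)
        = ∑ i ∈ Finset.range (N+1), ‖xs i - xstar‖ ^ ρ := by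
      field_simp
    rwa [h4] at h3
  have hsplit2 : ∑ i ∈ Finset.range (N+1), (f (xs i) - f xstar + μf/2 * ‖xs i - xstar‖ ^ ρ)
      = (∑ i ∈ Finset.range (N+1), f (xs i)) - n1 * f xstar
        + μf/2 * ∑ i ∈ Finset.range (N+1), ‖xs i - xstar‖ ^ ρ := by
    rw [Finset.sum_add_distrib, Finset.sum_sub_distrib, Finset.sum_const, Finset.card_range,
      nsmul_eq_mul, Finset.mul_sum, hcastN]
  have h1 : f xN - f xstar + μf/2 * ‖xN - xstar‖ ^ ρ ≤ δ := by
    rw [hsplit2] at hSsum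
    have h3 := mul_le_mul_of_nonneg_left hJ2' (by positivity : (0:ℝ) ≤ μf/2)
    have h4 : n1 * (f xN - f xstar + μf/2 * ‖xN - xstar‖ ^ ρ) ≤ n1 * δ := by
      have h5 : n1 * (f xN - f xstar + μf/2 * ‖xN - xstar‖ ^ ρ)
          = n1 * f xN - n1 * f xstar + μf/2 * (n1 * ‖xN - xstar‖ ^ ρ) := by ring
      linarith only [hJ1', h3, hSsum, h5.le, h5.ge]
    exact (mul_le_mul_iff_right₀ hn1).mp h4
  have hxNQR : xN ∈ QR := by
    rw [hxNsum]
    exact hQRconv.sum_mem hw0 hw1 (fun i _ => hxsQR i)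
  have h2 : μf/2 * ‖xN - xstar‖ ^ ρ ≤ f xN - f xstar := by
    have hA : μf/2 * ‖xN - xstar‖ ^ ρ - (f xN - f xstar) ≤ 0 := by
      apply helper_w hρ (c := μf/2 * ‖xN - xstar‖ ^ ρ)
      intro α hα0 hα1
      have hzQR : α • xN + (1-α) • xstar ∈ QR :=
        hQRconv hxNQR hxstarQ hα0.le (by linarith) (by ring)
      have h5 := huc xN hxNQR.1 xstar hxstarQ.1 α ⟨hα0.le, hα1⟩
      have h6 := hxstar _ hzQR
      have hkey : α * (f xstar - f xN
          + μf/2 * (1-α) * (α ^ (ρ-1) + (1-α) ^ (ρ-1)) * ‖xN - xstar‖ ^ ρ) ≤ 0 := by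
        linarith only [h5, h6]
      have hX : f xstar - f xN
          + μf/2 * (1-α) * (α ^ (ρ-1) + (1-α) ^ (ρ-1)) * ‖xN - xstar‖ ^ ρ ≤ 0 := by
        by_contra hcon; push_neg at hcon
        have h7 := mul_pos hα0 hcon
        linarith only [hkey, h7]
      have h8 : μf/2 * ‖xN - xstar‖ ^ ρ * (1 - (1-α) * (α ^ (ρ-1) + (1-α) ^ (ρ-1)))
          = μf/2 * ‖xN - xstar‖ ^ ρ
            - μf/2 * (1-α) * (α ^ (ρ-1) + (1-α) ^ (ρ-1)) * ‖xN - xstar‖ ^ ρ := by ring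
      linarith only [hX, h8.le, h8.ge]
    linarith only [hA]
  constructor
  · have h9 : 0 ≤ μf/2 * ‖xN - xstar‖ ^ ρ :=
      mul_nonneg (by positivity) (Real.rpow_nonneg (norm_nonneg _) ρ)
    linarith only [h1, h9]
  · have h10 : μf * ‖xN - xstar‖ ^ ρ ≤ δ := by linarith only [h1, h2]
    rw [div_mul_eq_mul_div, le_div_iff₀ hμf, ← hδdef]
    linarith only [h10]
end
end

section
/- (Theorem 3.2, multi-stage method with a prox-function of quadratic growth.) Let f be uniformly convex on Q with parameters ρ ≥ 2 and μ(f) > 0, with subgradients bounded by L > 0 in dual norm; let x* minimize f over Q, f* = f(x*), and suppose ‖x − x*‖ ≤ R₀ for all x ∈ Q. Fix ε > 0, τ = 2(ρ−1)/ρ, r_k = (2^{−k}R₀^ρ)^{1/ρ}. Let m ≥ 1 with 2^m ≥ μ(f)R₀^ρ/ε ≥ 2^{m−1}, and let N₁,…,N_m be nonnegative integers with N_k + 1 ≥ 2^{τk}·4L²C(d)/(μ(f)²μ(d)R₀^{2(ρ−1)}) ≥ N_k. Suppose y₀ ∈ Q and y₁,…,y_m ∈ Q satisfy, for each k = 1,…,m: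 whenever ‖y_{k−1} − x*‖ ≤ r_{k−1}, both f(y_k) − f(x*) ≤ r_{k−1} L √(2C(d)/(μ(d)(N_k+1))) and μ(f)‖y_k − x*‖^ρ ≤ r_{k−1} L √(2C(d)/(μ(d)(N_k+1))). Then ‖y_k − x*‖^ρ ≤ 2^{−k}R₀^ρ for all k = 0,…,m, f(y_m) − f* ≤ ε, and Σ_{k=1}^{m} N_k ≤ 4^{τ+1} L² C(d)/(μ(f)^{2/ρ} μ(d)) · ε^{−τ}. -/
noncomputable section

open Real

/-- Geometric sum bound: for `x ≥ 2`, `∑_{k=1}^m x^k ≤ 2 x^m`. -/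
lemma multistage_geom_aux (x : ℝ) (hx : 2 ≤ x) :
    ∀ m : ℕ, ∑ k ∈ Finset.Icc 1 m, x ^ k ≤ 2 * x ^ m := by
  intro m
  induction m with
  | zero => simp
  | succ m ih =>
    have hx0 : (0:ℝ) < x := by linarith
    have hxm : (0:ℝ) < x ^ m := pow_pos hx0 m
    rw [Finset.sum_Icc_succ_top (by omega)]
    have h2 : 2 * x ^ m ≤ x ^ (m+1) := by
      rw [pow_succ]
      nlinarith
    calc (∑ k ∈ Finset.Icc 1 m, x ^ k) + x ^ (m+1)
        ≤ 2 * x ^ m + x ^ (m+1) := by linarith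
      _ ≤ 2 * x ^ (m+1) := by linarith

/-- Theorem 3.2, multi-stage method with a prox-function of
quadratic growth constant `C`. The per-stage hypotheses are the guarantees of
the quadratic-growth dual-averaging stage. -/
theorem multistage_quadratic_growth
    {E : Type*} [NormedAddCommGroup E] [NormedSpace ℝ E] [FiniteDimensional ℝ E]
    (Q : Set E) (hQc : IsClosed Q) (hQconv : Convex ℝ Q)
    (f : E → ℝ) (ρ μf : ℝ) (hρ : 2 ≤ ρ) (hμf : 0 < μf)
    (huc : ∀ x ∈ Q, ∀ y ∈ Q, ∀ α ∈ Set.Icc (0 : ℝ) 1,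
      f (α • x + (1 - α) • y) ≤
        α * f x + (1 - α) * f y -
          (μf / 2) * α * (1 - α) * (α ^ (ρ - 1) + (1 - α) ^ (ρ - 1)) * ‖x - y‖ ^ ρ)
    (L : ℝ) (hLpos : 0 < L)
    (hL : ∀ x ∈ Q, ∀ g : E →L[ℝ] ℝ, (∀ y ∈ Q, f x + g (y - x) ≤ f y) → ‖g‖ ≤ L)
    (C μd : ℝ) (hC : 0 < C) (hμd : 0 < μd)
    (xstar : E) (hxstarQ : xstar ∈ Q) (hxmin : ∀ y ∈ Q, f xstar ≤ f y)
    (R0 : ℝ) (hR0 : 0 < R0) (hQR0 : ∀ x ∈ Q, ‖x - xstar‖ ≤ R0)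
    (ε : ℝ) (hε : 0 < ε)
    (τ : ℝ) (hτ : τ = 2 * (ρ - 1) / ρ)
    (rk : ℕ → ℝ) (hrk : ∀ k, rk k = ((2 : ℝ) ^ (-(k : ℝ)) * R0 ^ ρ) ^ (1 / ρ))
    (m : ℕ) (hm : 1 ≤ m)
    (hm2 : (2 : ℝ) ^ m ≥ μf * R0 ^ ρ / ε ∧ μf * R0 ^ ρ / ε ≥ (2 : ℝ) ^ (m - 1))
    (N : ℕ → ℕ)
    (hN : ∀ k ∈ Finset.Icc 1 m,
      (N k : ℝ) + 1 ≥ (2 : ℝ) ^ (τ * k) * (4 * L ^ 2 * C) /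
          (μf ^ 2 * μd * R0 ^ (2 * (ρ - 1))) ∧
      (2 : ℝ) ^ (τ * k) * (4 * L ^ 2 * C) /
          (μf ^ 2 * μd * R0 ^ (2 * (ρ - 1))) ≥ (N k : ℝ))
    (y : ℕ → E) (hyQ : ∀ k, y k ∈ Q)
    (hstage : ∀ k ∈ Finset.Icc 1 m, ‖y (k - 1) - xstar‖ ≤ rk (k - 1) →
      f (y k) - f xstar ≤
        rk (k - 1) * L * Real.sqrt (2 * C / (μd * ((N k : ℝ) + 1))) ∧
      μf * ‖y k - xstar‖ ^ ρ ≤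
        rk (k - 1) * L * Real.sqrt (2 * C / (μd * ((N k : ℝ) + 1)))) :
    (∀ k ≤ m, ‖y k - xstar‖ ^ ρ ≤ (2 : ℝ) ^ (-(k : ℝ)) * R0 ^ ρ) ∧
    f (y m) - f xstar ≤ ε ∧
    (∑ k ∈ Finset.Icc 1 m, (N k : ℝ)) ≤
      (4 : ℝ) ^ (τ + 1) * L ^ 2 * C / (μf ^ (2 / ρ) * μd) * ε ^ (-τ) := by
  have hρ0 : (0:ℝ) < ρ := by linarith
  have hρne : ρ ≠ 0 := ne_of_gt hρ0
  have hR0ρ : (0:ℝ) < R0 ^ ρ := Real.rpow_pos_of_pos hR0 ρ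
  have hτ1 : (1:ℝ) ≤ τ := by
    rw [hτ, le_div_iff₀ hρ0]
    linarith
  have hτ0 : (0:ℝ) ≤ τ := by linarith
  have hX : (0:ℝ) < R0 ^ (2 * (ρ - 1)) := Real.rpow_pos_of_pos hR0 _
  -- the explicit value of `rk`
  have hrk' : ∀ j : ℕ, rk j = (2:ℝ) ^ (-(j:ℝ) / ρ) * R0 := by
    intro j
    rw [hrk j, Real.mul_rpow (by positivity) (le_of_lt hR0ρ),
      ← Real.rpow_mul (by norm_num : (0:ℝ) ≤ 2),
      ← Real.rpow_mul hR0.le, mul_one_div, mul_one_div, div_self hρne,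
      Real.rpow_one]
  have hrkpos : ∀ j : ℕ, 0 < rk j := by
    intro j; rw [hrk' j]; positivity
  -- KEY per-stage quantitative bound
  have KEY : ∀ k : ℕ, 1 ≤ k → k ≤ m →
      rk (k-1) * L * Real.sqrt (2 * C / (μd * ((N k : ℝ) + 1))) ≤
        μf * ((2:ℝ) ^ (-(k:ℝ)) * R0 ^ ρ) := by
    intro k hk1 hkm
    have hkR1 : (1:ℝ) ≤ (k:ℝ) := by exact_mod_cast hk1
    obtain ⟨hN1, -⟩ := hN k (Finset.mem_Icc.mpr ⟨hk1, hkm⟩)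
    set q : ℝ := μf * R0 ^ (ρ - 1) / (Real.sqrt 2 * L * (2:ℝ) ^ (τ * k / 2)) with hq
    have hq0 : 0 < q := by
      have : (0:ℝ) < R0 ^ (ρ-1) := Real.rpow_pos_of_pos hR0 _
      have h2 : (0:ℝ) < Real.sqrt 2 := by positivity
      have h3 : (0:ℝ) < (2:ℝ) ^ (τ * k / 2) := Real.rpow_pos_of_pos (by norm_num) _
      positivity
    have hq2 : q ^ 2 = μf ^ 2 * R0 ^ (2 * (ρ - 1)) / (2 * L ^ 2 * (2:ℝ) ^ (τ * k)) := by
      have e1 : (R0 ^ (ρ - 1)) ^ 2 = R0 ^ (2 * (ρ - 1)) := by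
        rw [← Real.rpow_natCast (R0 ^ (ρ-1)) 2, ← Real.rpow_mul hR0.le]
        norm_num [mul_comm]
      have e2 : ((2:ℝ) ^ (τ * k / 2)) ^ 2 = (2:ℝ) ^ (τ * k) := by
        rw [← Real.rpow_natCast ((2:ℝ) ^ (τ * k / 2)) 2,
          ← Real.rpow_mul (by norm_num : (0:ℝ) ≤ 2)]
        norm_num
      have e3 : (Real.sqrt 2) ^ 2 = 2 := Real.sq_sqrt (by norm_num)
      rw [hq, div_pow, mul_pow, mul_pow, mul_pow, e1, e2, e3]
    have hsqrt : Real.sqrt (2 * C / (μd * ((N k : ℝ) + 1))) ≤ q := by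
      rw [← Real.sqrt_sq hq0.le]
      apply Real.sqrt_le_sqrt
      rw [hq2, div_le_div_iff₀ (by positivity) (by positivity)]
      rw [ge_iff_le, div_le_iff₀ (by positivity)] at hN1
      have h2τk : (0:ℝ) < (2:ℝ) ^ (τ * k) := Real.rpow_pos_of_pos (by norm_num) _
      nlinarith [hN1]
    have hrkp : 0 < rk (k-1) := hrkpos _
    have step1 : rk (k-1) * L * Real.sqrt (2 * C / (μd * ((N k : ℝ) + 1))) ≤
        rk (k-1) * L * q := by
      apply mul_le_mul_of_nonneg_left hsqrt (by positivity)
    refine step1.trans ?_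
    -- rewrite rk (k-1)
    have hkc : ((k-1 : ℕ) : ℝ) = (k:ℝ) - 1 := by
      have := Nat.cast_sub hk1 (R := ℝ)
      simpa using this
    have hr : rk (k-1) = (2:ℝ) ^ (-((k:ℝ) - 1) / ρ) * R0 := by
      rw [hrk' (k-1), hkc]
    -- the exponent comparison
    set D : ℝ := -((k:ℝ) - 1) / ρ with hD
    have hE : D - 1/2 - τ * k / 2 ≤ -(k:ℝ) := by
      have h1ρ : 1/ρ ≤ 1/2 := by
        rw [div_le_div_iff₀ hρ0 (by norm_num)]
        linarith
      have hid : D - 1/2 - τ * k / 2 = -(k:ℝ) + (1/ρ - 1/2) := by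
        rw [hD, hτ]
        field_simp
        ring
      rw [hid]; linarith
    have hEq : rk (k-1) * L * q = μf * ((2:ℝ) ^ (D - 1/2 - τ * k / 2) * R0 ^ ρ) := by
      rw [hr, hq]
      have hs2 : Real.sqrt 2 = (2:ℝ) ^ (1/2 : ℝ) := Real.sqrt_eq_rpow 2
      have hR0split : R0 * R0 ^ (ρ - 1) = R0 ^ ρ := by
        nth_rewrite 1 [← Real.rpow_one R0]
        rw [← Real.rpow_add hR0]
        norm_num
      have h2split : (2:ℝ) ^ (D - 1/2 - τ * k / 2) =
          (2:ℝ) ^ D / ((2:ℝ) ^ (1/2 : ℝ) * (2:ℝ) ^ (τ * k / 2)) := by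
        rw [show D - 1/2 - τ * k / 2 = D - (1/2 + τ * k / 2) by ring,
          Real.rpow_sub (by norm_num), Real.rpow_add (by norm_num)]
      rw [hs2, h2split]
      have hp1 : ((2:ℝ) ^ (1/2:ℝ)) ≠ 0 := ne_of_gt (Real.rpow_pos_of_pos (by norm_num) _)
      have hp2 : ((2:ℝ) ^ (τ * k / 2)) ≠ 0 := ne_of_gt (Real.rpow_pos_of_pos (by norm_num) _)
      field_simp
      rw [← hR0split]
    rw [hEq]
    have h2le : (2:ℝ) ^ (D - 1/2 - τ * k / 2) ≤ (2:ℝ) ^ (-(k:ℝ)) :=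
      (Real.rpow_le_rpow_left_iff one_lt_two).mpr hE
    have : (2:ℝ) ^ (D - 1/2 - τ * k / 2) * R0 ^ ρ ≤ (2:ℝ) ^ (-(k:ℝ)) * R0 ^ ρ :=
      mul_le_mul_of_nonneg_right h2le hR0ρ.le
    exact mul_le_mul_of_nonneg_left this hμf.le
  -- from the norm-power bound to the radius bound
  have hle_rk : ∀ j : ℕ, ‖y j - xstar‖ ^ ρ ≤ (2:ℝ) ^ (-(j:ℝ)) * R0 ^ ρ →
      ‖y j - xstar‖ ≤ rk j := by
    intro j hj
    rw [hrk j]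
    calc ‖y j - xstar‖ = (‖y j - xstar‖ ^ ρ) ^ (1/ρ) := by
          rw [← Real.rpow_mul (norm_nonneg _), mul_one_div, div_self hρne,
            Real.rpow_one]
      _ ≤ ((2:ℝ) ^ (-(j:ℝ)) * R0 ^ ρ) ^ (1/ρ) :=
          Real.rpow_le_rpow (Real.rpow_nonneg (norm_nonneg _) _) hj (by positivity)
  -- main induction
  have main : ∀ k, k ≤ m → ‖y k - xstar‖ ^ ρ ≤ (2:ℝ) ^ (-(k:ℝ)) * R0 ^ ρ := by
    intro k
    induction k with
    | zero =>
      intro _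
      simp only [Nat.cast_zero, neg_zero, Real.rpow_zero, one_mul]
      exact Real.rpow_le_rpow (norm_nonneg _) (hQR0 _ (hyQ 0)) hρ0.le
    | succ k ih =>
      intro hk
      have hprev := ih (le_trans (Nat.le_succ k) hk)
      have hnorm : ‖y k - xstar‖ ≤ rk k := hle_rk k hprev
      have hmem : k + 1 ∈ Finset.Icc 1 m :=
        Finset.mem_Icc.mpr ⟨Nat.succ_le_succ (Nat.zero_le _), hk⟩
      have hst := (hstage (k+1) hmem (by simpa using hnorm)).2
      have hkey := KEY (k+1) (Nat.succ_le_succ (Nat.zero_le k)) hk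
      have hfin : μf * ‖y (k+1) - xstar‖ ^ ρ ≤
          μf * ((2:ℝ) ^ (-((k+1:ℕ):ℝ)) * R0 ^ ρ) := by
        refine hst.trans ?_
        simpa using hkey
      have := (mul_le_mul_iff_right₀ hμf).mp hfin
      simpa using this
  refine ⟨main, ?_, ?_⟩
  · -- f (y m) - f xstar ≤ ε
    have hm1 : m - 1 ≤ m := Nat.sub_le m 1
    have hnorm : ‖y (m-1) - xstar‖ ≤ rk (m-1) := hle_rk _ (main (m-1) hm1)
    have hst := (hstage m (Finset.mem_Icc.mpr ⟨hm, le_rfl⟩) hnorm).1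
    have hkey := KEY m hm le_rfl
    refine (hst.trans hkey).trans ?_
    -- μf * (2^{-m} R0^ρ) ≤ ε
    have h2m : ((2:ℝ) ^ m) > 0 := by positivity
    have hle : μf * R0 ^ ρ ≤ (2:ℝ) ^ m * ε := by
      have := hm2.1
      rw [ge_iff_le, div_le_iff₀ hε] at this
      linarith
    have hcast : (2:ℝ) ^ (-(m:ℝ)) = ((2:ℝ) ^ m)⁻¹ := by
      rw [Real.rpow_neg (by norm_num), Real.rpow_natCast]
    rw [hcast]
    rw [mul_comm ((2:ℝ)^m)⁻¹ (R0 ^ ρ), ← mul_assoc, ← div_eq_mul_inv,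
      div_le_iff₀ h2m]
    linarith
  · -- the sum bound
    have hsum1 : (∑ k ∈ Finset.Icc 1 m, (N k : ℝ)) ≤
        ∑ k ∈ Finset.Icc 1 m, ((2:ℝ) ^ τ) ^ k *
          (4 * L ^ 2 * C / (μf ^ 2 * μd * R0 ^ (2 * (ρ - 1)))) := by
      apply Finset.sum_le_sum
      intro k hk
      have h := (hN k hk).2
      calc (N k : ℝ) ≤ (2:ℝ) ^ (τ * k) * (4 * L ^ 2 * C) /
            (μf ^ 2 * μd * R0 ^ (2 * (ρ - 1))) := h
        _ = ((2:ℝ) ^ τ) ^ k * (4 * L ^ 2 * C / (μf ^ 2 * μd * R0 ^ (2 * (ρ - 1)))) := by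
            rw [← Real.rpow_natCast ((2:ℝ) ^ τ) k,
              ← Real.rpow_mul (by norm_num : (0:ℝ) ≤ 2)]
            ring
    have h2τ : (2:ℝ) ≤ (2:ℝ) ^ τ := by
      calc (2:ℝ) = (2:ℝ) ^ (1:ℝ) := (Real.rpow_one 2).symm
        _ ≤ (2:ℝ) ^ τ := (Real.rpow_le_rpow_left_iff one_lt_two).mpr hτ1
    have hgeom := multistage_geom_aux ((2:ℝ) ^ τ) h2τ m
    have hBpos : (0:ℝ) ≤ 4 * L ^ 2 * C / (μf ^ 2 * μd * R0 ^ (2 * (ρ - 1))) := by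
      positivity
    have hsum2 : (∑ k ∈ Finset.Icc 1 m, ((2:ℝ) ^ τ) ^ k *
          (4 * L ^ 2 * C / (μf ^ 2 * μd * R0 ^ (2 * (ρ - 1))))) ≤
        2 * ((2:ℝ) ^ τ) ^ m * (4 * L ^ 2 * C / (μf ^ 2 * μd * R0 ^ (2 * (ρ - 1)))) := by
      rw [← Finset.sum_mul]
      exact mul_le_mul_of_nonneg_right hgeom hBpos
    -- bound (2^τ)^m
    have h2mD : ((2:ℝ) ^ m : ℝ) ≤ 2 * (μf * R0 ^ ρ / ε) := by
      have hsplit : (2:ℝ) ^ m = 2 * (2:ℝ) ^ (m - 1) := by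
        conv_lhs => rw [show m = (m-1) + 1 by omega]
        rw [pow_succ]
        ring
      rw [hsplit]
      have := hm2.2
      nlinarith [this]
    have hτm : ((2:ℝ) ^ τ) ^ m ≤ (2:ℝ) ^ τ * (μf * R0 ^ ρ / ε) ^ τ := by
      have e1 : ((2:ℝ) ^ τ) ^ m = ((2:ℝ) ^ m : ℝ) ^ τ := by
        rw [← Real.rpow_natCast ((2:ℝ) ^ τ) m, ← Real.rpow_mul (by norm_num : (0:ℝ) ≤ 2),
          mul_comm τ (m:ℝ), Real.rpow_mul (by norm_num : (0:ℝ) ≤ 2),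
          Real.rpow_natCast]
      rw [e1]
      calc ((2:ℝ) ^ m : ℝ) ^ τ ≤ (2 * (μf * R0 ^ ρ / ε)) ^ τ :=
            Real.rpow_le_rpow (by positivity) h2mD hτ0
        _ = 2 ^ τ * (μf * R0 ^ ρ / ε) ^ τ :=
            Real.mul_rpow (by norm_num) (by positivity)
    -- assemble the pieces
    have hρτ : ρ * τ = 2 * (ρ - 1) := by
      rw [hτ]; field_simp
    have hDτ : (μf * R0 ^ ρ / ε) ^ τ = μf ^ τ * R0 ^ (2 * (ρ - 1)) / ε ^ τ := by
      rw [Real.div_rpow (by positivity) hε.le, Real.mul_rpow hμf.le hR0ρ.le,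
        ← Real.rpow_mul hR0.le, hρτ]
    have hμfτ : μf ^ τ = μf ^ (2:ℕ) * (μf ^ (2/ρ))⁻¹ := by
      rw [← Real.rpow_natCast μf 2, ← Real.rpow_neg hμf.le, ← Real.rpow_add hμf]
      congr 1
      rw [hτ]
      push_cast
      field_simp
      ring
    have h4 : (4:ℝ) ^ (τ + 1) = (2:ℝ) ^ (2 * (τ + 1)) := by
      rw [Real.rpow_mul (by norm_num : (0:ℝ) ≤ 2) 2 (τ+1)]
      norm_num
    have h23 : (2:ℝ) ^ (τ + 3) = (2:ℝ) ^ τ * 8 := by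
      rw [Real.rpow_add (by norm_num : (0:ℝ) < 2)]
      congr 1
      rw [show (3:ℝ) = ((3:ℕ):ℝ) by norm_num, Real.rpow_natCast]
      norm_num
    have hμfP : (0:ℝ) < μf ^ (2/ρ) := Real.rpow_pos_of_pos hμf _
    have hετ : (0:ℝ) < ε ^ τ := Real.rpow_pos_of_pos hε _
    calc (∑ k ∈ Finset.Icc 1 m, (N k : ℝ))
        ≤ 2 * ((2:ℝ) ^ τ) ^ m * (4 * L ^ 2 * C / (μf ^ 2 * μd * R0 ^ (2 * (ρ - 1)))) :=
          le_trans hsum1 hsum2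
      _ ≤ 2 * ((2:ℝ) ^ τ * (μf * R0 ^ ρ / ε) ^ τ) *
            (4 * L ^ 2 * C / (μf ^ 2 * μd * R0 ^ (2 * (ρ - 1)))) := by
          apply mul_le_mul_of_nonneg_right _ hBpos
          exact mul_le_mul_of_nonneg_left hτm (by norm_num)
      _ = (2:ℝ) ^ (τ + 3) * (L ^ 2 * C / (μf ^ (2/ρ) * μd * ε ^ τ)) := by
          rw [hDτ, hμfτ, h23]
          field_simp
          ring
      _ ≤ (2:ℝ) ^ (2 * (τ + 1)) * (L ^ 2 * C / (μf ^ (2/ρ) * μd * ε ^ τ)) := by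
          apply mul_le_mul_of_nonneg_right _ (by positivity)
          exact (Real.rpow_le_rpow_left_iff one_lt_two).mpr (by linarith)
      _ = (4 : ℝ) ^ (τ + 1) * L ^ 2 * C / (μf ^ (2 / ρ) * μd) * ε ^ (-τ) := by
          rw [h4, Real.rpow_neg hε.le]
          field_simp
end
end

section
/- (Key estimate in the proof of the lower complexity bound, Theorem A.1.) Let ρ ≥ 2, L > 0, R > 0, ε ∈ (0,1), and let M be a positive integer. Set δ = min{ L R/(4√M), L^{ρ/(ρ−1)}/(8 M^{ρ/(2(ρ−1))}) } − ε and assume δ > 0. Set λ = min{ R/√M, (2^{2−ρ} L/(ρ M^{ρ/2}))^{1/(ρ−1)} }. Then −(L/2)λ + 2^{ρ−3} M^{ρ/2} λ^ρ + δ ≤ −ε. (This shows that the worst-case function f(x) = (L/2)max_{1≤i≤M}(ξ_i x_i + d_i) + 2^{ρ−3}‖x‖₂^ρ, with perturbations 0 < d_i < δ, takes a value below −ε at the point x̄ = −λΣ_i ξ_i e_i of the Euclidean ball of radius R, while remaining positive along the method's trajectory.) -/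
noncomputable section

open Real

lemma key_log (ρ : ℝ) (hρ : 2 ≤ ρ) :
    ρ * Real.log ρ ≤ ρ * Real.log 2 + (ρ - 1) * Real.log (ρ - 1) := by
  set F : ℝ → ℝ := fun x => x * Real.log 2 + (x - 1) * Real.log (x - 1) - x * Real.log x with hF
  have hmono : MonotoneOn F (Set.Ici 2) := by
    have hint : interior (Set.Ici (2:ℝ)) = Set.Ioi 2 := interior_Ici
    have hderiv : ∀ x ∈ Set.Ioi (2:ℝ),
        HasDerivAt F (Real.log 2 + Real.log (x - 1) - Real.log x) x := by
      intro x hx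
      have hx2 : (2:ℝ) < x := hx
      have hx1 : x - 1 ≠ 0 := by linarith
      have hx0 : x ≠ 0 := by linarith
      have h1 : HasDerivAt (fun x : ℝ => x * Real.log 2) (Real.log 2) x := by
        simpa using (hasDerivAt_id x).mul_const (Real.log 2)
      have h2 : HasDerivAt (fun x : ℝ => (x - 1) * Real.log (x - 1))
          (Real.log (x - 1) + 1) x := by
        have inner : HasDerivAt (fun x : ℝ => x - 1) 1 x := (hasDerivAt_id x).sub_const 1
        have := (Real.hasDerivAt_mul_log hx1).comp x inner
        simpa [Function.comp_def] using this
      have h3 : HasDerivAt (fun x : ℝ => x * Real.log x) (Real.log x + 1) x :=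
        Real.hasDerivAt_mul_log hx0
      have := (h1.add h2).sub h3
      exact this.congr_deriv (by ring)
    apply monotoneOn_of_deriv_nonneg (convex_Ici 2)
    · -- continuity
      have c1 : ContinuousOn (fun x : ℝ => x * Real.log 2) (Set.Ici 2) :=
        (continuous_id.mul continuous_const).continuousOn
      have c2 : ContinuousOn (fun x : ℝ => (x - 1) * Real.log (x - 1)) (Set.Ici 2) := by
        apply ContinuousOn.mul
        · exact (continuous_id.sub continuous_const).continuousOn
        · apply Real.continuousOn_log.comp ((continuous_id.sub continuous_const).continuousOn)
          intro x hx
          simp only [Set.mem_Ici] at hx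
          simp only [Set.mem_compl_iff, Set.mem_singleton_iff]
          intro h; simp only [Pi.sub_apply, id_eq] at h; linarith
      have c3 : ContinuousOn (fun x : ℝ => x * Real.log x) (Set.Ici 2) := by
        apply ContinuousOn.mul continuousOn_id
        apply Real.continuousOn_log.comp continuousOn_id
        intro x hx
        simp only [Set.mem_Ici] at hx
        simp only [Set.mem_compl_iff, Set.mem_singleton_iff]
        intro h; simp only [id_eq] at h; linarith
      exact (c1.add c2).sub c3
    · rw [hint]
      intro x hx
      exact ((hderiv x hx).differentiableAt).differentiableWithinAt
    · rw [hint]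
      intro x hx
      rw [(hderiv x hx).deriv]
      have hx2 : (2:ℝ) < x := hx
      have h1 : Real.log 2 + Real.log (x - 1) = Real.log (2 * (x - 1)) := by
        rw [Real.log_mul (by norm_num) (by linarith)]
      have h2 : Real.log x ≤ Real.log (2 * (x - 1)) :=
        Real.log_le_log (by linarith) (by linarith)
      linarith
  have h2mem : (2:ℝ) ∈ Set.Ici (2:ℝ) := Set.self_mem_Ici
  have hρmem : ρ ∈ Set.Ici (2:ℝ) := hρ
  have := hmono h2mem hρmem hρ
  simp only [hF] at this
  norm_num at this
  linarith


/-- key arithmetic estimate in the proof of the lower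
complexity bound, Theorem A.1. -/
theorem lower_bound_key_estimate
    (ρ L R ε : ℝ) (M : ℕ)
    (hρ : 2 ≤ ρ) (hL : 0 < L) (hR : 0 < R)
    (hε0 : 0 < ε) (hε1 : ε < 1) (hM : 0 < M)
    (δ lam : ℝ)
    (hδ : δ = min (L * R / (4 * Real.sqrt M))
        (L ^ (ρ / (ρ - 1)) / (8 * (M : ℝ) ^ (ρ / (2 * (ρ - 1))))) - ε)
    (hδpos : 0 < δ)
    (hlam : lam = min (R / Real.sqrt M)
        (((2 : ℝ) ^ (2 - ρ) * L / (ρ * (M : ℝ) ^ (ρ / 2))) ^ (1 / (ρ - 1)))) :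
    -(L / 2) * lam + (2 : ℝ) ^ (ρ - 3) * (M : ℝ) ^ (ρ / 2) * lam ^ ρ + δ ≤ -ε := by
  set m : ℝ := (M : ℝ) with hm
  have hρ0 : (0:ℝ) < ρ := by linarith
  have hu : (0:ℝ) < ρ - 1 := by linarith
  have hm0 : (0:ℝ) < m := by rw [hm]; exact_mod_cast hM
  have hsm : 0 < Real.sqrt m := Real.sqrt_pos.mpr hm0
  have hmp : 0 < m ^ (ρ / 2) := Real.rpow_pos_of_pos hm0 _
  set a : ℝ := R / Real.sqrt m with hadef
  set c : ℝ := (2 : ℝ) ^ (2 - ρ) * L / (ρ * m ^ (ρ / 2)) with hcdef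
  have hc : 0 < c := by positivity
  set b : ℝ := c ^ (1 / (ρ - 1)) with hbdef
  have hb : 0 < b := Real.rpow_pos_of_pos hc _
  have ha : 0 < a := div_pos hR hsm
  have hlam' : lam = min a b := hlam
  have hlam0 : 0 < lam := by rw [hlam']; exact lt_min ha hb
  have hbc : b ^ (ρ - 1) = c := by
    rw [hbdef, ← Real.rpow_mul hc.le, one_div_mul_cancel hu.ne', Real.rpow_one]
  have hlamc : lam ^ (ρ - 1) ≤ c := by
    calc lam ^ (ρ - 1) ≤ b ^ (ρ - 1) :=
          Real.rpow_le_rpow hlam0.le (hlam' ▸ min_le_right a b) hu.le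
      _ = c := hbc
  have hlamrho : lam ^ ρ = lam ^ (ρ - 1) * lam := by
    rw [← Real.rpow_add_one hlam0.ne', sub_add_cancel]
  have h23 : (2:ℝ) ^ (ρ - 3) * (2:ℝ) ^ (2 - ρ) = 1 / 2 := by
    rw [← Real.rpow_add (by norm_num : (0:ℝ) < 2),
      show ρ - 3 + (2 - ρ) = -1 by ring, Real.rpow_neg_one]
    norm_num
  have bound1 : (2:ℝ) ^ (ρ - 3) * m ^ (ρ / 2) * lam ^ ρ ≤ L * lam / (2 * ρ) := by
    calc (2:ℝ) ^ (ρ - 3) * m ^ (ρ / 2) * lam ^ ρ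
        = (2:ℝ) ^ (ρ - 3) * m ^ (ρ / 2) * lam ^ (ρ - 1) * lam := by rw [hlamrho]; ring
      _ ≤ (2:ℝ) ^ (ρ - 3) * m ^ (ρ / 2) * c * lam := by gcongr ?_ * lam; gcongr
      _ = ((2:ℝ) ^ (ρ - 3) * (2:ℝ) ^ (2 - ρ)) * (L * lam / ρ) := by
          rw [hcdef]; field_simp
      _ = L * lam / (2 * ρ) := by rw [h23]; ring
  set T1 : ℝ := L * R / (4 * Real.sqrt m) with hT1
  set T2 : ℝ := L ^ (ρ / (ρ - 1)) / (8 * m ^ (ρ / (2 * (ρ - 1)))) with hT2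
  have key2 : min T1 T2 ≤ L * lam * (ρ - 1) / (2 * ρ) := by
    rcases le_total a b with hab | hba
    · have hlama : lam = a := by rw [hlam', min_eq_left hab]
      have e1 : T1 = L * a / 4 := by rw [hT1, hadef]; field_simp
      have e2 : L * a / 4 ≤ L * a * (ρ - 1) / (2 * ρ) := by
        rw [div_le_div_iff₀ (by norm_num) (by positivity)]
        nlinarith [mul_pos hL ha]
      calc min T1 T2 ≤ T1 := min_le_left _ _
        _ = L * a / 4 := e1
        _ ≤ L * a * (ρ - 1) / (2 * ρ) := e2
        _ = L * lam * (ρ - 1) / (2 * ρ) := by rw [hlama]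
    · have hlamb : lam = b := by rw [hlam', min_eq_right hba]
      have hT2pos : 0 < T2 := by rw [hT2]; positivity
      have hRHSpos : 0 < L * b * (ρ - 1) / (2 * ρ) := by positivity
      have hlog : Real.log T2 ≤ Real.log (L * b * (ρ - 1) / (2 * ρ)) := by
        have hlogc : Real.log c
            = (2 - ρ) * Real.log 2 + Real.log L - Real.log ρ - ρ / 2 * Real.log m := by
          rw [hcdef, Real.log_div (by positivity) (by positivity),
            Real.log_mul (by positivity) hL.ne', Real.log_mul hρ0.ne' hmp.ne',
            Real.log_rpow (by norm_num), Real.log_rpow hm0]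
          ring
        have hlogb : Real.log b = (1 / (ρ - 1)) * Real.log c := by
          rw [hbdef, Real.log_rpow hc]
        have hlogT2 : Real.log T2 = ρ / (ρ - 1) * Real.log L
            - (3 * Real.log 2 + ρ / (2 * (ρ - 1)) * Real.log m) := by
          rw [hT2, Real.log_div (by positivity) (by positivity),
            Real.log_mul (by norm_num) (Real.rpow_pos_of_pos hm0 _).ne',
            Real.log_rpow hL, Real.log_rpow hm0,
            show (8:ℝ) = 2 ^ (3:ℕ) by norm_num, Real.log_pow]
          push_cast; ring
        have hlogRHS : Real.log (L * b * (ρ - 1) / (2 * ρ))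
            = Real.log L + Real.log b + Real.log (ρ - 1) - (Real.log 2 + Real.log ρ) := by
          rw [Real.log_div (by positivity) (by positivity),
            Real.log_mul (by positivity) hu.ne',
            Real.log_mul hL.ne' hb.ne',
            Real.log_mul (by norm_num) hρ0.ne']
        rw [hlogT2, hlogRHS, hlogb, hlogc]
        rw [← sub_nonneg]
        have hkey := key_log ρ hρ
        have heq : Real.log L + 1 / (ρ - 1) *
              ((2 - ρ) * Real.log 2 + Real.log L - Real.log ρ - ρ / 2 * Real.log m)
              + Real.log (ρ - 1) - (Real.log 2 + Real.log ρ)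
            - (ρ / (ρ - 1) * Real.log L
              - (3 * Real.log 2 + ρ / (2 * (ρ - 1)) * Real.log m))
            = (ρ * Real.log 2 + (ρ - 1) * Real.log (ρ - 1) - ρ * Real.log ρ) / (ρ - 1) := by
          field_simp
          ring
        rw [heq]
        apply div_nonneg _ hu.le
        linarith
      have := (Real.log_le_log_iff hT2pos hRHSpos).mp hlog
      calc min T1 T2 ≤ T2 := min_le_right _ _
        _ ≤ L * b * (ρ - 1) / (2 * ρ) := this
        _ = L * lam * (ρ - 1) / (2 * ρ) := by rw [hlamb]
  have hid : L * lam / (2 * ρ) + L * lam * (ρ - 1) / (2 * ρ) = L * lam / 2 := by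
    field_simp; ring
  have hδ' : δ + ε = min T1 T2 := by rw [hδ]; ring
  linarith [bound1, key2]
end
end

section
/- (Lemma 2.1, symmetrization preserves strong convexity.) Let E be a finite-dimensional real normed vector space and Q ⊆ E a bounded closed convex set containing the origin. Let f be continuous and strongly convex on Q with parameter μ ≥ 0, i.e. f(βx + (1−β)y) ≤ βf(x) + (1−β)f(y) − (μ/2)β(1−β)‖x − y‖² for all x, y ∈ Q and β ∈ [0,1]. Define on Q⁰ = conv(Q ∪ (−Q)) the symmetrization f⁰(x) = min{ f(u) + f(v) : x = u − v, u ∈ αQ, v ∈ (1−α)Q, α ∈ [0,1] }. Then f⁰ is strongly convex on Q⁰ with parameter μ/2: f⁰(βx₁ + (1−β)x₂) ≤ βf⁰(x₁) + (1−β)f⁰(x₂) − (μ/4)β(1−β)‖x₁ − x₂‖² for all x₁, x₂ ∈ Q⁰ and β ∈ [0,1]. -/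
noncomputable section

open Real Pointwise

private lemma comb_mem_smul {E : Type*} [NormedAddCommGroup E] [NormedSpace ℝ E]
    {Q : Set E} (hQconv : Convex ℝ Q) (h0Q : (0 : E) ∈ Q)
    {α₁ α₂ β : ℝ} (hα₁ : 0 ≤ α₁) (hα₂ : 0 ≤ α₂) (hβ0 : 0 ≤ β) (hβ1 : β ≤ 1)
    {u₁ u₂ : E} (h1 : u₁ ∈ α₁ • Q) (h2 : u₂ ∈ α₂ • Q) :
    β • u₁ + (1 - β) • u₂ ∈ (β * α₁ + (1 - β) * α₂) • Q := by
  obtain ⟨q₁, hq₁, rfl⟩ := h1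
  obtain ⟨q₂, hq₂, rfl⟩ := h2
  set α := β * α₁ + (1 - β) * α₂ with hα
  have hn1 : 0 ≤ β * α₁ := mul_nonneg hβ0 hα₁
  have hn2 : 0 ≤ (1 - β) * α₂ := mul_nonneg (by linarith) hα₂
  have hα0 : 0 ≤ α := add_nonneg hn1 hn2
  rcases eq_or_lt_of_le hα0 with h | h
  · have h1' : β * α₁ = 0 := by linarith
    have h2' : (1 - β) * α₂ = 0 := by linarith
    refine ⟨0, h0Q, ?_⟩
    show α • (0 : E) = β • α₁ • q₁ + (1 - β) • α₂ • q₂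
    rw [smul_zero, smul_smul, smul_smul, h1', h2', zero_smul, zero_smul, add_zero]
  · refine ⟨(β * α₁ / α) • q₁ + ((1 - β) * α₂ / α) • q₂,
      hQconv hq₁ hq₂ (div_nonneg hn1 hα0) (div_nonneg hn2 hα0)
        (by field_simp; exact hα.symm), ?_⟩
    show α • ((β * α₁ / α) • q₁ + ((1 - β) * α₂ / α) • q₂)
        = β • α₁ • q₁ + (1 - β) • α₂ • q₂
    rw [smul_add, smul_smul, smul_smul, smul_smul, smul_smul]
    have hne : α ≠ 0 := ne_of_gt h
    congr 1 <;> congr 1 <;> field_simp <;> ring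

private lemma smul_sub_Q {E : Type*} [NormedAddCommGroup E] [NormedSpace ℝ E]
    {Q : Set E} (hQconv : Convex ℝ Q) (h0Q : (0 : E) ∈ Q)
    {α : ℝ} (hα0 : 0 ≤ α) (hα1 : α ≤ 1) : α • Q ⊆ Q := by
  rintro x ⟨q, hq, rfl⟩
  have := hQconv hq h0Q hα0 (by linarith : (0:ℝ) ≤ 1 - α) (by ring)
  simpa using this

/-- Lemma 2.1, symmetrization preserves strong convexity.
`f⁰` is the symmetrization of a strongly convex function `f` on `Q`; it is
strongly convex with parameter `μ/2` on `Q⁰ = conv(Q ∪ (−Q))`. -/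
theorem symmetrization_strongly_convex
    {E : Type*} [NormedAddCommGroup E] [NormedSpace ℝ E] [FiniteDimensional ℝ E]
    (Q : Set E) (hQb : Bornology.IsBounded Q) (hQc : IsClosed Q)
    (hQconv : Convex ℝ Q) (h0Q : (0 : E) ∈ Q)
    (f : E → ℝ) (hfc : ContinuousOn f Q)
    (μ : ℝ) (hμ : 0 ≤ μ)
    (hsc : ∀ x ∈ Q, ∀ y ∈ Q, ∀ β ∈ Set.Icc (0 : ℝ) 1,
      f (β • x + (1 - β) • y) ≤
        β * f x + (1 - β) * f y - (μ / 2) * β * (1 - β) * ‖x - y‖ ^ 2)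
    (f0 : E → ℝ)
    (hf0 : ∀ x ∈ convexHull ℝ (Q ∪ (-Q)),
      IsLeast {t : ℝ | ∃ u v : E, ∃ α ∈ Set.Icc (0 : ℝ) 1,
        u ∈ α • Q ∧ v ∈ (1 - α) • Q ∧ x = u - v ∧ t = f u + f v} (f0 x)) :
    ∀ x₁ ∈ convexHull ℝ (Q ∪ (-Q)), ∀ x₂ ∈ convexHull ℝ (Q ∪ (-Q)),
      ∀ β ∈ Set.Icc (0 : ℝ) 1,
        f0 (β • x₁ + (1 - β) • x₂) ≤
          β * f0 x₁ + (1 - β) * f0 x₂ -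
            (μ / 4) * β * (1 - β) * ‖x₁ - x₂‖ ^ 2 := by
  intro x₁ hx₁ x₂ hx₂ β hβ
  obtain ⟨hβ0, hβ1⟩ := hβ
  obtain ⟨⟨u₁, v₁, α₁, ⟨hα₁0, hα₁1⟩, hu₁, hv₁, hx₁e, ht₁⟩, _⟩ := hf0 x₁ hx₁
  obtain ⟨⟨u₂, v₂, α₂, ⟨hα₂0, hα₂1⟩, hu₂, hv₂, hx₂e, ht₂⟩, _⟩ := hf0 x₂ hx₂
  have hxmem : β • x₁ + (1 - β) • x₂ ∈ convexHull ℝ (Q ∪ (-Q)) :=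
    (convex_convexHull ℝ _) hx₁ hx₂ hβ0 (by linarith) (by ring)
  obtain ⟨_, hlb⟩ := hf0 _ hxmem
  -- the combined decomposition
  set α := β * α₁ + (1 - β) * α₂ with hα
  have hα0 : 0 ≤ α := add_nonneg (mul_nonneg hβ0 hα₁0) (mul_nonneg (by linarith) hα₂0)
  have hα1 : α ≤ 1 := by nlinarith
  have hu : β • u₁ + (1 - β) • u₂ ∈ α • Q :=
    comb_mem_smul hQconv h0Q hα₁0 hα₂0 hβ0 hβ1 hu₁ hu₂
  have hv : β • v₁ + (1 - β) • v₂ ∈ (1 - α) • Q := by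
    have := comb_mem_smul hQconv h0Q (by linarith : 0 ≤ 1 - α₁)
      (by linarith : 0 ≤ 1 - α₂) hβ0 hβ1 hv₁ hv₂
    have heq : β * (1 - α₁) + (1 - β) * (1 - α₂) = 1 - α := by rw [hα]; ring
    rwa [heq] at this
  have hkey : f0 (β • x₁ + (1 - β) • x₂) ≤
      f (β • u₁ + (1 - β) • u₂) + f (β • v₁ + (1 - β) • v₂) := by
    apply hlb
    exact ⟨_, _, α, ⟨hα0, hα1⟩, hu, hv, by rw [hx₁e, hx₂e]; module, rfl⟩
  -- strong convexity on each part
  have hu₁Q : u₁ ∈ Q := smul_sub_Q hQconv h0Q hα₁0 hα₁1 hu₁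
  have hu₂Q : u₂ ∈ Q := smul_sub_Q hQconv h0Q hα₂0 hα₂1 hu₂
  have hv₁Q : v₁ ∈ Q := smul_sub_Q hQconv h0Q (by linarith) (by linarith) hv₁
  have hv₂Q : v₂ ∈ Q := smul_sub_Q hQconv h0Q (by linarith) (by linarith) hv₂
  have hscu := hsc u₁ hu₁Q u₂ hu₂Q β ⟨hβ0, hβ1⟩
  have hscv := hsc v₁ hv₁Q v₂ hv₂Q β ⟨hβ0, hβ1⟩
  -- norm estimate
  have hnorm : ‖x₁ - x₂‖ ≤ ‖u₁ - u₂‖ + ‖v₁ - v₂‖ := by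
    have : x₁ - x₂ = (u₁ - u₂) - (v₁ - v₂) := by rw [hx₁e, hx₂e]; abel
    rw [this]
    exact norm_sub_le _ _
  have hA : (0:ℝ) ≤ ‖u₁ - u₂‖ := norm_nonneg _
  have hB : (0:ℝ) ≤ ‖v₁ - v₂‖ := norm_nonneg _
  have hC : (0:ℝ) ≤ ‖x₁ - x₂‖ := norm_nonneg _
  have hsq : ‖x₁ - x₂‖ ^ 2 ≤ 2 * (‖u₁ - u₂‖ ^ 2 + ‖v₁ - v₂‖ ^ 2) := by
    nlinarith [sq_nonneg (‖u₁ - u₂‖ - ‖v₁ - v₂‖)]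
  rw [ht₁, ht₂]
  have hβμ : 0 ≤ μ * β * (1 - β) := by
    apply mul_nonneg (mul_nonneg hμ hβ0); linarith
  nlinarith [hkey, hscu, hscv]
end
end

section
/- (Lemma B.1, primal-dual gap bound.) Let Q ⊆ E and S ⊆ F be nonempty compact convex subsets of finite-dimensional real normed spaces, and let Ψ : Q × S → ℝ be continuous, convex in x for each fixed w ∈ S, concave in w for each fixed x ∈ Q, and such that for each w ∈ S the function Ψ(·,w) is uniformly convex on Q with parameters ρ ≥ 2 and μ(Ψ) > 0 with respect to the norm of E. Define f(x) = max_{w∈S} Ψ(x,w) and η(w) = min_{x∈Q} Ψ(x,w). Let x₀,…,x_N ∈ Q; for each i let w_i ∈ Argmax_{w∈S} Ψ(x_i,w) and let g_i ∈ E* be a subgradient of Ψ(·,w_i) at x_i. Set x̄_N = (1/(N+1))Σ_{i=0}^{N} x_i and w̄_N = (1/(N+1))Σ_{i=0}^{N} w_i. Then f(x̄_N) − η(w̄_N) ≤ max_{x∈Q} { (1/(N+1)) Σ_{i=0}^{N} ⟨g_i, x_i − x⟩ − (μ(Ψ)/2)‖x − x̄_N‖^ρ }. -/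
noncomputable section

open Real

/-- Lemma B.1, primal-dual gap bound. `Ψ` is a
convex-concave saddle function on `Q × S`, uniformly convex in `x` with
parameters `ρ ≥ 2`, `μΨ > 0`; `f` is the primal and `η` the dual objective,
`w i` are maximizers defining subgradients `g i` of `f` at `xs i`, and
`lstar` is the max appearing on the right-hand side. -/
theorem primal_dual_gap_bound
    {E : Type*} [NormedAddCommGroup E] [NormedSpace ℝ E] [FiniteDimensional ℝ E]
    {F : Type*} [NormedAddCommGroup F] [NormedSpace ℝ F] [FiniteDimensional ℝ F]
    (Q : Set E) (S : Set F) (hQne : Q.Nonempty) (hSne : S.Nonempty)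
    (hQcomp : IsCompact Q) (hScomp : IsCompact S)
    (hQconv : Convex ℝ Q) (hSconv : Convex ℝ S)
    (Ψ : E → F → ℝ)
    (hΨcont : ContinuousOn (fun p : E × F => Ψ p.1 p.2) (Q ×ˢ S))
    (hconvx : ∀ w ∈ S, ConvexOn ℝ Q (fun x => Ψ x w))
    (hconcw : ∀ x ∈ Q, ConcaveOn ℝ S (fun w => Ψ x w))
    (ρ μΨ : ℝ) (hρ : 2 ≤ ρ) (hμΨ : 0 < μΨ)
    (huc : ∀ w ∈ S, ∀ x ∈ Q, ∀ y ∈ Q, ∀ α ∈ Set.Icc (0 : ℝ) 1,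
      Ψ (α • x + (1 - α) • y) w ≤
        α * Ψ x w + (1 - α) * Ψ y w -
          (μΨ / 2) * α * (1 - α) * (α ^ (ρ - 1) + (1 - α) ^ (ρ - 1)) * ‖x - y‖ ^ ρ)
    (f : E → ℝ) (hf : ∀ x ∈ Q, IsGreatest ((fun w => Ψ x w) '' S) (f x))
    (η : F → ℝ) (hη : ∀ w ∈ S, IsLeast ((fun x => Ψ x w) '' Q) (η w))
    (N : ℕ) (xs : ℕ → E) (hxs : ∀ i, xs i ∈ Q)
    (w : ℕ → F) (hwS : ∀ i, w i ∈ S)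
    (hwmax : ∀ i, Ψ (xs i) (w i) = f (xs i))
    (g : ℕ → E →L[ℝ] ℝ)
    (hg : ∀ i, ∀ y ∈ Q, Ψ (xs i) (w i) + (g i) (y - xs i) ≤ Ψ y (w i))
    (xbarN : E) (hxbarN : xbarN = (1 / ((N : ℝ) + 1)) • ∑ i ∈ Finset.range (N + 1), xs i)
    (wbarN : F) (hwbarN : wbarN = (1 / ((N : ℝ) + 1)) • ∑ i ∈ Finset.range (N + 1), w i)
    (lstar : ℝ)
    (hlstar : IsGreatest
      ((fun x => (1 / ((N : ℝ) + 1)) *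
          (∑ i ∈ Finset.range (N + 1), (g i) (xs i - x)) -
          (μΨ / 2) * ‖x - xbarN‖ ^ ρ) '' Q) lstar) :
    f xbarN - η wbarN ≤ lstar := by
  have hc0 : (0:ℝ) < 1 / ((N:ℝ) + 1) := by positivity
  set c : ℝ := 1 / ((N:ℝ) + 1) with hcdef
  have hsum : ∑ _i ∈ Finset.range (N + 1), c = 1 := by
    rw [Finset.sum_const, Finset.card_range, nsmul_eq_mul, hcdef]
    have : ((N:ℝ) + 1) ≠ 0 := by positivity
    push_cast
    field_simp
  have hxbar' : xbarN = ∑ i ∈ Finset.range (N + 1), c • xs i := by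
    rw [hxbarN, Finset.smul_sum]
  have hwbar' : wbarN = ∑ i ∈ Finset.range (N + 1), c • w i := by
    rw [hwbarN, Finset.smul_sum]
  have hxbarQ : xbarN ∈ Q := by
    rw [hxbar']
    exact hQconv.sum_mem (fun i _ => hc0.le) hsum (fun i _ => hxs i)
  have hwbarS : wbarN ∈ S := by
    rw [hwbar']
    exact hSconv.sum_mem (fun i _ => hc0.le) hsum (fun i _ => hwS i)
  -- strengthened subgradient inequality
  have hstrong : ∀ i, ∀ y ∈ Q,
      Ψ (xs i) (w i) + (g i) (y - xs i) + (μΨ / 2) * ‖y - xs i‖ ^ ρ ≤ Ψ y (w i) := by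
    intro i y hy
    have key : ∀ α ∈ Set.Ioo (0:ℝ) 1,
        Ψ (xs i) (w i) + (g i) (y - xs i)
          + (μΨ / 2) * ((1 - α) * (α ^ (ρ - 1) + (1 - α) ^ (ρ - 1))) * ‖y - xs i‖ ^ ρ
          ≤ Ψ y (w i) := by
      rintro α ⟨hα0, hα1⟩
      have hz : α • y + (1 - α) • xs i ∈ Q :=
        hQconv hy (hxs i) hα0.le (by linarith) (by ring)
      have h1 := hg i _ hz
      have hzx : (α • y + (1 - α) • xs i) - xs i = α • (y - xs i) := by module
      rw [hzx, map_smul] at h1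
      have h2 := huc (w i) (hwS i) y hy (xs i) (hxs i) α ⟨hα0.le, hα1.le⟩
      have hmul : α * (Ψ (xs i) (w i) + (g i) (y - xs i)
          + (μΨ / 2) * ((1 - α) * (α ^ (ρ - 1) + (1 - α) ^ (ρ - 1))) * ‖y - xs i‖ ^ ρ)
          ≤ α * Ψ y (w i) := by
        simp only [smul_eq_mul] at h1
        nlinarith [h1, h2]
      exact le_of_mul_le_mul_left hmul hα0
    haveI hne : (nhdsWithin (0:ℝ) (Set.Ioo 0 1)).NeBot := by
      apply mem_closure_iff_nhdsWithin_neBot.mp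
      rw [closure_Ioo (by norm_num : (0:ℝ) ≠ 1)]
      exact ⟨le_refl 0, zero_le_one⟩
    have t1 : Filter.Tendsto (fun α : ℝ => α ^ (ρ - 1))
        (nhdsWithin 0 (Set.Ioo 0 1)) (nhds 0) := by
      have hc : ContinuousAt (fun x : ℝ => x ^ (ρ - 1)) 0 :=
        Real.continuousAt_rpow_const 0 (ρ - 1) (Or.inr (by linarith))
      have := hc.tendsto
      rw [Real.zero_rpow (by intro h; linarith [h] : ρ - 1 ≠ 0)] at this
      exact this.mono_left nhdsWithin_le_nhds
    have t2 : Filter.Tendsto (fun α : ℝ => (1 - α) ^ (ρ - 1))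
        (nhdsWithin 0 (Set.Ioo 0 1)) (nhds 1) := by
      have hc : ContinuousAt (fun x : ℝ => (1 - x) ^ (ρ - 1)) 0 := by
        apply ContinuousAt.rpow_const (continuousAt_const.sub continuousAt_id)
        left; norm_num
      have := hc.tendsto
      simp only [sub_zero, Real.one_rpow] at this
      exact this.mono_left nhdsWithin_le_nhds
    have t3 : Filter.Tendsto (fun α : ℝ => (1 - α))
        (nhdsWithin 0 (Set.Ioo 0 1)) (nhds 1) := by
      have : Filter.Tendsto (fun α : ℝ => (1 - α)) (nhds 0) (nhds 1) := by
        have := (continuousAt_const.sub continuousAt_id : ContinuousAt (fun x : ℝ => 1 - x) 0).tendsto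
        convert this using 2 <;> simp
      exact this.mono_left nhdsWithin_le_nhds
    have htend : Filter.Tendsto (fun α : ℝ => Ψ (xs i) (w i) + (g i) (y - xs i)
        + (μΨ / 2) * ((1 - α) * (α ^ (ρ - 1) + (1 - α) ^ (ρ - 1))) * ‖y - xs i‖ ^ ρ)
        (nhdsWithin 0 (Set.Ioo 0 1))
        (nhds (Ψ (xs i) (w i) + (g i) (y - xs i)
          + (μΨ / 2) * (1 * (0 + 1)) * ‖y - xs i‖ ^ ρ)) := by
      exact Filter.Tendsto.const_add _
        ((((t3.mul (t1.add t2)).const_mul (μΨ / 2)).mul_const (‖y - xs i‖ ^ ρ)))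
    have hfin := le_of_tendsto htend (by
      filter_upwards [self_mem_nhdsWithin] with α hα using key α hα)
    calc Ψ (xs i) (w i) + (g i) (y - xs i) + (μΨ / 2) * ‖y - xs i‖ ^ ρ
        = Ψ (xs i) (w i) + (g i) (y - xs i)
          + (μΨ / 2) * (1 * (0 + 1)) * ‖y - xs i‖ ^ ρ := by ring
      _ ≤ Ψ y (w i) := hfin
  -- upper bound on f xbarN
  have hA : f xbarN ≤ ∑ i ∈ Finset.range (N + 1), c * f (xs i) := by
    obtain ⟨ws, hwsS, hws⟩ := (hf xbarN hxbarQ).1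
    have j := (hconvx ws hwsS).map_sum_le (t := Finset.range (N + 1))
      (fun i _ => hc0.le) hsum (fun i _ => hxs i) (p := xs)
    rw [← hws, hxbar']
    simp only [smul_eq_mul] at j
    refine j.trans (Finset.sum_le_sum fun i _ => ?_)
    have hle : Ψ (xs i) ws ≤ f (xs i) := (hf (xs i) (hxs i)).2 ⟨ws, hwsS, rfl⟩
    exact mul_le_mul_of_nonneg_left hle hc0.le
  -- lower bound on η wbarN
  obtain ⟨xst, hxstQ, hxst⟩ := (hη wbarN hwbarS).1
  have hconc := (hconcw xst hxstQ).le_map_sum (t := Finset.range (N + 1))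
    (fun i _ => hc0.le) hsum (fun i _ => hwS i) (p := w)
  rw [← hwbar'] at hconc
  simp only [smul_eq_mul] at hconc
  have hstep : ∀ i, f (xs i) + (g i) (xst - xs i) + (μΨ / 2) * ‖xst - xs i‖ ^ ρ
      ≤ Ψ xst (w i) := by
    intro i
    have := hstrong i xst hxstQ
    rwa [hwmax i] at this
  -- Jensen for rpow
  have hjen : ‖xst - xbarN‖ ^ ρ ≤ ∑ i ∈ Finset.range (N + 1), c * ‖xst - xs i‖ ^ ρ := by
    have hrep : xst - xbarN = ∑ i ∈ Finset.range (N + 1), c • (xst - xs i) := by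
      have hx1 : xst = ∑ _i ∈ Finset.range (N + 1), c • xst := by
        rw [← Finset.sum_smul, hsum, one_smul]
      conv_lhs => rw [hx1, hxbar']
      rw [← Finset.sum_sub_distrib]
      exact Finset.sum_congr rfl fun i _ => (smul_sub c xst (xs i)).symm
    have h1 : ‖xst - xbarN‖ ≤ ∑ i ∈ Finset.range (N + 1), c * ‖xst - xs i‖ := by
      rw [hrep]
      refine (norm_sum_le _ _).trans ?_
      refine le_of_eq (Finset.sum_congr rfl fun i _ => ?_)
      rw [norm_smul, Real.norm_eq_abs, abs_of_nonneg hc0.le]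
    have h2 : ‖xst - xbarN‖ ^ ρ ≤ (∑ i ∈ Finset.range (N + 1), c * ‖xst - xs i‖) ^ ρ :=
      Real.rpow_le_rpow (norm_nonneg _) h1 (by linarith)
    have h3 := (convexOn_rpow (by linarith : 1 ≤ ρ)).map_sum_le (t := Finset.range (N + 1))
      (fun i _ => hc0.le) hsum (fun i _ => Set.mem_Ici.mpr (norm_nonneg (xst - xs i)))
      (p := fun i => ‖xst - xs i‖)
    simp only [smul_eq_mul] at h3
    exact h2.trans h3
  have hsumstep : ∑ i ∈ Finset.range (N + 1),
      c * (f (xs i) + (g i) (xst - xs i) + (μΨ / 2) * ‖xst - xs i‖ ^ ρ)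
      ≤ ∑ i ∈ Finset.range (N + 1), c * Ψ xst (w i) :=
    Finset.sum_le_sum fun i _ => mul_le_mul_of_nonneg_left (hstep i) hc0.le
  have hgsym : ∀ i, (g i) (xst - xs i) = -((g i) (xs i - xst)) := by
    intro i; rw [map_sub, map_sub]; ring
  have hsplit : ∑ i ∈ Finset.range (N + 1),
      c * (f (xs i) + (g i) (xst - xs i) + (μΨ / 2) * ‖xst - xs i‖ ^ ρ)
      = (∑ i ∈ Finset.range (N + 1), c * f (xs i))
        - c * (∑ i ∈ Finset.range (N + 1), (g i) (xs i - xst))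
        + (μΨ / 2) * (∑ i ∈ Finset.range (N + 1), c * ‖xst - xs i‖ ^ ρ) := by
    rw [Finset.mul_sum, Finset.mul_sum, ← Finset.sum_sub_distrib, ← Finset.sum_add_distrib]
    refine Finset.sum_congr rfl fun i _ => ?_
    rw [hgsym i]; ring
  have hls : c * (∑ i ∈ Finset.range (N + 1), (g i) (xs i - xst))
      - (μΨ / 2) * ‖xst - xbarN‖ ^ ρ ≤ lstar := hlstar.2 ⟨xst, hxstQ, rfl⟩
  have hjen' : (μΨ / 2) * ‖xst - xbarN‖ ^ ρ
      ≤ (μΨ / 2) * (∑ i ∈ Finset.range (N + 1), c * ‖xst - xs i‖ ^ ρ) :=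
    mul_le_mul_of_nonneg_left hjen (by positivity)
  linarith [hA, hsumstep, hconc, hxst, hjen', hls, hsplit]
end
end

section
/- (Lemma B.2.) Let E be a finite-dimensional real normed vector space, Q ⊆ E a nonempty closed convex set, l : E → ℝ an affine function, ρ ≥ 2 and μ > 0. For x ∈ E define λ*_μ(x) = sup_{y∈Q} { l(y) − (μ/2)‖y − x‖^ρ }. Then for any points x̄, ȳ ∈ E with ‖x̄ − ȳ‖ ≤ r̄ and any b > 0: λ*_μ(x̄) ≤ λ*_{(1+b)^{1−ρ}μ}(ȳ) + (μ/(2 b^{ρ−1})) r̄^ρ. -/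
noncomputable section

open Real Set

private lemma jensen2 {p : ℝ} (hp : 1 ≤ p) {a r b : ℝ} (ha : 0 ≤ a) (hr : 0 ≤ r) (hb : 0 < b) :
    (a + r) ^ p ≤ (1 + b) ^ (p - 1) * a ^ p + ((1 + b) / b) ^ (p - 1) * r ^ p := by
  have h1b : (0:ℝ) < 1 + b := by linarith
  have hz1 : (0:ℝ) ≤ (1 + b) * a := by positivity
  have hz2 : (0:ℝ) ≤ (1 + b) / b * r := by positivity
  have hw1 : (0:ℝ) ≤ 1 / (1 + b) := by positivity
  have hw2 : (0:ℝ) ≤ b / (1 + b) := by positivity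
  have hsum : 1 / (1 + b) + b / (1 + b) = 1 := by field_simp
  have hc := (convexOn_rpow hp).2 (mem_Ici.mpr hz1) (mem_Ici.mpr hz2) hw1 hw2 hsum
  simp only [smul_eq_mul] at hc
  have heq : 1 / (1 + b) * ((1 + b) * a) + b / (1 + b) * ((1 + b) / b * r) = a + r := by
    field_simp
  rw [heq] at hc
  refine hc.trans_eq ?_
  have e1 : ((1 + b) : ℝ) ^ (p - 1) = (1 + b) ^ p * (1 + b)⁻¹ := by
    rw [Real.rpow_sub h1b, Real.rpow_one, div_eq_mul_inv]
  have e2 : (((1 + b) / b) : ℝ) ^ (p - 1) = ((1 + b) / b) ^ p * (b / (1 + b)) := by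
    rw [Real.rpow_sub (by positivity), Real.rpow_one, div_eq_mul_inv _ ((1+b)/b), inv_div]
  rw [e1, e2, Real.mul_rpow h1b.le ha, Real.mul_rpow (by positivity) hr]
  ring

private lemma quad_bound_s11 {C c ρ t : ℝ} (hC : 0 ≤ C) (hc : 0 < c) (hρ : 2 ≤ ρ) (ht : 0 ≤ t) :
    C * t - c * t ^ ρ ≤ C + C ^ 2 / (4 * c) := by
  have hpos : 0 ≤ C ^ 2 / (4 * c) := by positivity
  rcases le_or_gt t 1 with h | h
  · have h1 : 0 ≤ c * t ^ ρ := by positivity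
    nlinarith
  · have h2 : t ^ (2:ℝ) ≤ t ^ ρ := Real.rpow_le_rpow_of_exponent_le h.le hρ
    have h3 : t ^ (2:ℝ) = t * t := by
      rw [show (2:ℝ) = ((2:ℕ):ℝ) by norm_num, Real.rpow_natCast]; ring
    rw [h3] at h2
    have hdiv : 4 * c * (C ^ 2 / (4 * c)) = C ^ 2 := by field_simp
    nlinarith [sq_nonneg (2 * c * t - C), mul_le_mul_of_nonneg_left h2 hc.le]

/-- Lemma B.2. For `λ*_μ(x) = sup_{y∈Q} { l(y) − (μ/2)‖y−x‖^ρ }`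
with `l` affine, `ρ ≥ 2`, `μ > 0`, and any `x̄, ȳ` with `‖x̄ − ȳ‖ ≤ r̄`, `b > 0`:
`λ*_μ(x̄) ≤ λ*_{(1+b)^{1−ρ}μ}(ȳ) + (μ/(2b^{ρ−1})) r̄^ρ`. -/
theorem lambda_star_shift
    {E : Type*} [NormedAddCommGroup E] [NormedSpace ℝ E] [FiniteDimensional ℝ E]
    (Q : Set E) (hQne : Q.Nonempty) (hQc : IsClosed Q) (hQconv : Convex ℝ Q)
    (l : E →ᵃ[ℝ] ℝ) (ρ μ : ℝ) (hρ : 2 ≤ ρ) (hμ : 0 < μ)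
    (xbar ybar : E) (rbar : ℝ) (hr : ‖xbar - ybar‖ ≤ rbar)
    (b : ℝ) (hb : 0 < b) :
    sSup ((fun y => l y - (μ / 2) * ‖y - xbar‖ ^ ρ) '' Q) ≤
      sSup ((fun y => l y - ((1 + b) ^ (1 - ρ) * μ / 2) * ‖y - ybar‖ ^ ρ) '' Q) +
        μ / (2 * b ^ (ρ - 1)) * rbar ^ ρ := by
  have h1b : (0:ℝ) < 1 + b := by linarith
  set c2 : ℝ := (1 + b) ^ (1 - ρ) * μ / 2 with hc2def
  have hc2 : 0 < c2 := by
    have := Real.rpow_pos_of_pos h1b (1 - ρ)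
    positivity
  set L : E →L[ℝ] ℝ := LinearMap.toContinuousLinearMap l.linear with hLdef
  have hCnn : 0 ≤ ‖L‖ := norm_nonneg _
  have hlin : ∀ v : E, l.linear v ≤ ‖L‖ * ‖v‖ := by
    intro v
    have h1 : ‖L v‖ ≤ ‖L‖ * ‖v‖ := L.le_opNorm v
    have h3 : l.linear v ≤ ‖L v‖ := by
      rw [Real.norm_eq_abs]; exact le_abs_self _
    exact h3.trans h1
  have haff : ∀ y : E, (l y : ℝ) = l ybar + l.linear (y - ybar) := by
    intro y
    have := l.linearMap_vsub y ybar
    simp only [vsub_eq_sub] at this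
    linarith [this]
  have hBdd : BddAbove ((fun y => l y - c2 * ‖y - ybar‖ ^ ρ) '' Q) := by
    refine ⟨l ybar + (‖L‖ + ‖L‖ ^ 2 / (4 * c2)), ?_⟩
    rintro _ ⟨y, hy, rfl⟩
    have hq := quad_bound_s11 hCnn hc2 hρ (norm_nonneg (y - ybar))
    have h5 := hlin (y - ybar)
    show l y - c2 * ‖y - ybar‖ ^ ρ ≤ l ybar + (‖L‖ + ‖L‖ ^ 2 / (4 * c2))
    rw [haff y]
    linarith
  have key : ∀ y : E, c2 * ‖y - ybar‖ ^ ρ ≤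
      (μ / 2) * ‖y - xbar‖ ^ ρ + μ / (2 * b ^ (ρ - 1)) * rbar ^ ρ := by
    intro y
    have ha : (0:ℝ) ≤ ‖y - xbar‖ := norm_nonneg _
    have hrnn : 0 ≤ rbar := (norm_nonneg _).trans hr
    have hd : ‖y - ybar‖ ≤ ‖y - xbar‖ + rbar := by
      have he : y - ybar = (y - xbar) + (xbar - ybar) := by abel
      have h6 : ‖y - ybar‖ ≤ ‖y - xbar‖ + ‖xbar - ybar‖ := by
        rw [he]; exact norm_add_le _ _
      linarith
    have h1 : ‖y - ybar‖ ^ ρ ≤ (‖y - xbar‖ + rbar) ^ ρ :=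
      Real.rpow_le_rpow (norm_nonneg _) hd (by linarith)
    have h2 := jensen2 (by linarith : (1:ℝ) ≤ ρ) ha hrnn hb
    have hbp : (0:ℝ) < b ^ (ρ - 1) := Real.rpow_pos_of_pos hb _
    have e1 : c2 * (1 + b) ^ (ρ - 1) = μ / 2 := by
      rw [hc2def, div_mul_eq_mul_div, mul_assoc, mul_comm μ, ← mul_assoc,
        ← Real.rpow_add h1b]
      norm_num
    have hprod : ((1:ℝ) + b) ^ (1 - ρ) * (1 + b) ^ (ρ - 1) = 1 := by
      rw [← Real.rpow_add h1b]; norm_num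
    have e2 : c2 * ((1 + b) / b) ^ (ρ - 1) = μ / (2 * b ^ (ρ - 1)) := by
      rw [hc2def, Real.div_rpow h1b.le hb.le]
      rw [show (1 + b) ^ (1 - ρ) * μ / 2 * ((1 + b) ^ (ρ - 1) / b ^ (ρ - 1)) =
        (1 + b) ^ (1 - ρ) * (1 + b) ^ (ρ - 1) * (μ / (2 * b ^ (ρ - 1))) from by
          field_simp, hprod, one_mul]
    have h3 : c2 * ‖y - ybar‖ ^ ρ ≤
        c2 * ((1 + b) ^ (ρ - 1) * ‖y - xbar‖ ^ ρ + ((1 + b) / b) ^ (ρ - 1) * rbar ^ ρ) :=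
      mul_le_mul_of_nonneg_left (h1.trans h2) hc2.le
    calc c2 * ‖y - ybar‖ ^ ρ
        ≤ c2 * (1 + b) ^ (ρ - 1) * ‖y - xbar‖ ^ ρ
            + c2 * ((1 + b) / b) ^ (ρ - 1) * rbar ^ ρ := by linarith [h3]
      _ = μ / 2 * ‖y - xbar‖ ^ ρ + μ / (2 * b ^ (ρ - 1)) * rbar ^ ρ := by rw [e1, e2]
  refine csSup_le (hQne.image _) ?_
  rintro _ ⟨y, hy, rfl⟩
  have h4 : l y - c2 * ‖y - ybar‖ ^ ρ ≤ sSup ((fun y => l y - c2 * ‖y - ybar‖ ^ ρ) '' Q) :=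
    le_csSup hBdd ⟨y, hy, rfl⟩
  have h5 := key y
  show l y - μ / 2 * ‖y - xbar‖ ^ ρ ≤ _
  linarith
end
end
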